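/- arXiv:2007.08023 — 8 statements merged into one kernel-verified Lean document; each statement's English description precedes it below -/
import Mathlib

section
/- If H is a spanning subgraph of a graph G, then the characteristic polynomial of H is at least that of G for all x ≥ ρ(G): P_G(x) ≤ P_H(x) for all x ≥ ρ(G). -/
open scoped Classical
open Polynomial

noncomputable section

namespace SpanAux

open Matrix

variable {R : Type*} [CommRing R]

lemma eval_charpoly {n : Type*} [Fintype n] [DecidableEq n] (M : Matrix n n R) (x : R) :
    (M.charpoly).eval x = (x • (1 : Matrix n n R) - M).det := by
  have h : (M.charmatrix.map (evalRingHom x)) = x • (1 : Matrix n n R) - M := by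
    ext i j
    by_cases h : i = j
    · subst h; simp [charmatrix_apply_eq, Matrix.one_apply, Matrix.smul_apply]
    · simp [charmatrix_apply_ne _ _ _ h, Matrix.one_apply, h, Matrix.smul_apply]
  rw [Matrix.charpoly, ← h]
  exact RingHom.map_det (evalRingHom x) M.charmatrix

lemma derivative_finset_prod {ι : Type*} [DecidableEq ι] (s : Finset ι) (f : ι → R[X]) :
    derivative (∏ i ∈ s, f i) = ∑ i ∈ s, (∏ j ∈ s.erase i, f j) * derivative (f i) := by
  rw [Finset.prod_eq_multiset_prod, Polynomial.derivative_prod, Finset.sum_eq_multiset_sum]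
  exact congrArg Multiset.sum (Multiset.map_congr rfl fun i hi => by
    rw [← Finset.erase_val, ← Finset.prod_eq_multiset_prod])

lemma derivative_det {n : Type*} [Fintype n] [DecidableEq n] (M : Matrix n n R[X]) :
    derivative M.det = ∑ i, (M.updateCol i (fun k => derivative (M k i))).det := by
  rw [Matrix.det_apply, map_sum]
  have hterm : ∀ σ : Equiv.Perm n,
      derivative (Equiv.Perm.sign σ • ∏ i, M (σ i) i)
        = ∑ i, Equiv.Perm.sign σ •
            ((∏ j ∈ Finset.univ.erase i, M (σ j) j) * derivative (M (σ i) i)) := by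
    intro σ
    rw [Units.smul_def, map_zsmul, derivative_finset_prod, Finset.smul_sum]
    simp only [Units.smul_def]
  rw [Finset.sum_congr rfl fun σ _ => hterm σ, Finset.sum_comm]
  refine Finset.sum_congr rfl fun i _ => ?_
  rw [Matrix.det_apply]
  refine Finset.sum_congr rfl fun σ _ => ?_
  congr 1
  have : ∀ j, (M.updateCol i fun k => derivative (M k i)) (σ j) j
      = if j = i then derivative (M (σ i) i) else M (σ j) j := by
    intro j
    rw [Matrix.updateCol_apply]
    by_cases h : j = i <;> simp [h]
  rw [Finset.prod_congr rfl fun j _ => this j]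
  rw [← Finset.mul_prod_erase _ _ (Finset.mem_univ i), if_pos rfl,
    Finset.prod_congr rfl fun j hj => if_neg (Finset.mem_erase.mp hj).1, mul_comm]

end SpanAux

namespace Stage2
open SpanAux Matrix Polynomial

variable {R : Type*} [CommRing R]

lemma charmatrix_submatrix {m : ℕ} (M : Matrix (Fin (m+1)) (Fin (m+1)) R) (i : Fin (m+1)) :
    (charmatrix M).submatrix i.succAbove i.succAbove
      = charmatrix (M.submatrix i.succAbove i.succAbove) := by
  ext a b
  by_cases h : a = b
  · subst h; simp [charmatrix_apply_eq]
  · have h' : i.succAbove a ≠ i.succAbove b := fun hc => h (Fin.succAbove_right_injective hc)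
    simp [charmatrix_apply_ne _ _ _ h', charmatrix_apply_ne _ _ _ h]

lemma derivative_charpoly {m : ℕ} (M : Matrix (Fin (m+1)) (Fin (m+1)) R) :
    derivative M.charpoly
      = ∑ i : Fin (m+1), (M.submatrix (Fin.succAbove i) (Fin.succAbove i)).charpoly := by
  rw [Matrix.charpoly, derivative_det]
  refine Finset.sum_congr rfl fun i _ => ?_
  have hcol : (fun k => derivative (charmatrix M k i)) = Pi.single i (1 : R[X]) := by
    funext k
    by_cases h : k = i
    · subst h; simp [charmatrix_apply_eq]
    · simp [charmatrix_apply_ne _ _ _ h, Pi.single_eq_of_ne h]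
  rw [hcol]
  rw [Matrix.det_succ_column _ i]
  rw [Finset.sum_eq_single i]
  · have h00 : ((charmatrix M).updateCol i (Pi.single i 1)) i i = 1 := by
      simp [Matrix.updateCol_apply]
    have hsub : ((charmatrix M).updateCol i (Pi.single i 1)).submatrix i.succAbove i.succAbove
        = charmatrix (M.submatrix i.succAbove i.succAbove) := by
      rw [← charmatrix_submatrix]
      ext a b
      simp [Matrix.submatrix_apply, Matrix.updateCol_apply, Fin.succAbove_ne i b]
    rw [h00, hsub, ← Nat.two_mul, pow_mul]
    simp [Matrix.charpoly]
  · intro b _ hb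
    have : ((charmatrix M).updateCol i (Pi.single i 1)) b i = 0 := by
      simp [Matrix.updateCol_apply, Pi.single_eq_of_ne hb]
    rw [this]; ring
  · intro h; exact absurd (Finset.mem_univ i) h

end Stage2

namespace Stage3
open SpanAux Matrix Polynomial

variable {n : Type*} [Fintype n] [DecidableEq n]

lemma psd_det_nonneg {M : Matrix n n ℝ} (h : M.PosSemidef) : 0 ≤ M.det := by
  exact h.det_nonneg

lemma quadform_expand (M : Matrix n n ℝ) (v : n → ℝ) :
    v ⬝ᵥ (M *ᵥ v) = ∑ j, ∑ k, v j * (M j k * v k) := by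
  simp [dotProduct, Matrix.mulVec, Finset.mul_sum]

lemma psd_sub_quad {A : Matrix n n ℝ} {x : ℝ} (h : (x • (1 : Matrix n n ℝ) - A).PosSemidef)
    (v : n → ℝ) : v ⬝ᵥ (A *ᵥ v) ≤ x * (v ⬝ᵥ v) := by
  have h2 := h.dotProduct_mulVec_nonneg v
  rw [star_trivial] at h2
  rw [Matrix.sub_mulVec, Matrix.smul_mulVec, Matrix.one_mulVec, dotProduct_sub,
    dotProduct_smul] at h2
  simpa [smul_eq_mul] using sub_nonneg.mp h2

lemma psd_mono {A B : Matrix n n ℝ} (hBh : B.IsHermitian)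
    (hB0 : ∀ i j, 0 ≤ B i j) (hBA : ∀ i j, B i j ≤ A i j) {x : ℝ}
    (hA : (x • (1 : Matrix n n ℝ) - A).PosSemidef) :
    (x • (1 : Matrix n n ℝ) - B).PosSemidef := by
  refine Matrix.PosSemidef.of_dotProduct_mulVec_nonneg ?_ ?_
  · have h1 : ((x • (1 : Matrix n n ℝ))).IsHermitian := by
      rw [Matrix.IsHermitian, Matrix.conjTranspose_smul, star_trivial,
        Matrix.conjTranspose_one]
    exact h1.sub hBh
  · intro v
    rw [star_trivial]
    rw [Matrix.sub_mulVec, Matrix.smul_mulVec, Matrix.one_mulVec, dotProduct_sub,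
      dotProduct_smul]
    rw [smul_eq_mul]
    rw [sub_nonneg]
    set w : n → ℝ := fun i => |v i| with hw
    have hww : w ⬝ᵥ w = v ⬝ᵥ v := by
      simp [dotProduct, hw, ← sq, sq_abs]
    have h1 : v ⬝ᵥ (B *ᵥ v) ≤ w ⬝ᵥ (B *ᵥ w) := by
      rw [quadform_expand, quadform_expand]
      refine Finset.sum_le_sum fun j _ => Finset.sum_le_sum fun k _ => ?_
      calc v j * (B j k * v k) ≤ |v j * (B j k * v k)| := le_abs_self _
        _ = w j * (B j k * w k) := by
            rw [abs_mul, abs_mul, abs_of_nonneg (hB0 j k)]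
    have h2 : w ⬝ᵥ (B *ᵥ w) ≤ w ⬝ᵥ (A *ᵥ w) := by
      rw [quadform_expand, quadform_expand]
      refine Finset.sum_le_sum fun j _ => Finset.sum_le_sum fun k _ => ?_
      have hwj : 0 ≤ w j := abs_nonneg _
      have hwk : 0 ≤ w k := abs_nonneg _
      exact mul_le_mul_of_nonneg_left
        (mul_le_mul_of_nonneg_right (hBA j k) hwk) hwj
    have h3 : w ⬝ᵥ (A *ᵥ w) ≤ x * (w ⬝ᵥ w) := psd_sub_quad hA w
    calc v ⬝ᵥ (B *ᵥ v) ≤ w ⬝ᵥ (A *ᵥ w) := h1.trans h2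
      _ ≤ x * (w ⬝ᵥ w) := h3
      _ = x * (v ⬝ᵥ v) := by rw [hww]

end Stage3

namespace Stage4
open SpanAux Matrix Polynomial

variable {n : Type*} [Fintype n] [DecidableEq n]

lemma eig_isRoot {A : Matrix n n ℝ} (hA : A.IsHermitian) (i : n) :
    A.charpoly.IsRoot (hA.eigenvalues i) := by
  have h := hA.eigenvalues_mem_spectrum_real i
  rw [spectrum.mem_iff] at h
  rw [Polynomial.IsRoot, SpanAux.eval_charpoly]
  by_contra hd
  exact h ((Matrix.isUnit_iff_isUnit_det _).mpr (isUnit_iff_ne_zero.mpr (by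
    rwa [Algebra.algebraMap_eq_smul_one])))

lemma psd_of_eig_le {A : Matrix n n ℝ} (hA : A.IsHermitian) {x : ℝ}
    (h : ∀ i, hA.eigenvalues i ≤ x) : (x • (1 : Matrix n n ℝ) - A).PosSemidef := by
  have hspec := hA.spectral_theorem
  set U : Matrix n n ℝ := (hA.eigenvectorUnitary : Matrix n n ℝ) with hU
  have hUU : U * star U = 1 := Unitary.coe_mul_star_self hA.eigenvectorUnitary
  have key : x • (1 : Matrix n n ℝ) - A
      = U * Matrix.diagonal (fun i => x - hA.eigenvalues i) * star U := by
    have h1 : x • (1 : Matrix n n ℝ) = U * Matrix.diagonal (fun _ => x) * star U := by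
      have : (Matrix.diagonal (fun _ => x) : Matrix n n ℝ) = x • 1 := by
        rw [Matrix.smul_one_eq_diagonal]
      rw [this]
      rw [mul_smul_comm, Matrix.smul_mul, mul_one, hUU]
    conv_lhs => rw [hspec, h1]
    have h2 : (Matrix.diagonal (fun _ => x) : Matrix n n ℝ)
        - Matrix.diagonal (RCLike.ofReal ∘ hA.eigenvalues)
        = Matrix.diagonal (fun i => x - hA.eigenvalues i) := by
      rw [Matrix.diagonal_sub]
      rfl
    simp only [Unitary.conjStarAlgAut_apply, Unitary.coe_star, ← hU]
    rw [← h2, Matrix.mul_sub, Matrix.sub_mul]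
  rw [key, Matrix.star_eq_conjTranspose]
  exact (Matrix.PosSemidef.diagonal (fun i => sub_nonneg.mpr (h i))).mul_mul_conjTranspose_same U

lemma eig_le_of_psd {A : Matrix n n ℝ} (hA : A.IsHermitian) {x : ℝ}
    (h : (x • (1 : Matrix n n ℝ) - A).PosSemidef) (i : n) : hA.eigenvalues i ≤ x := by
  set v : n → ℝ := (WithLp.equiv 2 (n → ℝ)) (hA.eigenvectorBasis i) with hv
  have hAv : A *ᵥ v = hA.eigenvalues i • v := hA.mulVec_eigenvectorBasis i
  have hvne : v ≠ 0 := by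
    intro h0
    have : hA.eigenvectorBasis i = 0 := by
      apply (WithLp.equiv 2 (n → ℝ)).injective
      simpa [hv] using h0
    exact hA.eigenvectorBasis.toBasis.ne_zero i (by simpa using this)
  have hvv : 0 < v ⬝ᵥ v := by
    obtain ⟨j, hj⟩ := Function.ne_iff.mp hvne
    refine Finset.sum_pos' (fun k _ => mul_self_nonneg _) ⟨j, Finset.mem_univ j, ?_⟩
    exact mul_self_pos.mpr (by simpa using hj)
  have hq := Stage3.psd_sub_quad h v
  rw [hAv, dotProduct_smul, smul_eq_mul] at hq
  exact le_of_mul_le_mul_right hq hvv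

end Stage4

namespace Stage5
open SpanAux Stage2 Stage3 Stage4 Matrix Polynomial

lemma key : ∀ m : ℕ, ∀ A B : Matrix (Fin m) (Fin m) ℝ, A.IsHermitian → B.IsHermitian →
    (∀ i j, 0 ≤ B i j) → (∀ i j, B i j ≤ A i j) → ∀ x : ℝ,
    (x • (1 : Matrix (Fin m) (Fin m) ℝ) - A).PosSemidef →
    A.charpoly.eval x ≤ B.charpoly.eval x := by
  intro m
  induction m with
  | zero =>
    intro A B _ _ _ _ x _
    rw [Subsingleton.elim A B]
  | succ m ih =>
    intro A B hAh hBh hB0 hBA x hx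
    obtain ⟨i0, hi0⟩ := Finite.exists_max hAh.eigenvalues
    set x0 : ℝ := hAh.eigenvalues i0 with hx0def
    have hx0A : (x0 • (1 : Matrix (Fin (m+1)) (Fin (m+1)) ℝ) - A).PosSemidef :=
      psd_of_eig_le hAh hi0
    have hx0x : x0 ≤ x := eig_le_of_psd hAh hx i0
    have hevalA0 : A.charpoly.eval x0 = 0 := eig_isRoot hAh i0
    have hevalB0 : 0 ≤ B.charpoly.eval x0 := by
      rw [SpanAux.eval_charpoly]
      exact psd_det_nonneg (psd_mono hBh hB0 hBA hx0A)
    -- the difference polynomial is monotone on [x0, ∞)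
    set g : Polynomial ℝ := B.charpoly - A.charpoly with hg
    have hmono : MonotoneOn (fun y => g.eval y) (Set.Ici x0) := by
      apply monotoneOn_of_deriv_nonneg (convex_Ici x0)
      · exact (Polynomial.continuous g).continuousOn
      · exact (Polynomial.differentiable g).differentiableOn
      · intro y hy
        rw [interior_Ici] at hy
        rw [Polynomial.deriv, hg, derivative_sub, eval_sub, sub_nonneg,
          derivative_charpoly, derivative_charpoly, eval_finset_sum, eval_finset_sum]
        refine Finset.sum_le_sum fun i _ => ?_
        have hyx0 : x0 ≤ y := le_of_lt hy
        have hyA : (y • (1 : Matrix (Fin (m+1)) (Fin (m+1)) ℝ) - A).PosSemidef := by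
          have hsplit : y • (1 : Matrix (Fin (m+1)) (Fin (m+1)) ℝ) - A
              = Matrix.diagonal (fun _ => y - x0)
                + (x0 • (1 : Matrix (Fin (m+1)) (Fin (m+1)) ℝ) - A) := by
            rw [← Matrix.smul_one_eq_diagonal, sub_smul]
            abel
          rw [hsplit]
          exact (Matrix.PosSemidef.diagonal fun _ => sub_nonneg.mpr hyx0).add hx0A
        have hsub : ((y • (1 : Matrix (Fin (m+1)) (Fin (m+1)) ℝ) - A).submatrix
            (Fin.succAbove i) (Fin.succAbove i))
            = y • (1 : Matrix (Fin m) (Fin m) ℝ) - A.submatrix (Fin.succAbove i) (Fin.succAbove i) := by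
          ext a b
          simp only [Matrix.submatrix_apply, Matrix.sub_apply, Matrix.smul_apply]
          congr 1
          rw [Matrix.one_apply, Matrix.one_apply]
          simp [Fin.succAbove_right_injective.eq_iff]
        exact ih (A.submatrix (Fin.succAbove i) (Fin.succAbove i))
          (B.submatrix (Fin.succAbove i) (Fin.succAbove i))
          (hAh.submatrix _) (hBh.submatrix _)
          (fun a b => hB0 _ _) (fun a b => hBA _ _) y
          (hsub ▸ hyA.submatrix (Fin.succAbove i))
    have h1 : g.eval x0 ≤ g.eval x :=
      hmono (Set.self_mem_Ici) (Set.mem_Ici.mpr hx0x) hx0x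
    rw [hg] at h1
    simp only [eval_sub] at h1
    rw [hevalA0, sub_zero] at h1
    linarith

end Stage5

/-- Adjacency matrix of a simple graph, over `ℝ`. -/
def adjM {V : Type*} [Fintype V] (G : SimpleGraph V) : Matrix V V ℝ :=
  fun a b => if G.Adj a b then 1 else 0

/-- Characteristic polynomial `det (x•I - A(G))` of the adjacency matrix. -/
def charP {V : Type*} [Fintype V] [DecidableEq V] (G : SimpleGraph V) : Polynomial ℝ :=
  (adjM G).charpoly

/-- Spectral radius: the largest real eigenvalue of the (symmetric, nonnegative)
adjacency matrix, i.e. the largest real root of the characteristic polynomial. -/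
def specRad {V : Type*} [Fintype V] [DecidableEq V] (G : SimpleGraph V) : ℝ :=
  sSup {x : ℝ | (charP G).IsRoot x}

/-- If `H` is a spanning subgraph of `G`, then `P_G(x) ≤ P_H(x)` for all `x ≥ ρ(G)`. -/
theorem charP_le_of_spanning_subgraph {V : Type*} [Fintype V] [DecidableEq V]
    (G H : SimpleGraph V) (hle : H ≤ G) :
    ∀ x : ℝ, specRad G ≤ x → (charP G).eval x ≤ (charP H).eval x := by
  intro x hx
  have adjM_herm : ∀ K : SimpleGraph V, (adjM K).IsHermitian := by
    intro K
    ext i j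
    simp only [Matrix.conjTranspose_apply, adjM, star_trivial]
    rw [SimpleGraph.adj_comm]
  set e := Fintype.equivFin V with he
  set A : Matrix (Fin (Fintype.card V)) (Fin (Fintype.card V)) ℝ :=
    (adjM G).submatrix e.symm e.symm with hA
  set B : Matrix (Fin (Fintype.card V)) (Fin (Fintype.card V)) ℝ :=
    (adjM H).submatrix e.symm e.symm with hB
  have hchG : charP G = A.charpoly := by
    rw [hA, _root_.charP, ← Matrix.charpoly_reindex e (adjM G), Matrix.reindex_apply]
  have hchH : charP H = B.charpoly := by
    rw [hB, _root_.charP, ← Matrix.charpoly_reindex e (adjM H), Matrix.reindex_apply]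
  have hAherm : A.IsHermitian := (adjM_herm G).submatrix _
  have hBherm : B.IsHermitian := (adjM_herm H).submatrix _
  have hB0 : ∀ i j, 0 ≤ B i j := by
    intro i j
    rw [hB]
    simp only [Matrix.submatrix_apply, adjM]
    positivity
  have hBA : ∀ i j, B i j ≤ A i j := by
    intro i j
    simp only [hA, hB, Matrix.submatrix_apply, adjM]
    by_cases h : H.Adj (e.symm i) (e.symm j)
    · rw [if_pos h, if_pos (hle h)]
    · rw [if_neg h]
      positivity
  have hpsd : (x • (1 : Matrix (Fin (Fintype.card V)) (Fin (Fintype.card V)) ℝ) - A).PosSemidef := by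
    apply Stage4.psd_of_eig_le hAherm
    intro i
    have hroot : (charP G).IsRoot (hAherm.eigenvalues i) := by
      rw [hchG]; exact Stage4.eig_isRoot hAherm i
    have hbdd : BddAbove {y : ℝ | (charP G).IsRoot y} :=
      (Polynomial.finite_setOf_isRoot ((Matrix.charpoly_monic (adjM G)).ne_zero)).bddAbove
    calc hAherm.eigenvalues i ≤ specRad G := le_csSup hbdd hroot
      _ ≤ x := hx
  rw [hchG, hchH]
  exact Stage5.key _ A B hAherm hBherm hB0 hBA x hpsd
end
end

section
/- Schwenk's coalescence formula: if F is the coalescence of graphs G and H obtained by identifying a vertex g of G with a vertex h of H, then P_F(x) = P_G(x)·P_{H−h}(x) + P_{G−g}(x)·P_H(x) − x·P_{G−g}(x)·P_{H−h}(x). -/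
open scoped Classical
open Polynomial

noncomputable section

/-- Vertex-deleted subgraph `G - v`. -/
def del {V : Type*} (G : SimpleGraph V) (v : V) : SimpleGraph {u : V // u ≠ v} :=
  SimpleGraph.induce {u : V | u ≠ v} G

/-- Coalescence of `G` and `H` obtained by identifying `g ∈ V(G)` with `h ∈ V(H)`
(the vertex `Sum.inl g` plays the role of the identified vertex). -/
def coal {V W : Type*} (G : SimpleGraph V) (H : SimpleGraph W) (g : V) (h : W) :
    SimpleGraph (V ⊕ {w : W // w ≠ h}) where
  Adj x y :=
    match x, y with
    | Sum.inl a, Sum.inl b => G.Adj a b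
    | Sum.inl a, Sum.inr b => a = g ∧ H.Adj h b.1
    | Sum.inr a, Sum.inl b => b = g ∧ H.Adj h a.1
    | Sum.inr a, Sum.inr b => H.Adj a.1 b.1
  symm := by
    refine ⟨?_⟩
    rintro (a | a) (b | b) hxy
    exacts [G.adj_symm hxy, hxy, hxy, H.adj_symm hxy]
  loopless := by
    refine ⟨?_⟩
    rintro (a | a) hxy
    exacts [G.irrefl hxy, H.irrefl hxy]

private instance uniq_not_ne {V : Type*} (g : V) : Unique {u : V // ¬ u ≠ g} :=
  ⟨⟨⟨g, by simp⟩⟩, fun x => Subtype.ext (not_not.mp x.2)⟩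

/-- Deleting row `g` of `N` and replacing it by the indicator of the column `g`
has determinant the `(g,g)` minor. -/
private lemma det_updateRow_indicator {K : Type*} [Field K] {V : Type*} [Fintype V]
    [DecidableEq V] (N : Matrix V V K) (g : V) :
    (N.updateRow g fun b => if b = g then 1 else 0).det
      = Matrix.det (Matrix.of fun a b : {u : V // u ≠ g} => N a.1 b.1) := by
  rw [← Matrix.det_submatrix_equiv_self (Equiv.sumCompl (· ≠ g))]
  have hb : (N.updateRow g fun b => if b = g then 1 else 0).submatrix
        (Equiv.sumCompl (· ≠ g)) (Equiv.sumCompl (· ≠ g))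
      = Matrix.fromBlocks (Matrix.of fun a b : {u : V // u ≠ g} => N a.1 b.1)
          (Matrix.of fun (a : {u : V // u ≠ g}) (_ : {u : V // ¬ u ≠ g}) => N a.1 g)
          0 1 := by
    ext i j
    rcases i with a | x
    · rcases j with b | y
      · simp [Matrix.updateRow_apply, a.2]
      · have hy : y.1 = g := not_not.mp y.2
        simp [Matrix.updateRow_apply, a.2, hy]
    · have hx : x.1 = g := not_not.mp x.2
      rcases j with b | y
      · simp [Matrix.updateRow_apply, hx, b.2]
      · have hy : y.1 = g := not_not.mp y.2
        simp [Matrix.updateRow_apply, hx, hy, Subsingleton.elim x y, Matrix.one_apply]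
  rw [hb, Matrix.det_fromBlocks_zero₂₁, Matrix.det_one, mul_one]

/-- restriction of the mapped charmatrix is the mapped charmatrix of the deleted graph -/
private lemma restrict_charmatrix {K : Type*} [Field K] (φ : Polynomial ℝ →+* K)
    {V : Type*} [Fintype V] [DecidableEq V] (G : SimpleGraph V) (v : V) :
    (Matrix.of fun a b : {u : V // u ≠ v} =>
        ((Matrix.charmatrix (adjM G)).map φ) a.1 b.1)
      = (Matrix.charmatrix (adjM (del G v))).map φ := by
  ext a b
  by_cases hab : a = b
  · subst hab
    simp [Matrix.map_apply, Matrix.charmatrix_apply_eq, adjM, del]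
  · have h1 : a.1 ≠ b.1 := fun hh => hab (Subtype.ext hh)
    simp [Matrix.map_apply, Matrix.charmatrix_apply_ne _ _ _ h1,
      Matrix.charmatrix_apply_ne _ _ _ hab, adjM, del]

/-- Schwenk's coalescence formula:
`P_F = P_G * P_{H-h} + P_{G-g} * P_H - x * P_{G-g} * P_{H-h}`. -/
theorem schwenk_coalescence {V W : Type*} [Fintype V] [DecidableEq V]
    [Fintype W] [DecidableEq W] (G : SimpleGraph V) (H : SimpleGraph W)
    (g : V) (h : W) :
    charP (coal G H g h) =
      charP G * charP (del H h) + charP (del G g) * charP H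
        - X * charP (del G g) * charP (del H h) := by
  classical
  set K := FractionRing (Polynomial ℝ) with hKdef
  let φ : Polynomial ℝ →+* K := algebraMap (Polynomial ℝ) K
  have hinj : Function.Injective φ := IsFractionRing.injective (Polynomial ℝ) K
  apply hinj
  set MG : Matrix V V K := (Matrix.charmatrix (adjM G)).map φ with hMGdef
  set MH : Matrix W W K := (Matrix.charmatrix (adjM H)).map φ with hMHdef
  set DG := (Matrix.charmatrix (adjM (del G g))).map φ with hDGdef
  set DH := (Matrix.charmatrix (adjM (del H h))).map φ with hDHdef
  set MF := (Matrix.charmatrix (adjM (coal G H g h))).map φ with hMFdef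
  have hMG : φ (charP G) = MG.det := RingHom.map_det φ _
  have hMH : φ (charP H) = MH.det := RingHom.map_det φ _
  have hDG : φ (charP (del G g)) = DG.det := RingHom.map_det φ _
  have hDH : φ (charP (del H h)) = DH.det := RingHom.map_det φ _
  have hMF : φ (charP (coal G H g h)) = MF.det := RingHom.map_det φ _
  have hDH0 : IsUnit DH.det := by
    rw [isUnit_iff_ne_zero, ← hDH]
    intro hh
    exact (Matrix.charpoly_monic (adjM (del H h))).ne_zero (hinj (by rw [map_zero]; exact hh))
  letI iDH : Invertible DH := DH.invertibleOfIsUnitDet hDH0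
  set uK : {w : W // w ≠ h} → K := fun p => -φ (Polynomial.C (adjM H h p.1)) with huK
  set vK : {w : W // w ≠ h} → K := fun p => -φ (Polynomial.C (adjM H p.1 h)) with hvK
  set s : K := ∑ q, (∑ p, uK p * (⅟DH) p q) * vK q with hs
  -- decomposition of H
  have hWdec : MH.det = DH.det * (φ Polynomial.X - s) := by
    rw [← Matrix.det_submatrix_equiv_self (Equiv.sumCompl (· ≠ h)) MH]
    have hb : MH.submatrix (Equiv.sumCompl (· ≠ h)) (Equiv.sumCompl (· ≠ h))
        = Matrix.fromBlocks DH
            (Matrix.of fun (p : {w : W // w ≠ h}) (_ : {w : W // ¬ w ≠ h}) => vK p)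
            (Matrix.of fun (_ : {w : W // ¬ w ≠ h}) (p : {w : W // w ≠ h}) => uK p)
            (Matrix.of fun _ _ => φ Polynomial.X) := by
      have hres := restrict_charmatrix φ H h
      ext i j
      rcases i with p | x
      · rcases j with q | y
        · show MH p.1 q.1 = DH p q
          rw [hDHdef, ← hres]
          rfl
        · have hy : y.1 = h := not_not.mp y.2
          show MH p.1 y.1 = vK p
          rw [hMHdef, hvK]
          simp only [Matrix.map_apply, hy, Matrix.of_apply]
          rw [Matrix.charmatrix_apply_ne _ _ _ p.2, map_neg]
      · have hx : x.1 = h := not_not.mp x.2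
        rcases j with q | y
        · show MH x.1 q.1 = uK q
          rw [hMHdef, huK]
          simp only [Matrix.map_apply, hx, Matrix.of_apply]
          rw [Matrix.charmatrix_apply_ne _ _ _ (Ne.symm q.2), map_neg]
        · have hy : y.1 = h := not_not.mp y.2
          show MH x.1 y.1 = φ Polynomial.X
          rw [hMHdef]
          simp [Matrix.map_apply, hx, hy, adjM]
    rw [hb, Matrix.det_fromBlocks₁₁]
    congr 1
    rw [Matrix.det_unique]
    simp only [Matrix.sub_apply, Matrix.of_apply, Matrix.mul_apply]
    rfl
  -- adjacency reductions for coal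
  have cAdj11 : ∀ (a b : V), (coal G H g h).Adj (Sum.inl a) (Sum.inl b) = G.Adj a b :=
    fun _ _ => rfl
  have cAdj12 : ∀ (a : V) (p : {w : W // w ≠ h}),
      (coal G H g h).Adj (Sum.inl a) (Sum.inr p) = (a = g ∧ H.Adj h p.1) := fun _ _ => rfl
  have cAdj21 : ∀ (p : {w : W // w ≠ h}) (a : V),
      (coal G H g h).Adj (Sum.inr p) (Sum.inl a) = (a = g ∧ H.Adj h p.1) := fun _ _ => rfl
  have cAdj22 : ∀ (p q : {w : W // w ≠ h}),
      (coal G H g h).Adj (Sum.inr p) (Sum.inr q) = H.Adj p.1 q.1 := fun _ _ => rfl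
  -- decomposition of F
  have hFdec : MF = Matrix.fromBlocks MG
      (Matrix.of fun (a : V) (p : {w : W // w ≠ h}) => if a = g then uK p else 0)
      (Matrix.of fun (p : {w : W // w ≠ h}) (a : V) => if a = g then vK p else 0) DH := by
    ext i j
    rcases i with a | p
    · rcases j with b | q
      · show φ ((Matrix.charmatrix (adjM (coal G H g h))) (Sum.inl a) (Sum.inl b)) = MG a b
        rw [hMGdef]
        by_cases hab : a = b
        · subst hab
          simp [Matrix.map_apply, adjM, cAdj11]
        · have hab' : (Sum.inl a : V ⊕ {w : W // w ≠ h}) ≠ Sum.inl b := by simp [hab]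
          simp only [Matrix.map_apply, Matrix.charmatrix_apply_ne _ _ _ hab',
            Matrix.charmatrix_apply_ne _ _ _ hab]
          rfl
      · show φ ((Matrix.charmatrix (adjM (coal G H g h))) (Sum.inl a) (Sum.inr q))
            = if a = g then uK q else 0
        have hne : (Sum.inl a : V ⊕ {w : W // w ≠ h}) ≠ Sum.inr q := by simp
        rw [huK]
        simp only [Matrix.map_apply, Matrix.charmatrix_apply_ne _ _ _ hne]
        by_cases ha : a = g
        · subst ha
          rw [map_neg]
          congr 2
          simp [adjM, cAdj12]
        · simp only [if_neg ha]
          have : adjM (coal G H g h) (Sum.inl a) (Sum.inr q) = 0 := by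
            simp [adjM, cAdj12, ha]
          rw [this]
          simp
    · rcases j with b | q
      · show φ ((Matrix.charmatrix (adjM (coal G H g h))) (Sum.inr p) (Sum.inl b))
            = if b = g then vK p else 0
        have hne : (Sum.inr p : V ⊕ {w : W // w ≠ h}) ≠ Sum.inl b := by simp
        rw [hvK]
        simp only [Matrix.map_apply, Matrix.charmatrix_apply_ne _ _ _ hne]
        by_cases hb : b = g
        · subst hb
          rw [map_neg]
          congr 2
          have hcomm := H.adj_comm h p.1
          simp [adjM, cAdj21, hcomm]
        · simp only [if_neg hb]
          have : adjM (coal G H g h) (Sum.inr p) (Sum.inl b) = 0 := by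
            simp [adjM, cAdj21, hb]
          rw [this]
          simp
      · show φ ((Matrix.charmatrix (adjM (coal G H g h))) (Sum.inr p) (Sum.inr q)) = DH p q
        rw [hDHdef, ← restrict_charmatrix φ H h]
        by_cases hpq : p = q
        · subst hpq
          simp [Matrix.map_apply, adjM, cAdj22]
        · have h1 : (Sum.inr p : V ⊕ {w : W // w ≠ h}) ≠ Sum.inr q := by simp [hpq]
          have h2 : p.1 ≠ q.1 := fun hh => hpq (Subtype.ext hh)
          simp only [Matrix.of_apply, Matrix.map_apply,
            Matrix.charmatrix_apply_ne _ _ _ h1, Matrix.charmatrix_apply_ne _ _ _ h2]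
          rfl
  have hBDC : (Matrix.of fun (a : V) (p : {w : W // w ≠ h}) => if a = g then uK p else 0)
        * ⅟DH * (Matrix.of fun (p : {w : W // w ≠ h}) (a : V) => if a = g then vK p else 0)
      = Matrix.of fun a b : V => if a = g then (if b = g then s else 0) else 0 := by
    ext a b
    simp only [Matrix.mul_apply, Matrix.of_apply]
    by_cases ha : a = g
    · by_cases hb : b = g
      · simp [ha, hb, hs]
      · simp [ha, hb]
    · simp [ha]
  have hminor : Matrix.det (MG.updateRow g fun b => if b = g then 1 else 0) = DG.det := by
    rw [det_updateRow_indicator, hMGdef, restrict_charmatrix φ G g, hDGdef]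
  have hkey : MF.det = DH.det * (MG.det - s * DG.det) := by
    rw [hFdec, Matrix.det_fromBlocks₂₂, hBDC]
    congr 1
    have hrow : (MG - Matrix.of fun a b : V => if a = g then (if b = g then s else 0) else 0)
        = MG.updateRow g (MG g + (-s) • fun c => if c = g then (1:K) else 0) := by
      ext a b
      by_cases ha : a = g
      · by_cases hb : b = g <;>
          simp [Matrix.sub_apply, Matrix.updateRow_apply, ha, hb, sub_eq_add_neg]
      · simp [Matrix.updateRow_apply, ha]
    rw [hrow, Matrix.det_updateRow_add, Matrix.det_updateRow_smul, Matrix.updateRow_eq_self,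
      hminor]
    ring
  rw [hMF, map_sub, map_add, map_mul, map_mul, map_mul, map_mul, hMG, hMH, hDG, hDH, hkey, hWdec]
  ring
end
end

section
/- For a connected graph G, the characteristic polynomial comparison G ≺ (G−v)⁺ holds for any vertex v: for all x ≥ ρ(G), P_G(x) < x·P_{G−v}(x). -/
open scoped Classical
open Polynomial

noncomputable section

open Matrix

namespace PrecAux
set_option linter.unusedSectionVars false

variable {n : Type*} [Fintype n] [DecidableEq n]

lemma eval_charpoly (M : Matrix n n ℝ) (x : ℝ) :
    (M.charpoly).eval x = (x • (1 : Matrix n n ℝ) - M).det := by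
  rw [Matrix.charpoly, ← Polynomial.coe_evalRingHom, RingHom.map_det]
  congr 1
  ext i j
  by_cases h : i = j <;>
    simp [Matrix.charmatrix_apply, Matrix.one_apply, Matrix.diagonal_apply, h,
      Matrix.smul_apply, Matrix.sub_apply]

lemma smul_one_sub_eq {M : Matrix n n ℝ} (hM : M.IsHermitian) (t : ℝ) :
    t • (1 : Matrix n n ℝ) - M =
      (hM.eigenvectorUnitary : Matrix n n ℝ) *
        Matrix.diagonal (fun i => t - hM.eigenvalues i) *
        (star (hM.eigenvectorUnitary : Matrix n n ℝ)) := by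
  have hU : (hM.eigenvectorUnitary : Matrix n n ℝ) *
      (star (hM.eigenvectorUnitary : Matrix n n ℝ)) = 1 :=
    Matrix.mem_unitaryGroup_iff.mp (hM.eigenvectorUnitary).2
  have hdiag : Matrix.diagonal (fun i => t - hM.eigenvalues i)
      = t • (1 : Matrix n n ℝ) - Matrix.diagonal hM.eigenvalues := by
    rw [Matrix.smul_one_eq_diagonal, ← Matrix.diagonal_sub]
  conv_lhs => rw [hM.spectral_theorem]
  rw [hdiag]
  simp only [Matrix.mul_sub, Matrix.sub_mul, Matrix.mul_smul, Matrix.smul_mul, Matrix.mul_one]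
  rw [hU]
  simp [RCLike.ofReal_real_eq_id]

lemma det_smul_one_sub {M : Matrix n n ℝ} (hM : M.IsHermitian) (t : ℝ) :
    (t • (1 : Matrix n n ℝ) - M).det = ∏ i, (t - hM.eigenvalues i) := by
  rw [smul_one_sub_eq hM t]
  have hU : ((hM.eigenvectorUnitary : Matrix n n ℝ)).det *
      ((star (hM.eigenvectorUnitary : Matrix n n ℝ))).det = 1 := by
    rw [← Matrix.det_mul, Matrix.mem_unitaryGroup_iff.mp (hM.eigenvectorUnitary).2,
      Matrix.det_one]
  rw [Matrix.det_mul, Matrix.det_mul, Matrix.det_diagonal, mul_right_comm, hU, one_mul]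

lemma posSemidef_smul_one_sub {M : Matrix n n ℝ} (hM : M.IsHermitian) {t : ℝ}
    (h : ∀ i, hM.eigenvalues i ≤ t) : (t • (1 : Matrix n n ℝ) - M).PosSemidef := by
  rw [smul_one_sub_eq hM t]
  exact (Matrix.posSemidef_diagonal_iff.mpr
    (fun i => by simpa using h i)).mul_mul_conjTranspose_same _

lemma quad_le {M : Matrix n n ℝ} {t : ℝ}
    (h : (t • (1 : Matrix n n ℝ) - M).PosSemidef) (z : n → ℝ) :
    z ⬝ᵥ (M *ᵥ z) ≤ t * (z ⬝ᵥ z) := by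
  have := h.dotProduct_mulVec_nonneg z
  simp only [Matrix.sub_mulVec, Matrix.smul_mulVec, Matrix.one_mulVec,
    dotProduct_sub, dotProduct_smul, star_trivial, smul_eq_mul] at this
  linarith

variable {V : Type*} [Fintype V] [DecidableEq V]

lemma adjM_herm (G : SimpleGraph V) : (adjM G).IsHermitian := by
  ext i j
  simp [adjM, Matrix.conjTranspose_apply, SimpleGraph.adj_comm]

lemma adjM_nonneg (G : SimpleGraph V) (a b : V) : 0 ≤ adjM G a b := by
  unfold adjM; split <;> norm_num

lemma adjM_del (G : SimpleGraph V) (v : V) (a b : {u : V // u ≠ v}) :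
    adjM (del G v) a b = adjM G a.1 b.1 := by
  simp [adjM, del]

lemma sum_red (v : V) (f : V → ℝ) (hf : f v = 0) :
    ∑ a : {u : V // u ≠ v}, f a.1 = ∑ u, f u := by
  rw [← Finset.sum_subtype (Finset.univ.erase v) (by simp) f]
  exact Finset.sum_erase _ hf

lemma le_specRad (G : SimpleGraph V) (i : V) :
    (adjM_herm G).eigenvalues i ≤ specRad G := by
  have hset : {x : ℝ | (_root_.charP G).IsRoot x} = Set.range (adjM_herm G).eigenvalues := by
    ext t
    simp only [Set.mem_setOf_eq, Set.mem_range]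
    constructor
    · intro ht
      have h2 : ∏ j, (t - (adjM_herm G).eigenvalues j) = 0 := by
        rw [← det_smul_one_sub (adjM_herm G), ← eval_charpoly]
        exact ht
      obtain ⟨j, -, hj⟩ := Finset.prod_eq_zero_iff.mp h2
      exact ⟨j, (sub_eq_zero.mp hj).symm⟩
    · rintro ⟨j, rfl⟩
      show (_root_.charP G).IsRoot _
      rw [Polynomial.IsRoot, _root_.charP, eval_charpoly, det_smul_one_sub (adjM_herm G)]
      exact Finset.prod_eq_zero (Finset.mem_univ j) (sub_self _)
  unfold specRad
  rw [hset]
  exact le_csSup (Set.finite_range _).bddAbove ⟨i, rfl⟩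

lemma eig_del_lt (G : SimpleGraph V) (hconn : G.Connected) (v : V)
    (i : {u : V // u ≠ v}) :
    (adjM_herm (del G v)).eigenvalues i < specRad G := by
  by_contra hcon
  push_neg at hcon
  have hN := adjM_herm (del G v)
  set μ := (adjM_herm (del G v)).eigenvalues i with hmudef
  -- eigenvector
  set y : {u : V // u ≠ v} → ℝ := ⇑((adjM_herm (del G v)).eigenvectorBasis i) with hydef
  have hy : adjM (del G v) *ᵥ y = μ • y := (adjM_herm (del G v)).mulVec_eigenvectorBasis i
  have hy0 : y ≠ 0 := by
    intro h0
    exact (adjM_herm (del G v)).eigenvectorBasis.orthonormal.ne_zero i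
      (by ext u; exact congrFun h0 u)
  have hc : 0 < y ⬝ᵥ y := by
    rcases lt_or_eq_of_le (Finset.sum_nonneg fun j _ => mul_self_nonneg (y j)) with h | h
    · exact h
    · exact absurd (dotProduct_self_eq_zero.mp h.symm) hy0
  -- extended vector
  set z : V → ℝ := fun u => if h : u = v then 0 else |y ⟨u, h⟩| with hzdef
  have hzv : z v = 0 := by simp [hzdef]
  have hznn : ∀ u, 0 ≤ z u := by
    intro u; by_cases h : u = v <;> simp [hzdef, h, abs_nonneg]
  have hza : ∀ a : {u : V // u ≠ v}, z a.1 = |y a| := by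
    rintro ⟨a, ha⟩; simp [hzdef, ha]
  have hdot : ∀ (f g : V → ℝ), f ⬝ᵥ g = ∑ u, f u * g u := fun _ _ => rfl
  have hdot' : ∀ (f g : {u : V // u ≠ v} → ℝ), f ⬝ᵥ g = ∑ b, f b * g b := fun _ _ => rfl
  have hmv : ∀ (u : V), (adjM G *ᵥ z) u = ∑ w, adjM G u w * z w := fun _ => rfl
  have hmv' : ∀ (a : {u : V // u ≠ v}),
      (adjM (del G v) *ᵥ y) a = ∑ b, adjM (del G v) a b * y b := fun _ => rfl
  have hzz : z ⬝ᵥ z = y ⬝ᵥ y := by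
    rw [hdot, hdot', ← sum_red v (fun u => z u * z u) (by simp [hzv])]
    refine Finset.sum_congr rfl fun a _ => ?_
    rw [hza a, abs_mul_abs_self]
  -- Rayleigh comparison
  have hmain : μ * (y ⬝ᵥ y) ≤ z ⬝ᵥ (adjM G *ᵥ z) := by
    have h1 : μ * (y ⬝ᵥ y) = y ⬝ᵥ (adjM (del G v) *ᵥ y) := by
      rw [hy, dotProduct_smul, smul_eq_mul]
    rw [h1, hdot, hdot',
      ← sum_red v (fun u => z u * (adjM G *ᵥ z) u) (by simp [hzv])]
    refine Finset.sum_le_sum fun a _ => ?_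
    have hrow : (adjM G *ᵥ z) a.1 = ∑ b : {u : V // u ≠ v}, adjM G a.1 b.1 * z b.1 := by
      rw [hmv a.1, ← sum_red v (fun w => adjM G a.1 w * z w) (by simp [hzv])]
    calc y a * (adjM (del G v) *ᵥ y) a
        ≤ |y a * (adjM (del G v) *ᵥ y) a| := le_abs_self _
      _ = |y a| * |(adjM (del G v) *ᵥ y) a| := abs_mul _ _
      _ ≤ |y a| * ∑ b : {u : V // u ≠ v}, adjM G a.1 b.1 * z b.1 := by
          refine mul_le_mul_of_nonneg_left ?_ (abs_nonneg _)
          rw [hmv' a]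
          refine (Finset.abs_sum_le_sum_abs _ _).trans (Finset.sum_le_sum fun b _ => ?_)
          rw [abs_mul, hza b, adjM_del G v a b,
            abs_of_nonneg (adjM_nonneg G a.1 b.1)]
      _ = z a.1 * (adjM G *ᵥ z) a.1 := by rw [hrow, hza a]
  -- equality case
  have hPSD : (specRad G • (1 : Matrix V V ℝ) - adjM G).PosSemidef :=
    posSemidef_smul_one_sub (adjM_herm G) (fun j => le_specRad G j)
  have hub : z ⬝ᵥ (adjM G *ᵥ z) ≤ specRad G * (y ⬝ᵥ y) := by
    have := quad_le hPSD z; rwa [hzz] at this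
  have heq : z ⬝ᵥ (adjM G *ᵥ z) = specRad G * (y ⬝ᵥ y) := by
    have : specRad G * (y ⬝ᵥ y) ≤ μ * (y ⬝ᵥ y) := mul_le_mul_of_nonneg_right hcon hc.le
    linarith
  have hker : adjM G *ᵥ z = specRad G • z := by
    have h0 : star z ⬝ᵥ ((specRad G • (1 : Matrix V V ℝ) - adjM G) *ᵥ z) = 0 := by
      simp only [Matrix.sub_mulVec, Matrix.smul_mulVec, Matrix.one_mulVec,
        dotProduct_sub, dotProduct_smul, star_trivial, smul_eq_mul]
      rw [hzz, heq]; ring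
    have h1 := (hPSD.dotProduct_mulVec_zero_iff z).mp h0
    rw [Matrix.sub_mulVec, Matrix.smul_mulVec, Matrix.one_mulVec, sub_eq_zero] at h1
    exact h1.symm
  -- propagation of zeros
  have hprop : ∀ u w : V, z u = 0 → G.Adj u w → z w = 0 := by
    intro u w hu huw
    have h0 : ∑ t, adjM G u t * z t = 0 := by
      rw [← hmv u, hker]
      simp [hu]
    have hterm := (Finset.sum_eq_zero_iff_of_nonneg
      (fun t _ => mul_nonneg (adjM_nonneg G u t) (hznn t))).mp h0 w (Finset.mem_univ w)
    have h2 : adjM G u w = 1 := by simp [adjM, huw]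
    rw [h2, one_mul] at hterm
    exact hterm
  -- connectivity kills z
  have hall : ∀ u, z u = 0 := by
    have H : ∀ (a b : V) (p : G.Walk a b), z a = 0 → z b = 0 := by
      intro a b p
      induction p with
      | nil => exact id
      | cons h q ih => intro ha; exact ih (hprop _ _ ha h)
    intro u
    obtain ⟨p⟩ := hconn.preconnected v u
    exact H v u p hzv
  have hzero : y ⬝ᵥ y = 0 := by
    rw [← hzz, hdot]
    exact Finset.sum_eq_zero fun u _ => by rw [hall u]; ring
  exact absurd hzero hc.ne'

lemma exists_adj (G : SimpleGraph V) (hconn : G.Connected) (hcard : 2 ≤ Fintype.card V)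
    (v : V) : ∃ u, G.Adj v u := by
  obtain ⟨w, hw⟩ := Fintype.exists_ne_of_one_lt_card (by omega) v
  obtain ⟨p⟩ := hconn.preconnected v w
  cases p with
  | nil => exact absurd rfl hw
  | cons h q => exact ⟨_, h⟩

end PrecAux

/-- For a connected graph `G` with at least two vertices and any vertex `v`,
`G ≺ (G-v)⁺`, i.e. `P_G(x) < x·P_{G-v}(x)` for all `x ≥ ρ(G)`. -/
theorem prec_deleted_plus_isolated {V : Type*} [Fintype V] [DecidableEq V]
    (G : SimpleGraph V) (hconn : G.Connected) (hcard : 2 ≤ Fintype.card V) (v : V) :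
    ∀ x : ℝ, specRad G ≤ x → (charP G).eval x < x * (charP (del G v)).eval x := by
  intro x hx
  have hN := PrecAux.adjM_herm (del G v)
  have hlt : ∀ i, hN.eigenvalues i < x :=
    fun i => lt_of_lt_of_le (PrecAux.eig_del_lt G hconn v i) hx
  have hSne : Nonempty {u : V // u ≠ v} := by
    obtain ⟨w, hw⟩ := Fintype.exists_ne_of_one_lt_card (by omega) v
    exact ⟨⟨w, hw⟩⟩
  -- the shifted minor is positive definite
  obtain ⟨i0, -, hmax⟩ := Finset.exists_mem_eq_sup' (Finset.univ_nonempty (α := {u : V // u ≠ v}))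
    hN.eigenvalues
  have hm : ∀ i, hN.eigenvalues i ≤ Finset.univ.sup' Finset.univ_nonempty hN.eigenvalues :=
    fun i => Finset.le_sup' _ (Finset.mem_univ i)
  have hmx : Finset.univ.sup' Finset.univ_nonempty hN.eigenvalues < x := by
    rw [hmax]; exact hlt i0
  have hPSD := PrecAux.posSemidef_smul_one_sub hN hm
  have hPD : (x • (1 : Matrix {u : V // u ≠ v} {u : V // u ≠ v} ℝ) - adjM (del G v)).PosDef := by
    rw [Matrix.posDef_iff_dotProduct_mulVec]
    constructor
    · have h1 : (x • (1 : Matrix {u : V // u ≠ v} {u : V // u ≠ v} ℝ)).IsHermitian := by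
        rw [Matrix.smul_one_eq_diagonal]
        exact Matrix.isHermitian_diagonal _
      exact h1.sub hN
    · intro zz hzz0
      have h2 := PrecAux.quad_le hPSD zz
      have h3 : 0 < zz ⬝ᵥ zz := by
        rcases lt_or_eq_of_le (Finset.sum_nonneg fun j _ => mul_self_nonneg (zz j)) with h | h
        · exact h
        · exact absurd (dotProduct_self_eq_zero.mp h.symm) hzz0
      simp only [Matrix.sub_mulVec, Matrix.smul_mulVec, Matrix.one_mulVec,
        dotProduct_sub, dotProduct_smul, star_trivial, smul_eq_mul]
      nlinarith
  -- block decomposition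
  haveI hTu : Unique {u : V // ¬ u ≠ v} :=
    { default := ⟨v, not_not_intro rfl⟩
      uniq := fun a => Subtype.ext (not_not.mp a.2) }
  set e : ({u : V // u ≠ v} ⊕ {u : V // ¬ u ≠ v}) ≃ V := Equiv.sumCompl (· ≠ v) with hedef
  set B := x • (1 : Matrix V V ℝ) - adjM G with hBdef
  set M' := B.submatrix e e with hM'def
  have h11 : M'.toBlocks₁₁ = x • (1 : Matrix {u : V // u ≠ v} {u : V // u ≠ v} ℝ)
      - adjM (del G v) := by
    ext a b
    simp only [hM'def, Matrix.toBlocks₁₁, Matrix.submatrix_apply, Matrix.of_apply, hBdef,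
      Matrix.sub_apply, Matrix.smul_apply, Matrix.one_apply, hedef,
      Equiv.sumCompl_apply_inl, PrecAux.adjM_del, smul_eq_mul]
    congr 1
    simp [Subtype.ext_iff]
  have hdet11pos : (0:ℝ) < (M'.toBlocks₁₁).det := by rw [h11]; exact hPD.det_pos
  haveI hInv : Invertible M'.toBlocks₁₁ :=
    Matrix.invertibleOfIsUnitDet _ hdet11pos.ne'.isUnit
  have hd0 : (default : {u : V // ¬ u ≠ v}) = ⟨v, not_not_intro rfl⟩ := by
    have h := (default : {u : V // ¬ u ≠ v}).2
    exact Subtype.ext (not_not.mp h)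
  set av : {u : V // u ≠ v} → ℝ := fun b => adjM G v b.1 with havdef
  have hBav : ∀ (u w : V), B u w = (if u = w then x else 0) - adjM G u w := by
    intro u w
    simp only [hBdef, Matrix.sub_apply, Matrix.smul_apply, Matrix.one_apply, smul_eq_mul]
    split <;> ring
  have h21 : ∀ a : {u : V // u ≠ v},
      M'.toBlocks₂₁ (⟨v, not_not_intro rfl⟩ : {u : V // ¬ u ≠ v}) a = -(av a) := by
    intro a
    have h0 : M'.toBlocks₂₁ (⟨v, not_not_intro rfl⟩ : {u : V // ¬ u ≠ v}) a = B v a.1 := by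
      rw [hM'def, hedef]; rfl
    rw [h0, hBav, if_neg (fun h : v = a.1 => a.2 h.symm), zero_sub, havdef]
  have h12 : ∀ a : {u : V // u ≠ v},
      M'.toBlocks₁₂ a (⟨v, not_not_intro rfl⟩ : {u : V // ¬ u ≠ v}) = -(av a) := by
    intro a
    have h0 : M'.toBlocks₁₂ a (⟨v, not_not_intro rfl⟩ : {u : V // ¬ u ≠ v}) = B a.1 v := by
      rw [hM'def, hedef]; rfl
    have hsym : adjM G a.1 v = adjM G v a.1 := by
      simp [adjM, SimpleGraph.adj_comm]
    rw [h0, hBav, if_neg a.2, zero_sub, hsym, havdef]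
  have h22 : M'.toBlocks₂₂ (⟨v, not_not_intro rfl⟩ : {u : V // ¬ u ≠ v}) ⟨v, not_not_intro rfl⟩ = x := by
    have h0 : M'.toBlocks₂₂ (⟨v, not_not_intro rfl⟩ : {u : V // ¬ u ≠ v}) ⟨v, not_not_intro rfl⟩ = B v v := by
      rw [hM'def, hedef]; rfl
    have h1 : adjM G v v = 0 := by simp [adjM]
    rw [h0, hBav, if_pos rfl, h1, sub_zero]
  -- the Schur quantity
  have hq : (M'.toBlocks₂₁ * (M'.toBlocks₁₁)⁻¹ * M'.toBlocks₁₂)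
        (⟨v, not_not_intro rfl⟩ : {u : V // ¬ u ≠ v}) ⟨v, not_not_intro rfl⟩
      = av ⬝ᵥ ((M'.toBlocks₁₁)⁻¹ *ᵥ av) := by
    simp only [Matrix.mul_apply]
    calc ∑ b, (∑ a, M'.toBlocks₂₁ (⟨v, not_not_intro rfl⟩ : {u : V // ¬ u ≠ v}) a * (M'.toBlocks₁₁)⁻¹ a b) *
          M'.toBlocks₁₂ b ⟨v, not_not_intro rfl⟩
        = ∑ b, ∑ a, av a * (M'.toBlocks₁₁)⁻¹ a b * av b := by
          refine Finset.sum_congr rfl fun b _ => ?_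
          rw [Finset.sum_mul]
          refine Finset.sum_congr rfl fun a _ => ?_
          rw [h21 a, h12 b]; ring
      _ = ∑ a, ∑ b, av a * (M'.toBlocks₁₁)⁻¹ a b * av b := Finset.sum_comm
      _ = av ⬝ᵥ ((M'.toBlocks₁₁)⁻¹ *ᵥ av) := by
          refine Finset.sum_congr rfl fun a _ => ?_
          show _ = av a * ∑ b, (M'.toBlocks₁₁)⁻¹ a b * av b
          rw [Finset.mul_sum]
          exact Finset.sum_congr rfl fun b _ => by ring
  have hav0 : av ≠ 0 := by
    obtain ⟨u, hu⟩ := PrecAux.exists_adj G hconn hcard v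
    intro h
    have := congrFun h ⟨u, (G.ne_of_adj hu).symm⟩
    simp [havdef, adjM, hu] at this
  have hqpos : 0 < av ⬝ᵥ ((M'.toBlocks₁₁)⁻¹ *ᵥ av) := by
    have hPDi : ((M'.toBlocks₁₁)⁻¹).PosDef := by rw [h11]; exact hPD.inv
    have := hPDi.dotProduct_mulVec_pos hav0
    simpa [star_trivial] using this
  -- determinant computation
  have hdetB : B.det = (M'.toBlocks₁₁).det * (x - av ⬝ᵥ ((M'.toBlocks₁₁)⁻¹ *ᵥ av)) := by
    rw [← Matrix.det_submatrix_equiv_self e B, ← hM'def, ← Matrix.fromBlocks_toBlocks M',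
      Matrix.det_fromBlocks₁₁]
    simp only [Matrix.toBlocks_fromBlocks₁₁, Matrix.toBlocks_fromBlocks₁₂,
      Matrix.toBlocks_fromBlocks₂₁, Matrix.toBlocks_fromBlocks₂₂]
    congr 1
    rw [Matrix.det_unique, hd0, Matrix.sub_apply, Matrix.invOf_eq_nonsing_inv, h22, hq]
  have hevalG : (charP G).eval x = B.det := PrecAux.eval_charpoly (adjM G) x
  have hevalD : (charP (del G v)).eval x = (M'.toBlocks₁₁).det := by
    rw [h11]; exact PrecAux.eval_charpoly (adjM (del G v)) x
  rw [hevalG, hevalD, hdetB]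
  nlinarith [hdet11pos, hqpos]
end
end

section
/- With the notation of the pendant-clique operation, the following polynomial identity holds: P_{G(r+1,s−1)}(x) − P_{G(r,s)}(x) = (x+1)^{r+s−4}·[(s−r−1)·(P_G(x) + P_{G−u}(x) + P_{G−v}(x) + P_{G−{u,v}}(x)) + (x+1)·(P_{G−v}(x) − P_{G−u}(x))], for all r, s ≥ 2. -/
open scoped Classical
open Polynomial

noncomputable section

/-- `pcl G u v r s` is `G(r,s)`: the graph obtained from `G` by attaching a pendant
complete graph `K_r` at `u` (identifying `u` with one of its vertices, so adding
`r-1` new vertices) and a pendant `K_s` at `v`. -/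
def pcl {V : Type*} (G : SimpleGraph V) (u v : V) (r s : ℕ) :
    SimpleGraph (V ⊕ (Fin (r - 1) ⊕ Fin (s - 1))) where
  Adj x y :=
    match x, y with
    | Sum.inl a, Sum.inl b => G.Adj a b
    | Sum.inl a, Sum.inr (Sum.inl _) => a = u
    | Sum.inl a, Sum.inr (Sum.inr _) => a = v
    | Sum.inr (Sum.inl _), Sum.inl b => b = u
    | Sum.inr (Sum.inr _), Sum.inl b => b = v
    | Sum.inr (Sum.inl i), Sum.inr (Sum.inl j) => i ≠ j
    | Sum.inr (Sum.inr i), Sum.inr (Sum.inr j) => i ≠ j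
    | _, _ => False
  symm := ⟨by
    rintro (a | (i | i)) (b | (j | j)) h <;>
      first
        | exact G.adj_symm h
        | exact h
        | exact Ne.symm h
        | exact h.elim⟩
  loopless := ⟨by
    rintro (a | (i | i)) h
    exacts [G.irrefl h, h rfl, h rfl]⟩

/-- Induced subgraph `G - {u,v}` with both vertices removed. -/
def del2 {V : Type*} (G : SimpleGraph V) (u v : V) :
    SimpleGraph {a : V | a ≠ u ∧ a ≠ v} :=
  SimpleGraph.induce {a : V | a ≠ u ∧ a ≠ v} G



section AuxPCI
open Matrix

section Generic
variable {F : Type*} [Field F]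

def cliqueMat (n : ℕ) (x : F) : Matrix (Fin n) (Fin n) F :=
  Matrix.of fun i j => if i = j then x else -1

lemma det_cliqueMat (n : ℕ) (x : F) (h : x + 1 ≠ 0) :
    (x + 1) * (cliqueMat n x).det = (x + 1) ^ n * (x + 1 - n) := by
  have key : cliqueMat n x
      = (x+1) • (1 + Matrix.replicateCol Unit (fun _ => -(x+1)⁻¹) * Matrix.replicateRow Unit (fun _ => (1:F))) := by
    ext i j
    by_cases hij : i = j <;>
      simp [cliqueMat, hij, Matrix.mul_apply, Matrix.one_apply, mul_add,
        mul_inv_cancel₀ h] <;> ring_nf <;>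
      field_simp
  rw [key, det_smul, det_one_add_replicateCol_mul_replicateRow]
  simp [dotProduct, Finset.sum_const]
  field_simp
  ring
end Generic

noncomputable section G2
variable {F : Type*} [Field F]

def cliqueInv (n : ℕ) (x : F) : Matrix (Fin n) (Fin n) F :=
  Matrix.of fun i j => (if i = j then (x+1)⁻¹ else 0) + (x+1)⁻¹ * (x+1-n)⁻¹

lemma cliqueMat_mul_inv (n : ℕ) (x : F) (h : x + 1 ≠ 0) (hn : x + 1 - n ≠ 0) :
    cliqueMat n x * cliqueInv n x = 1 := by
  ext i j
  simp only [Matrix.mul_apply, cliqueMat, cliqueInv, Matrix.of_apply, Matrix.one_apply]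
  set α := (x+1)⁻¹
  set β := (x+1)⁻¹ * (x+1-n)⁻¹
  have expand : ∀ k, (if i = k then x else -1) * ((if k = j then α else 0) + β)
      = ((x+1)*α*(if i = k then (1:F) else 0)*(if k = j then 1 else 0)
        + (x+1)*β*(if i = k then 1 else 0)) - (α*(if k = j then 1 else 0) + β) := by
    intro k
    by_cases h2 : k = j
    · subst h2
      by_cases h1 : i = k <;> simp [h1] <;> ring
    · by_cases h1 : i = k <;> simp [h1, h2] <;> ring
  rw [Finset.sum_congr rfl (fun k _ => expand k)]
  rw [Finset.sum_sub_distrib, Finset.sum_add_distrib, Finset.sum_add_distrib]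
  simp only [Finset.sum_const, Finset.card_univ, Fintype.card_fin, nsmul_eq_mul,
    mul_ite, mul_one, mul_zero, ite_mul, zero_mul, Finset.sum_ite_eq, Finset.sum_ite_eq',
    Finset.mem_univ, if_true]
  by_cases hij : i = j <;> simp [hij, α, β] <;> field_simp <;> ring
end G2

noncomputable section G3
variable {F : Type*} [Field F]

lemma cliqueInv_mul (n : ℕ) (x : F) (h : x + 1 ≠ 0) (hn : x + 1 - n ≠ 0) :
    cliqueInv n x * cliqueMat n x = 1 := by
  have h1 : (cliqueMat n x)ᵀ = cliqueMat n x := by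
    ext i j; simp [cliqueMat, eq_comm]
  have h2 : (cliqueInv n x)ᵀ = cliqueInv n x := by
    ext i j; simp [cliqueInv, eq_comm]
  calc cliqueInv n x * cliqueMat n x
      = ((cliqueMat n x)ᵀ * (cliqueInv n x)ᵀ)ᵀ := by
        rw [← Matrix.transpose_mul, Matrix.transpose_transpose]
    _ = 1 := by rw [h1, h2, cliqueMat_mul_inv n x h hn, Matrix.transpose_one]

def cliqueInvertible (n : ℕ) (x : F) (h : x + 1 ≠ 0) (hn : x + 1 - n ≠ 0) :
    Invertible (cliqueMat n x) :=
  ⟨cliqueInv n x, cliqueInv_mul n x h hn, cliqueMat_mul_inv n x h hn⟩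

end G3

noncomputable section G4
variable {R : Type*} [CommRing R] {V : Type*} [Fintype V] [DecidableEq V]

/-- inclusion of the complement of one vertex -/
def emb1 (u : V) : {a : V // a ≠ u} → V := fun a => a.val

def emb2 (u v : V) : ↥{a : V | a ≠ u ∧ a ≠ v} → V := fun a => a.val

lemma det_row_single (M : Matrix V V R) (u : V)
    (h : ∀ b, M u b = if b = u then 1 else 0) :
    M.det = (M.submatrix (emb1 u) (emb1 u)).det := by
  classical
  have hu : Unique {a : V // a = u} :=
    ⟨⟨⟨u, rfl⟩⟩, by rintro ⟨a, rfl⟩; rfl⟩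
  let e : {a : V // a = u} ⊕ {a : V // ¬ a = u} ≃ V := Equiv.sumCompl _
  rw [← Matrix.det_submatrix_equiv_self e M]
  have hM : M.submatrix e e = Matrix.fromBlocks
      (M.submatrix (fun a : {a : V // a = u} => (a : V)) (fun a : {a : V // a = u} => (a : V)))
      0
      (M.submatrix (fun a : {a : V // ¬ a = u} => (a : V)) (fun a : {a : V // a = u} => (a : V)))
      (M.submatrix (emb1 u) (emb1 u)) := by
    ext i j
    rcases i with i | i <;> rcases j with j | j
    · rfl
    · obtain ⟨i, rfl⟩ := i
      simp [e, Matrix.fromBlocks, h]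
      exact fun hj => absurd hj j.prop
    · rfl
    · rfl
  rw [hM, Matrix.det_fromBlocks_zero₁₂]
  have : (M.submatrix (fun a : {a : V // a = u} => (a : V))
      (fun a : {a : V // a = u} => (a : V))).det = 1 := by
    haveI := hu
    rw [Matrix.det_unique]
    rw [Matrix.submatrix_apply,
      (default : {a : V // a = u}).prop]
    simp [h]
  rw [this, one_mul]

lemma det_add_single (M : Matrix V V R) (u : V) (c : R) :
    (M + c • Matrix.single u u 1).det
      = M.det + c * (M.submatrix (emb1 u) (emb1 u)).det := by
  classical
  have hM : M + c • Matrix.single u u 1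
      = M.updateRow u (M u + c • (Pi.single u 1 : V → R)) := by
    ext i b
    by_cases hi : i = u
    · rw [hi, Matrix.updateRow_self]
      by_cases hb : b = u
      · simp [Matrix.single, Pi.single_apply, hb]
      · have hb' : ¬ u = b := fun h => hb h.symm
        simp [Matrix.single, Pi.single_apply, hb, hb']
    · rw [Matrix.updateRow_ne hi]
      have hne : ¬ (u = i ∧ u = b) := fun hc => hi hc.1.symm
      simp [Matrix.single, hne]
  rw [hM, Matrix.det_updateRow_add, Matrix.updateRow_eq_self, Matrix.det_updateRow_smul]
  congr 1
  have h1 : (M.updateRow u (Pi.single u 1)).det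
      = ((M.updateRow u (Pi.single u 1)).submatrix (emb1 u) (emb1 u)).det := by
    apply det_row_single
    intro b
    simp [Pi.single_apply]
  have h2 : (M.updateRow u (Pi.single u 1)).submatrix (emb1 u) (emb1 u)
      = M.submatrix (emb1 u) (emb1 u) := by
    ext a b
    simp [Matrix.updateRow_ne a.prop, emb1]
  rw [h1, h2]

end G4

noncomputable section G5
variable {R : Type*} [CommRing R] {V : Type*} [Fintype V] [DecidableEq V]

lemma det_add_two (M : Matrix V V R) (u v : V) (huv : u ≠ v) (c d : R) :
    (M + c • Matrix.single u u 1 + d • Matrix.single v v 1).det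
      = M.det + c * (M.submatrix (emb1 u) (emb1 u)).det
        + d * (M.submatrix (emb1 v) (emb1 v)).det
        + c * d * (M.submatrix (emb2 u v) (emb2 u v)).det := by
  classical
  have hre : M + c • Matrix.single u u 1 + d • Matrix.single v v 1
      = (M + d • Matrix.single v v 1) + c • Matrix.single u u 1 := by
    abel
  rw [hre, det_add_single, det_add_single]
  have hvu : (⟨v, Ne.symm huv⟩ : {a : V // a ≠ u}) = ⟨v, Ne.symm huv⟩ := rfl
  have hsub : (M + d • Matrix.single v v 1).submatrix (emb1 u) (emb1 u)
      = M.submatrix (emb1 u) (emb1 u)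
        + d • Matrix.single (⟨v, Ne.symm huv⟩ : {a : V // a ≠ u})
            (⟨v, Ne.symm huv⟩ : {a : V // a ≠ u}) 1 := by
    ext a b
    simp only [Matrix.submatrix_apply, Matrix.add_apply, Matrix.smul_apply,
      Matrix.single, Matrix.of_apply, smul_eq_mul, emb1]
    congr 1
    have : (v = (a : V) ∧ v = (b : V)) ↔
        ((⟨v, Ne.symm huv⟩ : {a : V // a ≠ u}) = a ∧ (⟨v, Ne.symm huv⟩ : {a : V // a ≠ u}) = b) := by
      constructor
      · rintro ⟨h1, h2⟩; exact ⟨Subtype.ext h1, Subtype.ext h2⟩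
      · rintro ⟨h1, h2⟩; exact ⟨congrArg Subtype.val h1, congrArg Subtype.val h2⟩
    by_cases hc : v = (a : V) ∧ v = (b : V)
    · rw [if_pos hc, if_pos (this.mp hc)]
    · rw [if_neg hc, if_neg (fun hc' => hc (this.mpr hc'))]
  rw [hsub, det_add_single]
  have hdd : ((M.submatrix (emb1 u) (emb1 u)).submatrix
        (emb1 (⟨v, Ne.symm huv⟩ : {a : V // a ≠ u})) (emb1 ⟨v, Ne.symm huv⟩)).det
      = (M.submatrix (emb2 u v) (emb2 u v)).det := by
    rw [Matrix.submatrix_submatrix]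
    let e : {b : {a : V // a ≠ u} // b ≠ ⟨v, Ne.symm huv⟩} ≃ ↥{a : V | a ≠ u ∧ a ≠ v} :=
      { toFun := fun b => ⟨b.val.val, ⟨b.val.prop, fun h => b.prop (Subtype.ext h)⟩⟩
        invFun := fun a => ⟨⟨a.val, a.prop.1⟩, fun h => a.prop.2 (congrArg Subtype.val h)⟩
        left_inv := fun b => rfl
        right_inv := fun a => rfl }
    have : M.submatrix (emb1 u ∘ emb1 (⟨v, Ne.symm huv⟩ : {a : V // a ≠ u}))
          (emb1 u ∘ emb1 ⟨v, Ne.symm huv⟩)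
        = (M.submatrix (emb2 u v) (emb2 u v)).submatrix e e := by
      ext a b; rfl
    rw [this, Matrix.det_submatrix_equiv_self]
  rw [hdd]
  ring
end G5

abbrev KK : Type := FractionRing (Polynomial ℝ)

def phiP : Polynomial ℝ →+* KK := algebraMap _ _

lemma phiP_inj : Function.Injective phiP := IsFractionRing.injective _ _

def xiK : KK := phiP Polynomial.X

lemma hT0 : xiK + 1 ≠ 0 := by
  have : xiK + 1 = phiP (Polynomial.X + 1) := by simp [xiK]
  rw [this]
  intro h
  have := phiP_inj (h.trans (map_zero phiP).symm)
  have h1 := congrArg (fun p => Polynomial.coeff p 1) this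
  simp [Polynomial.coeff_one] at h1

lemma hTn (n : ℕ) : xiK + 1 - (n : KK) ≠ 0 := by
  have : xiK + 1 - (n : KK) = phiP (Polynomial.X + 1 - (n : Polynomial ℝ)) := by
    simp [xiK]
  rw [this]
  intro h
  have := phiP_inj (h.trans (map_zero phiP).symm)
  have h1 := congrArg (fun p => Polynomial.coeff p 1) this
  simp [Polynomial.coeff_one, Polynomial.coeff_natCast_ite] at h1


section Master
variable {V : Type*} [Fintype V] [DecidableEq V]

set_option maxHeartbeats 2000000 in
lemma master (G : SimpleGraph V) (u v : V) (huv : u ≠ v) (n m : ℕ) :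
    (xiK + 1)^2 * phiP (charP (pcl G u v (n+1) (m+1))) =
      (xiK + 1)^n * (xiK + 1)^m *
      ( (xiK + 1 - (n:KK)) * (xiK + 1 - (m:KK)) * phiP (charP G)
        - (n:KK) * (xiK + 1 - (m:KK)) * phiP (charP (del G u))
        - (m:KK) * (xiK + 1 - (n:KK)) * phiP (charP (del G v))
        + (n:KK) * (m:KK) * phiP (charP (del2 G u v)) ) := by
  classical
  set A : Matrix V V KK := (Matrix.charmatrix (adjM G)).map phiP with hA
  set B : Matrix V (Fin n ⊕ Fin m) KK :=
    Matrix.of (fun a j => Sum.elim (fun _ : Fin n => if a = u then (-1:KK) else 0)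
      (fun _ : Fin m => if a = v then (-1:KK) else 0) j) with hB
  set Cm : Matrix (Fin n ⊕ Fin m) V KK :=
    Matrix.of (fun j a => Sum.elim (fun _ : Fin n => if a = u then (-1:KK) else 0)
      (fun _ : Fin m => if a = v then (-1:KK) else 0) j) with hC
  set D : Matrix (Fin n ⊕ Fin m) (Fin n ⊕ Fin m) KK :=
    Matrix.fromBlocks (cliqueMat n xiK) 0 0 (cliqueMat m xiK) with hD
  have hblock : (Matrix.charmatrix (adjM (pcl G u v (n+1) (m+1)))).map phiP
      = Matrix.fromBlocks A B Cm D := by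
    ext i j
    rcases i with a | i | i <;> rcases j with b | j | j
    · have e1 : adjM (pcl G u v (n+1) (m+1)) (Sum.inl a) (Sum.inl b) = adjM G a b := rfl
      have key : (Matrix.charmatrix (adjM (pcl G u v (n+1) (m+1)))) (Sum.inl a) (Sum.inl b)
          = (Matrix.charmatrix (adjM G)) a b := by
        by_cases hab : a = b
        · subst hab
          rw [Matrix.charmatrix_apply_eq, Matrix.charmatrix_apply_eq, e1]
        · rw [Matrix.charmatrix_apply_ne _ _ _ (by simpa using hab),
            Matrix.charmatrix_apply_ne _ _ _ hab, e1]
      simp [key, hA]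
    · have e2 : adjM (pcl G u v (n+1) (m+1)) (Sum.inl a) (Sum.inr (Sum.inl j))
          = if a = u then 1 else 0 := by
        by_cases hx : a = u
        · rw [hx]
          have hadj : (pcl G u v (n+1) (m+1)).Adj (Sum.inl u) (Sum.inr (Sum.inl j)) := rfl
          simp [adjM, hadj]
        · have hadj : ¬ (pcl G u v (n+1) (m+1)).Adj (Sum.inl a) (Sum.inr (Sum.inl j)) := hx
          simp [adjM, hadj, hx]
      rw [Matrix.map_apply, Matrix.charmatrix_apply_ne _ _ _ (by simp), e2]
      by_cases ha : a = u <;> simp [hB, ha]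
    · have e2 : adjM (pcl G u v (n+1) (m+1)) (Sum.inl a) (Sum.inr (Sum.inr j))
          = if a = v then 1 else 0 := by
        by_cases hx : a = v
        · rw [hx]
          have hadj : (pcl G u v (n+1) (m+1)).Adj (Sum.inl v) (Sum.inr (Sum.inr j)) := rfl
          simp [adjM, hadj]
        · have hadj : ¬ (pcl G u v (n+1) (m+1)).Adj (Sum.inl a) (Sum.inr (Sum.inr j)) := hx
          simp [adjM, hadj, hx]
      rw [Matrix.map_apply, Matrix.charmatrix_apply_ne _ _ _ (by simp), e2]
      by_cases ha : a = v <;> simp [hB, ha]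
    · have e2 : adjM (pcl G u v (n+1) (m+1)) (Sum.inr (Sum.inl i)) (Sum.inl b)
          = if b = u then 1 else 0 := by
        by_cases hx : b = u
        · rw [hx]
          have hadj : (pcl G u v (n+1) (m+1)).Adj (Sum.inr (Sum.inl i)) (Sum.inl u) := rfl
          simp [adjM, hadj]
        · have hadj : ¬ (pcl G u v (n+1) (m+1)).Adj (Sum.inr (Sum.inl i)) (Sum.inl b) := hx
          simp [adjM, hadj, hx]
      rw [Matrix.map_apply, Matrix.charmatrix_apply_ne _ _ _ (by simp), e2]
      by_cases hb : b = u <;> simp [hC, hb]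
    · have e2 : adjM (pcl G u v (n+1) (m+1)) (Sum.inr (Sum.inl i)) (Sum.inr (Sum.inl j))
          = if i = j then 0 else 1 := by
        by_cases hij : i = j
        · subst hij
          have : ¬ (pcl G u v (n+1) (m+1)).Adj (Sum.inr (Sum.inl i)) (Sum.inr (Sum.inl i)) :=
            SimpleGraph.irrefl _
          simp [adjM, this]
        · have : (pcl G u v (n+1) (m+1)).Adj (Sum.inr (Sum.inl i)) (Sum.inr (Sum.inl j)) := hij
          simp [adjM, this, hij]
      by_cases hij : i = j
      · subst hij
        rw [Matrix.map_apply, Matrix.charmatrix_apply_eq, e2]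
        simp [hD, cliqueMat, xiK]
      · rw [Matrix.map_apply, Matrix.charmatrix_apply_ne _ _ _ (by simp [hij]), e2]
        simp [hD, cliqueMat, hij]
    · have e2 : adjM (pcl G u v (n+1) (m+1)) (Sum.inr (Sum.inl i)) (Sum.inr (Sum.inr j))
          = 0 := by
        have : ¬ (pcl G u v (n+1) (m+1)).Adj (Sum.inr (Sum.inl i)) (Sum.inr (Sum.inr j)) :=
          fun h => h
        simp [adjM, this]
      rw [Matrix.map_apply, Matrix.charmatrix_apply_ne _ _ _ (by simp), e2]
      simp [hD]
    · have e2 : adjM (pcl G u v (n+1) (m+1)) (Sum.inr (Sum.inr i)) (Sum.inl b)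
          = if b = v then 1 else 0 := by
        by_cases hx : b = v
        · rw [hx]
          have hadj : (pcl G u v (n+1) (m+1)).Adj (Sum.inr (Sum.inr i)) (Sum.inl v) := rfl
          simp [adjM, hadj]
        · have hadj : ¬ (pcl G u v (n+1) (m+1)).Adj (Sum.inr (Sum.inr i)) (Sum.inl b) := hx
          simp [adjM, hadj, hx]
      rw [Matrix.map_apply, Matrix.charmatrix_apply_ne _ _ _ (by simp), e2]
      by_cases hb : b = v <;> simp [hC, hb]
    · have e2 : adjM (pcl G u v (n+1) (m+1)) (Sum.inr (Sum.inr i)) (Sum.inr (Sum.inl j))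
          = 0 := by
        have : ¬ (pcl G u v (n+1) (m+1)).Adj (Sum.inr (Sum.inr i)) (Sum.inr (Sum.inl j)) :=
          fun h => h
        simp [adjM, this]
      rw [Matrix.map_apply, Matrix.charmatrix_apply_ne _ _ _ (by simp), e2]
      simp [hD]
    · have e2 : adjM (pcl G u v (n+1) (m+1)) (Sum.inr (Sum.inr i)) (Sum.inr (Sum.inr j))
          = if i = j then 0 else 1 := by
        by_cases hij : i = j
        · subst hij
          have : ¬ (pcl G u v (n+1) (m+1)).Adj (Sum.inr (Sum.inr i)) (Sum.inr (Sum.inr i)) :=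
            SimpleGraph.irrefl _
          simp [adjM, this]
        · have : (pcl G u v (n+1) (m+1)).Adj (Sum.inr (Sum.inr i)) (Sum.inr (Sum.inr j)) := hij
          simp [adjM, this, hij]
      by_cases hij : i = j
      · subst hij
        rw [Matrix.map_apply, Matrix.charmatrix_apply_eq, e2]
        simp [hD, cliqueMat, xiK]
      · rw [Matrix.map_apply, Matrix.charmatrix_apply_ne _ _ _ (by simp [hij]), e2]
        simp [hD, cliqueMat, hij]
  letI instD : Invertible D :=
    ⟨Matrix.fromBlocks (cliqueInv n xiK) 0 0 (cliqueInv m xiK),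
     by
      rw [hD, Matrix.fromBlocks_multiply]
      simp [cliqueInv_mul n xiK hT0 (hTn n), cliqueInv_mul m xiK hT0 (hTn m)],
     by
      rw [hD, Matrix.fromBlocks_multiply]
      simp [cliqueMat_mul_inv n xiK hT0 (hTn n), cliqueMat_mul_inv m xiK hT0 (hTn m)]⟩
  have hi : ⅟D = Matrix.fromBlocks (cliqueInv n xiK) 0 0 (cliqueInv m xiK) := rfl
  have hdet : phiP (charP (pcl G u v (n+1) (m+1))) = D.det * (A - B * ⅟D * Cm).det := by
    have h0 : charP (pcl G u v (n+1) (m+1))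
        = (Matrix.charmatrix (adjM (pcl G u v (n+1) (m+1)))).det := rfl
    rw [h0, RingHom.map_det, RingHom.mapMatrix_apply, hblock, Matrix.det_fromBlocks₂₂]
  have hBD : B * ⅟D = Matrix.of (fun p j => Sum.elim
      (fun _ : Fin n => (if p = u then (-1:KK) else 0) *
        ((xiK+1)⁻¹ + (n:KK) * ((xiK+1)⁻¹ * (xiK+1-(n:KK))⁻¹)))
      (fun _ : Fin m => (if p = v then (-1:KK) else 0) *
        ((xiK+1)⁻¹ + (m:KK) * ((xiK+1)⁻¹ * (xiK+1-(m:KK))⁻¹))) j) := by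
    rw [hi]
    ext p j
    rcases j with j | j
    · rw [Matrix.mul_apply, Fintype.sum_sum_type]
      simp only [hB, Matrix.of_apply, Sum.elim_inl, Sum.elim_inr,
        Matrix.fromBlocks_apply₁₁, Matrix.fromBlocks_apply₂₁, Matrix.zero_apply,
        mul_zero, Finset.sum_const_zero, add_zero, cliqueInv]
      rw [← Finset.mul_sum]
      congr 1
      rw [Finset.sum_add_distrib]
      simp [Finset.sum_ite_eq', Finset.sum_const, Finset.card_univ, nsmul_eq_mul]
    · rw [Matrix.mul_apply, Fintype.sum_sum_type]
      simp only [hB, Matrix.of_apply, Sum.elim_inl, Sum.elim_inr,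
        Matrix.fromBlocks_apply₁₂, Matrix.fromBlocks_apply₂₂, Matrix.zero_apply,
        mul_zero, Finset.sum_const_zero, zero_add, cliqueInv]
      rw [← Finset.mul_sum]
      congr 1
      rw [Finset.sum_add_distrib]
      simp [Finset.sum_ite_eq', Finset.sum_const, Finset.card_univ, nsmul_eq_mul]
  have hpq : ∀ (p q w : V) (c : KK),
      (if p = w then (-1:KK) else 0) * c * (if q = w then -1 else 0)
        = c * (if w = p ∧ w = q then 1 else 0) := by
    intro p q w c
    by_cases h1 : p = w
    · by_cases h2 : q = w
      · subst h1; subst h2; simp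
      · have h2' : ¬ (w = q) := fun h => h2 h.symm
        simp [h1, h2, h2']
    · have h1' : ¬ (w = p) := fun h => h1 h.symm
      simp [h1, h1']
  have hBDC : B * ⅟D * Cm =
      ((n:KK) * ((xiK+1)⁻¹ + (n:KK) * ((xiK+1)⁻¹ * (xiK+1-(n:KK))⁻¹)))
        • Matrix.single u u 1
      + ((m:KK) * ((xiK+1)⁻¹ + (m:KK) * ((xiK+1)⁻¹ * (xiK+1-(m:KK))⁻¹)))
        • Matrix.single v v 1 := by
    rw [hBD]
    ext p q
    rw [Matrix.mul_apply, Fintype.sum_sum_type]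
    simp only [Matrix.of_apply, Sum.elim_inl, Sum.elim_inr, hC,
      Finset.sum_const, Finset.card_univ, Fintype.card_fin, nsmul_eq_mul,
      Matrix.add_apply, Matrix.smul_apply, Matrix.single, smul_eq_mul,
      hpq]
    ring
  have hsplit : A - B * ⅟D * Cm = A
      + (-((n:KK) * ((xiK+1)⁻¹ + (n:KK) * ((xiK+1)⁻¹ * (xiK+1-(n:KK))⁻¹))))
          • Matrix.single u u 1
      + (-((m:KK) * ((xiK+1)⁻¹ + (m:KK) * ((xiK+1)⁻¹ * (xiK+1-(m:KK))⁻¹))))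
          • Matrix.single v v 1 := by
    rw [hBDC]
    ext p q
    simp only [Matrix.sub_apply, Matrix.add_apply, Matrix.smul_apply, smul_eq_mul,
      neg_mul]
    ring
  have hAG : A.det = phiP (charP G) := by
    rw [hA, ← RingHom.mapMatrix_apply, ← RingHom.map_det]; rfl
  have hApU : (A.submatrix (emb1 u) (emb1 u)).det = phiP (charP (del G u)) := by
    have h1 : A.submatrix (emb1 u) (emb1 u) = (Matrix.charmatrix (adjM (del G u))).map phiP := by
      rw [hA]
      ext a b
      by_cases hab : a = b
      · subst hab
        simp only [Matrix.submatrix_apply, Matrix.map_apply]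
        rw [Matrix.charmatrix_apply_eq, Matrix.charmatrix_apply_eq]
        rfl
      · have hab' : emb1 u a ≠ emb1 u b := fun h => hab (Subtype.ext h)
        simp only [Matrix.submatrix_apply, Matrix.map_apply]
        rw [Matrix.charmatrix_apply_ne _ _ _ hab', Matrix.charmatrix_apply_ne _ _ _ hab]
        rfl
    rw [h1, ← RingHom.mapMatrix_apply, ← RingHom.map_det]
    rfl
  have hApV : (A.submatrix (emb1 v) (emb1 v)).det = phiP (charP (del G v)) := by
    have h1 : A.submatrix (emb1 v) (emb1 v) = (Matrix.charmatrix (adjM (del G v))).map phiP := by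
      rw [hA]
      ext a b
      by_cases hab : a = b
      · subst hab
        simp only [Matrix.submatrix_apply, Matrix.map_apply]
        rw [Matrix.charmatrix_apply_eq, Matrix.charmatrix_apply_eq]
        rfl
      · have hab' : emb1 v a ≠ emb1 v b := fun h => hab (Subtype.ext h)
        simp only [Matrix.submatrix_apply, Matrix.map_apply]
        rw [Matrix.charmatrix_apply_ne _ _ _ hab', Matrix.charmatrix_apply_ne _ _ _ hab]
        rfl
    rw [h1, ← RingHom.mapMatrix_apply, ← RingHom.map_det]
    rfl
  have hApUV : (A.submatrix (emb2 u v) (emb2 u v)).det = phiP (charP (del2 G u v)) := by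
    have h1 : A.submatrix (emb2 u v) (emb2 u v)
        = (Matrix.charmatrix (adjM (del2 G u v))).map phiP := by
      rw [hA]
      ext a b
      by_cases hab : a = b
      · subst hab
        simp only [Matrix.submatrix_apply, Matrix.map_apply]
        rw [Matrix.charmatrix_apply_eq, Matrix.charmatrix_apply_eq]
        rfl
      · have hab' : emb2 u v a ≠ emb2 u v b := fun h => hab (Subtype.ext h)
        simp only [Matrix.submatrix_apply, Matrix.map_apply]
        rw [Matrix.charmatrix_apply_ne _ _ _ hab', Matrix.charmatrix_apply_ne _ _ _ hab]
        rfl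
    rw [h1, ← RingHom.mapMatrix_apply, ← RingHom.map_det]
    rfl
  have hdetD : D.det = (cliqueMat n xiK).det * (cliqueMat m xiK).det := by
    rw [hD]; exact Matrix.det_fromBlocks_zero₂₁ _ _ _
  have e1 : (cliqueMat n xiK).det = (xiK+1)⁻¹ * ((xiK+1)^n * (xiK+1-(n:KK))) := by
    rw [← det_cliqueMat n xiK hT0, inv_mul_cancel_left₀ hT0]
  have e2 : (cliqueMat m xiK).det = (xiK+1)⁻¹ * ((xiK+1)^m * (xiK+1-(m:KK))) := by
    rw [← det_cliqueMat m xiK hT0, inv_mul_cancel_left₀ hT0]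
  rw [hdet, hsplit, det_add_two A u v huv, hAG, hApU, hApV, hApUV, hdetD, e1, e2]
  have hn := hTn n
  have hm := hTn m
  field_simp [hT0, hn, hm]
  ring
end Master
end AuxPCI

/-- The pendant-clique polynomial identity:
`P_{G(r+1,s-1)} - P_{G(r,s)} = (x+1)^(r+s-4) * ((s-r-1)(P_G + P_{G-u} + P_{G-v} + P_{G-{u,v}}) + (x+1)(P_{G-v} - P_{G-u}))`. -/
theorem pendant_clique_identity {V : Type*} [Fintype V] [DecidableEq V]
    (G : SimpleGraph V) (u v : V) (huv : u ≠ v) (r s : ℕ)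
    (hr : 2 ≤ r) (hs : 2 ≤ s) :
    charP (pcl G u v (r + 1) (s - 1)) - charP (pcl G u v r s) =
      (X + 1) ^ (r + s - 4) *
        (C ((s : ℝ) - (r : ℝ) - 1) *
            (charP G + charP (del G u) + charP (del G v) + charP (del2 G u v)) +
          (X + 1) * (charP (del G v) - charP (del G u))) := by
  obtain ⟨n, rfl⟩ : ∃ n, r = n + 2 := ⟨r - 2, by omega⟩
  obtain ⟨m, rfl⟩ : ∃ m, s = m + 2 := ⟨s - 2, by omega⟩
  apply phiP_inj
  apply mul_left_cancel₀ (pow_ne_zero 2 hT0)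
  rw [map_sub, mul_sub,
    show charP (pcl G u v (n + 2 + 1) (m + 2 - 1)) = charP (pcl G u v (n + 2 + 1) (m + 1))
      from rfl,
    show charP (pcl G u v (n + 2) (m + 2)) = charP (pcl G u v (n + 1 + 1) (m + 1 + 1))
      from rfl,
    master G u v huv (n + 2) m, master G u v huv (n + 1) (m + 1)]
  have hexp : n + 2 + (m + 2) - 4 = n + m := by omega
  rw [hexp]
  have hCeq : (C ((↑(m+2):ℝ) - ↑(n+2) - 1) : Polynomial ℝ)
      = ((m : Polynomial ℝ) + 2) - ((n : Polynomial ℝ) + 2) - 1 := by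
    push_cast
    simp only [_root_.map_add, _root_.map_sub, _root_.map_neg, _root_.map_one,
      Polynomial.C_eq_natCast]
    norm_num
  rw [hCeq]
  simp only [_root_.map_mul, _root_.map_pow, _root_.map_add, _root_.map_sub,
    _root_.map_one, Polynomial.coe_mapRingHom, map_natCast, map_ofNat]
  have hX : phiP X = xiK := rfl
  rw [hX]
  push_cast
  ring
end
end

section
/- The characteristic polynomial of the path-block P₃^q (three complete blocks K_{q+1} glued in a path: consecutive blocks share one vertex) equals (x+1)^{3q−4}·((x−q)(x+2)+1)·((x−q)·((x−q)(x+2)+1) − 2q). -/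
open scoped Classical
open Polynomial

noncomputable section

/-- The `(q,b)`-path-block: `b` copies of `K_{q+1}` arranged in a path, consecutive
blocks sharing exactly one vertex. Block `k` (for `k < b`) consists of the vertices
in the interval `[k*q, (k+1)*q]` of `Fin (b*q+1)`. -/
def pathBlock (q b : ℕ) : SimpleGraph (Fin (b * q + 1)) where
  Adj i j := i ≠ j ∧ ∃ k < b, k * q ≤ (i : ℕ) ∧ (i : ℕ) ≤ (k + 1) * q ∧
      k * q ≤ (j : ℕ) ∧ (j : ℕ) ≤ (k + 1) * q
  symm := ⟨by
    rintro i j ⟨hne, k, hk, h1, h2, h3, h4⟩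
    exact ⟨hne.symm, k, hk, h3, h4, h1, h2⟩⟩
  loopless := ⟨fun i h => h.1 rfl⟩

/-! ### Auxiliary material for the main theorem -/

set_option synthInstance.maxHeartbeats 1000000
set_option maxHeartbeats 4000000

section AuxDet

lemma PB3.det_smul_one_add_mul {K : Type*} [Field K] {n m : Type*} [Fintype n] [Fintype m]
    [DecidableEq n] [DecidableEq m] {c : K} (hc : c ≠ 0)
    (U : Matrix n m K) (V : Matrix m n K) :
    c ^ (Fintype.card m) * (c • 1 + U * V).det = c ^ (Fintype.card n) * (c • 1 + V * U).det := by
  have h1 : c • (1 : Matrix n n K) + U * V = c • (1 + U * (c⁻¹ • V)) := by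
    rw [smul_add, Matrix.mul_smul, smul_smul, mul_inv_cancel₀ hc, one_smul]
  have h2 : c • (1 : Matrix m m K) + V * U = c • (1 + (c⁻¹ • V) * U) := by
    rw [smul_add, Matrix.smul_mul, smul_smul, mul_inv_cancel₀ hc, one_smul]
  rw [h1, h2, Matrix.det_smul, Matrix.det_smul, Matrix.det_one_add_mul_comm]
  ring

lemma PB3.det_fin_four {R : Type*} [CommRing R] (A : Matrix (Fin 4) (Fin 4) R) :
    A.det = A 0 0 * (A.submatrix Fin.succ (Fin.succAbove 0)).det
      - A 0 1 * (A.submatrix Fin.succ (Fin.succAbove 1)).det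
      + A 0 2 * (A.submatrix Fin.succ (Fin.succAbove 2)).det
      - A 0 3 * (A.submatrix Fin.succ (Fin.succAbove 3)).det := by
  rw [Matrix.det_succ_row_zero, Fin.sum_univ_four]
  norm_num [Fin.succAbove, show ((3:Fin 4):ℕ) = 3 from rfl]
  ring

lemma PB3.det_fin_four' {R : Type*} [CommRing R] (A : Matrix (Fin 4) (Fin 4) R) :
    A.det = A 0 0 * (!![A 1 1, A 1 2, A 1 3; A 2 1, A 2 2, A 2 3; A 3 1, A 3 2, A 3 3]).det
      - A 0 1 * (!![A 1 0, A 1 2, A 1 3; A 2 0, A 2 2, A 2 3; A 3 0, A 3 2, A 3 3]).det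
      + A 0 2 * (!![A 1 0, A 1 1, A 1 3; A 2 0, A 2 1, A 2 3; A 3 0, A 3 1, A 3 3]).det
      - A 0 3 * (!![A 1 0, A 1 1, A 1 2; A 2 0, A 2 1, A 2 2; A 3 0, A 3 1, A 3 2]).det := by
  rw [PB3.det_fin_four]
  have h0 : A.submatrix Fin.succ (Fin.succAbove 0) =
      !![A 1 1, A 1 2, A 1 3; A 2 1, A 2 2, A 2 3; A 3 1, A 3 2, A 3 3] := by
    ext i j; fin_cases i <;> fin_cases j <;> rfl
  have h1 : A.submatrix Fin.succ (Fin.succAbove 1) =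
      !![A 1 0, A 1 2, A 1 3; A 2 0, A 2 2, A 2 3; A 3 0, A 3 2, A 3 3] := by
    ext i j; fin_cases i <;> fin_cases j <;> rfl
  have h2 : A.submatrix Fin.succ (Fin.succAbove 2) =
      !![A 1 0, A 1 1, A 1 3; A 2 0, A 2 1, A 2 3; A 3 0, A 3 1, A 3 3] := by
    ext i j; fin_cases i <;> fin_cases j <;> rfl
  have h3 : A.submatrix Fin.succ (Fin.succAbove 3) =
      !![A 1 0, A 1 1, A 1 2; A 2 0, A 2 1, A 2 2; A 3 0, A 3 1, A 3 2] := by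
    ext i j; fin_cases i <;> fin_cases j <;> rfl
  rw [h0, h1, h2, h3]

lemma PB3.det_fin_five {R : Type*} [CommRing R] (A : Matrix (Fin 5) (Fin 5) R) :
    A.det = A 0 0 * (A.submatrix Fin.succ (Fin.succAbove 0)).det
      - A 0 1 * (A.submatrix Fin.succ (Fin.succAbove 1)).det
      + A 0 2 * (A.submatrix Fin.succ (Fin.succAbove 2)).det
      - A 0 3 * (A.submatrix Fin.succ (Fin.succAbove 3)).det
      + A 0 4 * (A.submatrix Fin.succ (Fin.succAbove 4)).det := by
  rw [Matrix.det_succ_row_zero, Fin.sum_univ_five]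
  norm_num [Fin.succAbove, show ((3:Fin 5):ℕ) = 3 from rfl, show ((4:Fin 5):ℕ) = 4 from rfl]
  ring

lemma PB3.det_fin_five' {R : Type*} [CommRing R] (A : Matrix (Fin 5) (Fin 5) R) :
    A.det = A 0 0 * (!![A 1 1, A 1 2, A 1 3, A 1 4; A 2 1, A 2 2, A 2 3, A 2 4;
                        A 3 1, A 3 2, A 3 3, A 3 4; A 4 1, A 4 2, A 4 3, A 4 4]).det
      - A 0 1 * (!![A 1 0, A 1 2, A 1 3, A 1 4; A 2 0, A 2 2, A 2 3, A 2 4;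
                    A 3 0, A 3 2, A 3 3, A 3 4; A 4 0, A 4 2, A 4 3, A 4 4]).det
      + A 0 2 * (!![A 1 0, A 1 1, A 1 3, A 1 4; A 2 0, A 2 1, A 2 3, A 2 4;
                    A 3 0, A 3 1, A 3 3, A 3 4; A 4 0, A 4 1, A 4 3, A 4 4]).det
      - A 0 3 * (!![A 1 0, A 1 1, A 1 2, A 1 4; A 2 0, A 2 1, A 2 2, A 2 4;
                    A 3 0, A 3 1, A 3 2, A 3 4; A 4 0, A 4 1, A 4 2, A 4 4]).det
      + A 0 4 * (!![A 1 0, A 1 1, A 1 2, A 1 3; A 2 0, A 2 1, A 2 2, A 2 3;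
                    A 3 0, A 3 1, A 3 2, A 3 3; A 4 0, A 4 1, A 4 2, A 4 3]).det := by
  rw [PB3.det_fin_five]
  have h0 : A.submatrix Fin.succ (Fin.succAbove 0) =
      !![A 1 1, A 1 2, A 1 3, A 1 4; A 2 1, A 2 2, A 2 3, A 2 4;
         A 3 1, A 3 2, A 3 3, A 3 4; A 4 1, A 4 2, A 4 3, A 4 4] := by
    ext i j; fin_cases i <;> fin_cases j <;> rfl
  have h1 : A.submatrix Fin.succ (Fin.succAbove 1) =
      !![A 1 0, A 1 2, A 1 3, A 1 4; A 2 0, A 2 2, A 2 3, A 2 4;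
         A 3 0, A 3 2, A 3 3, A 3 4; A 4 0, A 4 2, A 4 3, A 4 4] := by
    ext i j; fin_cases i <;> fin_cases j <;> rfl
  have h2 : A.submatrix Fin.succ (Fin.succAbove 2) =
      !![A 1 0, A 1 1, A 1 3, A 1 4; A 2 0, A 2 1, A 2 3, A 2 4;
         A 3 0, A 3 1, A 3 3, A 3 4; A 4 0, A 4 1, A 4 3, A 4 4] := by
    ext i j; fin_cases i <;> fin_cases j <;> rfl
  have h3 : A.submatrix Fin.succ (Fin.succAbove 3) =
      !![A 1 0, A 1 1, A 1 2, A 1 4; A 2 0, A 2 1, A 2 2, A 2 4;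
         A 3 0, A 3 1, A 3 2, A 3 4; A 4 0, A 4 1, A 4 2, A 4 4] := by
    ext i j; fin_cases i <;> fin_cases j <;> rfl
  have h4 : A.submatrix Fin.succ (Fin.succAbove 4) =
      !![A 1 0, A 1 1, A 1 2, A 1 3; A 2 0, A 2 1, A 2 2, A 2 3;
         A 3 0, A 3 1, A 3 2, A 3 3; A 4 0, A 4 1, A 4 2, A 4 3] := by
    ext i j; fin_cases i <;> fin_cases j <;> rfl
  rw [h0, h1, h2, h3, h4]

lemma PB3.det5 {K : Type*} [Field K] (c Q : K) :
    (!![c - (Q+1), -1, 0, 1, 0;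
        -1, c - (Q+1), -1, 1, 1;
        0, -1, c - (Q+1), 0, 1;
        -1, -1, 0, c + 1, 0;
        0, -1, -1, 0, c + 1] : Matrix (Fin 5) (Fin 5) K).det
    = ((c - 1 - Q)*(c - 1 + 2) + 1) * ((c - 1 - Q)*((c - 1 - Q)*(c - 1 + 2)+1) - 2*Q) := by
  rw [PB3.det_fin_five']
  simp only [Matrix.cons_val', Matrix.cons_val_zero, Matrix.cons_val_one, Matrix.head_cons,
    Matrix.cons_val_two, Matrix.tail_cons, Matrix.cons_val_three, Matrix.cons_val_four,
    Matrix.empty_val', Matrix.cons_val_fin_one, Matrix.head_fin_const, Matrix.of_apply]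
  rw [PB3.det_fin_four', PB3.det_fin_four', PB3.det_fin_four', PB3.det_fin_four',
    PB3.det_fin_four']
  simp only [Matrix.cons_val', Matrix.cons_val_zero, Matrix.cons_val_one, Matrix.head_cons,
    Matrix.cons_val_two, Matrix.tail_cons, Matrix.cons_val_three,
    Matrix.empty_val', Matrix.cons_val_fin_one, Matrix.head_fin_const, Matrix.of_apply,
    Matrix.det_fin_three]
  ring

lemma PB3.sum_indicator_mul {K : Type*} [Field K] (N a₁ b₁ a₂ b₂ : ℕ)
    (h₁ : b₁ < N) (h₂ : b₂ < N) :
    (∑ i : Fin N, (if a₁ ≤ (i:ℕ) ∧ (i:ℕ) ≤ b₁ then (1:K) else 0) *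
      (if a₂ ≤ (i:ℕ) ∧ (i:ℕ) ≤ b₂ then (1:K) else 0)) =
      ((min b₁ b₂ + 1 - max a₁ a₂ : ℕ) : K) := by
  have key : ∀ m : ℕ, (if a₁ ≤ m ∧ m ≤ b₁ then (1:K) else 0) *
      (if a₂ ≤ m ∧ m ≤ b₂ then (1:K) else 0)
      = if (a₁ ≤ m ∧ m ≤ b₁) ∧ (a₂ ≤ m ∧ m ≤ b₂) then 1 else 0 := by
    intro m; split_ifs <;> simp_all
  simp_rw [key]
  rw [Fin.sum_univ_eq_sum_range
    (fun m => if (a₁ ≤ m ∧ m ≤ b₁) ∧ (a₂ ≤ m ∧ m ≤ b₂) then (1:K) else 0)]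
  rw [Finset.sum_boole]
  have hfil : (Finset.range N).filter (fun m => (a₁ ≤ m ∧ m ≤ b₁) ∧ (a₂ ≤ m ∧ m ≤ b₂))
      = Finset.Icc (max a₁ a₂) (min b₁ b₂) := by
    ext m
    simp only [Finset.mem_filter, Finset.mem_range, Finset.mem_Icc]
    omega
  rw [hfil, Nat.card_Icc]

end AuxDet

lemma pathBlock_three_adj_iff (q : ℕ) (i j : Fin (3 * q + 1)) :
    (pathBlock q 3).Adj i j ↔ (i : ℕ) ≠ (j : ℕ) ∧
      (((i:ℕ) ≤ q ∧ (j:ℕ) ≤ q) ∨ (q ≤ (i:ℕ) ∧ (i:ℕ) ≤ 2*q ∧ q ≤ (j:ℕ) ∧ (j:ℕ) ≤ 2*q) ∨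
       (2*q ≤ (i:ℕ) ∧ 2*q ≤ (j:ℕ))) := by
  have hi3 : (i:ℕ) < 3*q+1 := i.isLt
  have hj3 : (j:ℕ) < 3*q+1 := j.isLt
  show (i ≠ j ∧ ∃ k < 3, k * q ≤ (i : ℕ) ∧ (i : ℕ) ≤ (k + 1) * q ∧
      k * q ≤ (j : ℕ) ∧ (j : ℕ) ≤ (k + 1) * q) ↔ _
  constructor
  · rintro ⟨hne, k, hk, h1, h2, h3, h4⟩
    refine ⟨fun h => hne (Fin.ext h), ?_⟩
    interval_cases k <;> omega
  · rintro ⟨hne, h⟩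
    refine ⟨fun h' => hne (by rw [h']), ?_⟩
    rcases h with h | h | h
    · exact ⟨0, by norm_num, by omega, by omega, by omega, by omega⟩
    · exact ⟨1, by norm_num, by omega, by omega, by omega, by omega⟩
    · exact ⟨2, by norm_num, by omega, by omega, by omega, by omega⟩

/-- Lower endpoints of the five indicator intervals. -/
def lo5 (q : ℕ) : Fin 5 → ℕ := ![0, q, 2*q, q, 2*q]
/-- Upper endpoints of the five indicator intervals. -/
def hi5 (q : ℕ) : Fin 5 → ℕ := ![q, 2*q, 3*q, q, 2*q]
/-- Signs of the five rank-one terms. -/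
def sg5 : Fin 5 → RatFunc ℝ := ![-1, -1, -1, 1, 1]
/-- Left factor of the rank-5 update. -/
def UM (q : ℕ) : Matrix (Fin (3*q+1)) (Fin 5) (RatFunc ℝ) :=
  fun i a => sg5 a * (if lo5 q a ≤ (i:ℕ) ∧ (i:ℕ) ≤ hi5 q a then 1 else 0)
/-- Right factor of the rank-5 update. -/
def VM (q : ℕ) : Matrix (Fin 5) (Fin (3*q+1)) (RatFunc ℝ) :=
  fun a i => if lo5 q a ≤ (i:ℕ) ∧ (i:ℕ) ≤ hi5 q a then 1 else 0

lemma charmatrix_map_eq (q : ℕ) (hq : 2 ≤ q) :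
    (Matrix.charmatrix (adjM (pathBlock q 3))).map (algebraMap (Polynomial ℝ) (RatFunc ℝ)) =
      (algebraMap (Polynomial ℝ) (RatFunc ℝ) (X + 1)) •
        (1 : Matrix (Fin (3*q+1)) (Fin (3*q+1)) (RatFunc ℝ)) + UM q * VM q := by
  ext i j
  have hi3 : (i:ℕ) < 3*q+1 := i.isLt
  have hj3 : (j:ℕ) < 3*q+1 := j.isLt
  rw [Matrix.map_apply, Matrix.add_apply, Matrix.smul_apply, Matrix.mul_apply, Fin.sum_univ_five]
  dsimp +instances only [UM, VM, sg5, lo5, hi5, Matrix.cons_val_zero, Matrix.cons_val_one, Matrix.head_cons,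
    Matrix.cons_val_two, Matrix.tail_cons, Matrix.cons_val_three, Matrix.cons_val_four]
  simp only [UM, VM, sg5, lo5, hi5, Matrix.cons_val_zero, Matrix.cons_val_one, Matrix.head_cons,
    Matrix.cons_val_two, Matrix.tail_cons, Matrix.cons_val_three, Matrix.cons_val_four]
  by_cases hij : i = j
  · subst hij
    rw [Matrix.charmatrix_apply_eq, Matrix.one_apply_eq]
    have hA : adjM (pathBlock q 3) i i = 0 := by simp [adjM]
    rw [hA]
    simp only [map_sub, map_add, map_one, Polynomial.C_0, map_zero, smul_eq_mul, mul_one, sub_zero]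
    split_ifs <;> first | (exfalso; omega) | ring1
  · rw [Matrix.charmatrix_apply_ne _ _ _ hij, Matrix.one_apply_ne hij]
    have hvij : (i:ℕ) ≠ (j:ℕ) := fun h => hij (Fin.ext h)
    have hA : adjM (pathBlock q 3) i j = if ((i:ℕ) ≠ (j:ℕ) ∧
        (((i:ℕ) ≤ q ∧ (j:ℕ) ≤ q) ∨ (q ≤ (i:ℕ) ∧ (i:ℕ) ≤ 2*q ∧ q ≤ (j:ℕ) ∧ (j:ℕ) ≤ 2*q) ∨
         (2*q ≤ (i:ℕ) ∧ 2*q ≤ (j:ℕ)))) then (1:ℝ) else 0 := by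
      simp only [adjM, pathBlock_three_adj_iff]
    rw [hA]
    simp only [apply_ite (fun r : ℝ => Polynomial.C r),
      apply_ite (algebraMap (Polynomial ℝ) (RatFunc ℝ)), map_one, map_zero, map_neg,
      Polynomial.C_1, Polynomial.C_0, smul_zero]
    split_ifs <;> first | (exfalso; omega) | ring1 | norm_num

lemma VM_mul_UM (q : ℕ) (hq : 2 ≤ q) :
    VM q * UM q = !![-((q:RatFunc ℝ)+1), -1, 0, 1, 0;
       -1, -((q:RatFunc ℝ)+1), -1, 1, 1;
       0, -1, -((q:RatFunc ℝ)+1), 0, 1;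
       -1, -1, 0, 1, 0;
       0, -1, -1, 0, 1] := by
  have hhi : ∀ x : Fin 5, hi5 q x < 3*q+1 := by
    intro x; fin_cases x <;> simp [hi5] <;> omega
  have base : ∀ a b, (VM q * UM q) a b = sg5 b *
      ((min (hi5 q a) (hi5 q b) + 1 - max (lo5 q a) (lo5 q b) : ℕ) : RatFunc ℝ) := by
    intro a b
    simp only [Matrix.mul_apply, UM, VM]
    calc (∑ i : Fin (3*q+1), (if lo5 q a ≤ (i:ℕ) ∧ (i:ℕ) ≤ hi5 q a then (1: RatFunc ℝ) else 0) *
            (sg5 b * if lo5 q b ≤ (i:ℕ) ∧ (i:ℕ) ≤ hi5 q b then 1 else 0))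
        = sg5 b * ∑ i : Fin (3*q+1),
            (if lo5 q a ≤ (i:ℕ) ∧ (i:ℕ) ≤ hi5 q a then (1: RatFunc ℝ) else 0) *
            (if lo5 q b ≤ (i:ℕ) ∧ (i:ℕ) ≤ hi5 q b then 1 else 0) := by
          rw [Finset.mul_sum]; exact Finset.sum_congr rfl fun i _ => by ring
      _ = _ := by rw [PB3.sum_indicator_mul _ _ _ _ _ (hhi a) (hhi b)]
  ext a b
  rw [base a b]
  fin_cases a <;> fin_cases b <;>
    simp [lo5, hi5, sg5] <;>
    (try simp only [Nat.min_def, Nat.max_def]) <;>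
    (try split_ifs) <;>
    first
      | (exfalso; omega)
      | (rw [show q + 1 - q = 1 from by omega]; norm_num [Matrix.vecHead, Matrix.vecTail])
      | (rw [show 2*q + 1 - 2*q = 1 from by omega]; norm_num [Matrix.vecHead, Matrix.vecTail])
      | (rw [show q + 1 - 2*q = 0 from by omega]; norm_num)
      | (rw [show 2*q + 1 - q = q + 1 from by omega]; push_cast; ring1)
      | (rw [show 3*q + 1 - 2*q = q + 1 from by omega]; push_cast; ring1)
      | ring1
      | (norm_num [Matrix.vecHead, Matrix.vecTail] <;> omega)

/-- The characteristic polynomial of the `(q,3)`-path-block `P₃^q` equals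
`(x+1)^(3q-4) * ((x-q)(x+2)+1) * ((x-q)((x-q)(x+2)+1) - 2q)`. -/
theorem charP_pathBlock_three (q : ℕ) (hq : 2 ≤ q) :
    charP (pathBlock q 3) =
      (X + 1) ^ (3 * q - 4) * ((X - C (q : ℝ)) * (X + 2) + 1) *
        ((X - C (q : ℝ)) * ((X - C (q : ℝ)) * (X + 2) + 1) - C (2 * (q : ℝ))) := by
  apply IsFractionRing.injective (Polynomial ℝ) (RatFunc ℝ)
  set φ := algebraMap (Polynomial ℝ) (RatFunc ℝ) with hφ
  have hc : φ (X + 1) ≠ 0 := by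
    intro h
    have := IsFractionRing.injective (Polynomial ℝ) (RatFunc ℝ) (by rw [h, map_zero] : φ (X+1) = φ 0)
    exact Polynomial.X_add_C_ne_zero (1:ℝ) (by simpa using this)
  -- Step 1: the characteristic polynomial as a determinant over `RatFunc ℝ`
  have h1 : φ (charP (pathBlock q 3)) =
      ((Matrix.charmatrix (adjM (pathBlock q 3))).map φ).det := by
    rw [show charP (pathBlock q 3) = (Matrix.charmatrix (adjM (pathBlock q 3))).det from rfl]
    rw [RingHom.map_det]
    rfl
  rw [h1, charmatrix_map_eq q hq]
  -- Step 2: Weinstein–Aronszajn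
  have hW := PB3.det_smul_one_add_mul hc (UM q) (VM q)
  rw [Fintype.card_fin, Fintype.card_fin] at hW
  have hpow : (φ (X+1)) ^ (3*q+1) = (φ (X+1)) ^ 5 * (φ (X+1)) ^ (3*q-4) := by
    rw [← pow_add]; congr 1; omega
  have h2 : ((φ (X+1)) • (1 : Matrix (Fin (3*q+1)) (Fin (3*q+1)) (RatFunc ℝ))
        + UM q * VM q).det
      = (φ (X+1)) ^ (3*q-4) *
        ((φ (X+1)) • (1 : Matrix (Fin 5) (Fin 5) (RatFunc ℝ)) + VM q * UM q).det := by
    apply mul_left_cancel₀ (pow_ne_zero 5 hc)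
    rw [hW, hpow]
    ring
  rw [h2, VM_mul_UM q hq]
  -- Step 3: the 5×5 determinant
  have h3 : (φ (X+1)) • (1 : Matrix (Fin 5) (Fin 5) (RatFunc ℝ)) +
      !![-((q:RatFunc ℝ)+1), -1, 0, 1, 0;
         -1, -((q:RatFunc ℝ)+1), -1, 1, 1;
         0, -1, -((q:RatFunc ℝ)+1), 0, 1;
         -1, -1, 0, 1, 0;
         0, -1, -1, 0, 1]
      = !![φ (X+1) - ((q:RatFunc ℝ)+1), -1, 0, 1, 0;
           -1, φ (X+1) - ((q:RatFunc ℝ)+1), -1, 1, 1;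
           0, -1, φ (X+1) - ((q:RatFunc ℝ)+1), 0, 1;
           -1, -1, 0, φ (X+1) + 1, 0;
           0, -1, -1, 0, φ (X+1) + 1] := by
    have hone : (1 : Matrix (Fin 5) (Fin 5) (RatFunc ℝ)) =
        !![1,0,0,0,0; 0,1,0,0,0; 0,0,1,0,0; 0,0,0,1,0; 0,0,0,0,1] := by
      ext a b; fin_cases a <;> fin_cases b <;> rfl
    rw [hone]
    ext a b
    fin_cases a <;> fin_cases b <;>
      simp [Matrix.vecHead, Matrix.vecTail] <;> ring
  rw [h3, PB3.det5 (φ (X+1)) ((q:RatFunc ℝ))]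
  -- Step 4: compare with the image of the right-hand side
  have hCq : φ (Polynomial.C ((q:ℝ))) = ((q : ℕ) : RatFunc ℝ) := by
    rw [Polynomial.C_eq_natCast, map_natCast]
  have hC2q : φ (Polynomial.C (2*(q:ℝ))) = ((2*q : ℕ) : RatFunc ℝ) := by
    rw [show (2*(q:ℝ)) = ((2*q : ℕ) : ℝ) from by push_cast; ring]
    rw [Polynomial.C_eq_natCast, map_natCast]
  simp only [map_mul, map_pow, map_add, map_sub, map_one, map_ofNat, hCq, hC2q]
  push_cast
  ring
end
end

section
/- For 2 ≤ q ≤ 4, the polynomial f_q(x) = (x−q)·((x−q)(x+2)+1) − 2q satisfies f_q(q + √q/2) ≤ 0 and f_q(q+1) ≥ 0; hence the unique root of f_q on (q, ∞) lies in [q + √q/2, q+1]. -/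
/-- For `2 ≤ q ≤ 4`, `f_q(q + √q/2) ≤ 0` and `f_q(q+1) ≥ 0`, where
`f_q(x) = (x-q)((x-q)(x+2)+1) - 2q`; hence the unique root of `f_q` on `(q, ∞)`
lies in `[q + √q/2, q + 1]`. -/
theorem fq_root_bounds_small (q : ℕ) (hq2 : 2 ≤ q) (hq4 : q ≤ 4) :
    (((q : ℝ) + Real.sqrt q / 2) - q) *
        ((((q : ℝ) + Real.sqrt q / 2) - q) * (((q : ℝ) + Real.sqrt q / 2) + 2) + 1)
        - 2 * q ≤ 0 ∧
    0 ≤ (((q : ℝ) + 1) - q) * ((((q : ℝ) + 1) - q) * (((q : ℝ) + 1) + 2) + 1) - 2 * q ∧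
    ∀ x : ℝ, (q : ℝ) < x → (x - q) * ((x - q) * (x + 2) + 1) - 2 * q = 0 →
      (q : ℝ) + Real.sqrt q / 2 ≤ x ∧ x ≤ (q : ℝ) + 1 := by
  have hq2' : (2:ℝ) ≤ (q:ℝ) := by exact_mod_cast hq2
  have hq4' : (q:ℝ) ≤ 4 := by exact_mod_cast hq4
  set s := Real.sqrt (q:ℝ) with hs
  have hs0 : 0 ≤ s := Real.sqrt_nonneg _
  have hs2 : s ^ 2 = (q:ℝ) := Real.sq_sqrt (by linarith)
  have hsle : s ≤ 2 := by nlinarith [hs2]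
  have hs3 : s ^ 3 = s * (q:ℝ) := by
    rw [pow_succ, hs2]; ring
  have hspos : 0 < s := by nlinarith [hs2]
  have h1 : (((q : ℝ) + s / 2) - q) *
        ((((q : ℝ) + s / 2) - q) * (((q : ℝ) + s / 2) + 2) + 1) - 2 * q ≤ 0 := by
    have key : (((q : ℝ) + s / 2) - q) *
        ((((q : ℝ) + s / 2) - q) * (((q : ℝ) + s / 2) + 2) + 1) - 2 * q
        = (q:ℝ)^2/4 - 3*(q:ℝ)/2 + s*((q:ℝ)+4)/8 := by
      have : (((q : ℝ) + s / 2) - q) *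
        ((((q : ℝ) + s / 2) - q) * (((q : ℝ) + s / 2) + 2) + 1) - 2 * q
        = s^2/4*((q:ℝ)+2) + s^3/8 + s/2 - 2*q := by ring
      rw [this, hs2, hs3]; ring
    rw [key]
    nlinarith [mul_nonneg (by linarith : (0:ℝ) ≤ 2 - s) (by linarith : (0:ℝ) ≤ (q:ℝ)+4),
      mul_nonneg (by linarith : (0:ℝ) ≤ (q:ℝ)-1) (by linarith : (0:ℝ) ≤ 4-(q:ℝ))]
  refine ⟨h1, by nlinarith, ?_⟩
  intro x hx hroot
  constructor
  · by_contra h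
    push_neg at h
    -- x < q + s/2, so f(x) < f(q+s/2) ≤ 0, contradiction with f(x)=0
    have hxq : 0 < x - (q:ℝ) := by linarith
    nlinarith [mul_pos (by linarith : (0:ℝ) < ((q:ℝ) + s/2) - x)
        (by nlinarith : (0:ℝ) < ((q:ℝ)+s/2-q)^2 + ((q:ℝ)+s/2-q)*(x-q) + (x-q)^2
          + ((q:ℝ)+2)*(((q:ℝ)+s/2-q)+(x-q)) + 1)]
  · by_contra h
    push_neg at h
    have hxq : 0 < x - (q:ℝ) := by linarith
    nlinarith [mul_pos (by linarith : (0:ℝ) < x - ((q:ℝ)+1))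
        (by nlinarith : (0:ℝ) < (x-q)^2 + (x-q)*1 + 1
          + ((q:ℝ)+2)*((x-q)+1) + 1)]
end

section
/- For every integer q ≥ 5, the polynomial f_q(x) = (x−q)·((x−q)(x+2)+1) − 2q satisfies f_q(q+1) ≤ 0 and f_q(q+√2) ≥ 0; moreover f_q is convex on (q,∞), so its unique root on (q, ∞) is at least q + (4 + (q−1)√2)/(q + 3√2). -/
/-- For every integer `q ≥ 5`, `f_q(q+1) ≤ 0` and `f_q(q+√2) ≥ 0`, where
`f_q(x) = (x-q)((x-q)(x+2)+1) - 2q`; moreover `f_q` is convex on `(q,∞)`, so its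
unique root on `(q, ∞)` is at least `q + (4 + (q-1)√2)/(q + 3√2)`. -/
theorem fq_root_bounds_large (q : ℕ) (hq : 5 ≤ q) :
    (((q : ℝ) + 1) - q) * ((((q : ℝ) + 1) - q) * (((q : ℝ) + 1) + 2) + 1) - 2 * q ≤ 0 ∧
    0 ≤ (((q : ℝ) + Real.sqrt 2) - q) *
        ((((q : ℝ) + Real.sqrt 2) - q) * (((q : ℝ) + Real.sqrt 2) + 2) + 1) - 2 * q ∧
    ConvexOn ℝ (Set.Ioi (q : ℝ))
      (fun x : ℝ => (x - q) * ((x - q) * (x + 2) + 1) - 2 * q) ∧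
    ∀ x : ℝ, (q : ℝ) < x → (x - q) * ((x - q) * (x + 2) + 1) - 2 * q = 0 →
      (q : ℝ) + (4 + ((q : ℝ) - 1) * Real.sqrt 2) / ((q : ℝ) + 3 * Real.sqrt 2) ≤ x := by
  have hq5 : (5 : ℝ) ≤ (q : ℝ) := by exact_mod_cast hq
  have hs2 : Real.sqrt 2 ^ 2 = 2 := Real.sq_sqrt (by norm_num)
  have hs0 : (0 : ℝ) < Real.sqrt 2 := Real.sqrt_pos.mpr (by norm_num)
  set s := Real.sqrt 2 with hs
  refine ⟨by nlinarith, by nlinarith, ?_, ?_⟩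
  · -- convexity
    have hd1 : ∀ x : ℝ, HasDerivAt
        (fun x : ℝ => (x - q) * ((x - q) * (x + 2) + 1) - 2 * q)
        (3 * x ^ 2 + (4 - 4 * q) * x + (q ^ 2 - 4 * q + 1)) x := by
      intro x
      have h : HasDerivAt
          (fun x : ℝ => (x - q) * ((x - q) * (x + 2) + 1) - 2 * q)
          (1 * ((x - q) * (x + 2) + 1) + (x - q) * (1 * (x + 2) + (x - q) * 1)) x := by
        exact ((((hasDerivAt_id x).sub_const (q : ℝ)).mul
          ((((hasDerivAt_id x).sub_const (q : ℝ)).mul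
            ((hasDerivAt_id x).add_const 2)).add_const 1)).sub_const (2 * (q : ℝ)))
      convert h using 1; ring
    have hderiv : deriv (fun x : ℝ => (x - q) * ((x - q) * (x + 2) + 1) - 2 * q)
        = fun x : ℝ => 3 * x ^ 2 + (4 - 4 * q) * x + (q ^ 2 - 4 * q + 1) := by
      ext x; exact (hd1 x).deriv
    have hd2 : ∀ x : ℝ, HasDerivAt
        (fun x : ℝ => 3 * x ^ 2 + (4 - 4 * q) * x + (q ^ 2 - 4 * q + 1))
        (6 * x + (4 - 4 * q)) x := by
      intro x
      have h := (((hasDerivAt_pow 2 x).const_mul 3).add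
        ((hasDerivAt_id x).const_mul (4 - 4 * (q : ℝ)))).add_const ((q : ℝ) ^ 2 - 4 * q + 1)
      refine h.congr_deriv ?_
      push_cast
      ring
    refine convexOn_of_deriv2_nonneg' (convex_Ioi _) ?_ ?_ ?_
    · intro x _; exact (hd1 x).differentiableAt.differentiableWithinAt
    · intro x _
      rw [hderiv]
      exact (hd2 x).differentiableAt.differentiableWithinAt
    · intro x hx
      have hx' : (q : ℝ) < x := hx
      have : deriv^[2] (fun x : ℝ => (x - q) * ((x - q) * (x + 2) + 1) - 2 * q) x
          = 6 * x + (4 - 4 * q) := by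
        simp only [Function.iterate_succ, Function.iterate_zero, Function.comp_apply, id_eq,
          hderiv]
        exact (hd2 x).deriv
      rw [this]; nlinarith
  · -- root lower bound
    intro x hx heq0
    by_contra hcon
    push_neg at hcon
    have hD : (0 : ℝ) < (q : ℝ) + 3 * s := by nlinarith
    have hN : (0 : ℝ) < 4 + ((q : ℝ) - 1) * s := by nlinarith
    set t : ℝ := x - q with htdef
    have ht : 0 < t := by simp [htdef]; linarith
    have htr : t * ((q : ℝ) + 3 * s) < 4 + ((q : ℝ) - 1) * s := by
      have : t < (4 + ((q : ℝ) - 1) * s) / ((q : ℝ) + 3 * s) := by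
        rw [htdef]; linarith [hcon]
      calc t * ((q : ℝ) + 3 * s)
          < (4 + ((q : ℝ) - 1) * s) / ((q : ℝ) + 3 * s) * ((q : ℝ) + 3 * s) :=
            mul_lt_mul_of_pos_right this hD
        _ = 4 + ((q : ℝ) - 1) * s := div_mul_cancel₀ _ (ne_of_gt hD)
    have heq : t ^ 3 + ((q : ℝ) + 2) * t ^ 2 + t = 2 * q := by
      have hx' : x = t + q := by rw [htdef]; ring
      nlinarith [heq0]
    -- multiply equation by D^3
    set D : ℝ := (q : ℝ) + 3 * s
    set N : ℝ := 4 + ((q : ℝ) - 1) * s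
    have heq3 : (t * D) ^ 3 + ((q : ℝ) + 2) * (t * D) ^ 2 * D + (t * D) * D ^ 2
        = 2 * q * D ^ 3 := by linear_combination D ^ 3 * heq
    have hP : N ^ 3 + ((q : ℝ) + 2) * N ^ 2 * D + N * D ^ 2 - 2 * q * D ^ 3 < 0 := by
      have hexp : N ^ 3 + ((q : ℝ) + 2) * N ^ 2 * D + N * D ^ 2 - 2 * q * D ^ 3
          = (64 + 24 * q - 10 * q ^ 2) + s * (40 + 2 * q + q ^ 2 - q ^ 3) := by
        simp only [N, D]
        linear_combination ((q:ℝ)^4 + 4*(q:ℝ)^3*s - 3*(q:ℝ)^2*s - 15*(q:ℝ)^2 - 51*(q:ℝ)*s - 4*(q:ℝ) - 4*s) * hs2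
      rw [hexp]
      nlinarith [mul_pos hs0 (show (0:ℝ) < (q:ℝ)^3 - (q:ℝ)^2 - 2*(q:ℝ) - 40 by nlinarith)]
    have hu : 0 < t * D := mul_pos ht hD
    have h1 : 0 < (N - t * D) * (N ^ 2 + N * (t * D) + (t * D) ^ 2) :=
      mul_pos (by linarith) (by linarith [mul_pos hN hu, pow_pos hN 2, sq_nonneg (t * D)])
    have h2 : 0 < ((q : ℝ) + 2) * D * ((N - t * D) * (N + t * D)) :=
      mul_pos (by positivity) (mul_pos (by linarith) (by linarith))
    have h3 : 0 < D ^ 2 * (N - t * D) := mul_pos (by positivity) (by linarith)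
    have hkey : (N - t * D) * (N ^ 2 + N * (t * D) + (t * D) ^ 2)
        + ((q : ℝ) + 2) * D * ((N - t * D) * (N + t * D)) + D ^ 2 * (N - t * D)
        = (N ^ 3 + ((q : ℝ) + 2) * N ^ 2 * D + N * D ^ 2)
          - ((t * D) ^ 3 + ((q : ℝ) + 2) * (t * D) ^ 2 * D + t * D * D ^ 2) := by ring
    linarith [h1, h2, h3, heq3, hP, hkey]
end

section
/- The spectral radius of the path P_n equals 2·cos(π/(n+1)), and for any tree T on n vertices, 2·cos(π/(n+1)) ≤ ρ(T) ≤ √(n−1), where the upper bound is attained by the star K_{1,n−1}. -/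
open scoped Classical
open Polynomial

noncomputable section

open Matrix Real

set_option linter.unusedSectionVars false
set_option maxHeartbeats 1000000

namespace TreeSpec

section Basics

variable {V : Type*} [Fintype V] [DecidableEq V]

lemma charP_isRoot_iff (G : SimpleGraph V) (t : ℝ) :
    (charP G).IsRoot t ↔ (t • (1 : Matrix V V ℝ) - adjM G).det = 0 := by
  have h : Polynomial.eval t (charP G)
      = ((Matrix.charmatrix (adjM G)).map (Polynomial.evalRingHom t)).det := by
    have := RingHom.map_det (Polynomial.evalRingHom t) (Matrix.charmatrix (adjM G))
    rw [RingHom.mapMatrix_apply] at this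
    rw [_root_.charP, Matrix.charpoly, ← this]
    rfl
  have h2 : (Matrix.charmatrix (adjM G)).map (Polynomial.evalRingHom t)
      = t • (1 : Matrix V V ℝ) - adjM G := by
    ext i j
    by_cases hij : i = j
    · subst hij
      simp [Matrix.charmatrix_apply_eq, Matrix.one_apply]
    · simp [Matrix.charmatrix_apply_ne _ _ _ hij, Matrix.one_apply, hij]
  rw [Polynomial.IsRoot, h, h2]

lemma charP_isRoot_of_eigen (G : SimpleGraph V) {t : ℝ} {v : V → ℝ} (hv : v ≠ 0)
    (h : (adjM G) *ᵥ v = t • v) : (charP G).IsRoot t := by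
  rw [charP_isRoot_iff]
  rw [← Matrix.exists_mulVec_eq_zero_iff]
  refine ⟨v, hv, ?_⟩
  rw [Matrix.sub_mulVec, Matrix.smul_mulVec, Matrix.one_mulVec, h, sub_self]

lemma eigen_of_charP_isRoot (G : SimpleGraph V) {t : ℝ} (h : (charP G).IsRoot t) :
    ∃ v : V → ℝ, v ≠ 0 ∧ (adjM G) *ᵥ v = t • v := by
  rw [charP_isRoot_iff, ← Matrix.exists_mulVec_eq_zero_iff] at h
  obtain ⟨v, hv, hv2⟩ := h
  refine ⟨v, hv, ?_⟩
  rw [Matrix.sub_mulVec, Matrix.smul_mulVec, Matrix.one_mulVec, sub_eq_zero] at hv2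
  exact hv2.symm

lemma adjM_nonneg (G : SimpleGraph V) (a b : V) : 0 ≤ adjM G a b := by
  unfold adjM; split <;> norm_num

lemma adjM_symm (G : SimpleGraph V) (a b : V) : adjM G a b = adjM G b a := by
  unfold adjM
  rw [SimpleGraph.adj_comm]

/-- Perron-type upper bound: if `y` is a strictly positive eigenvector with eigenvalue `c`,
then every root of the characteristic polynomial has absolute value at most `c`. -/
lemma abs_root_le_of_pos_eigen (G : SimpleGraph V) {c : ℝ} {y : V → ℝ}
    (hy : ∀ i, 0 < y i) (h : (adjM G) *ᵥ y = c • y) {t : ℝ}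
    (ht : (charP G).IsRoot t) : |t| ≤ c := by
  obtain ⟨v, hv, hv2⟩ := eigen_of_charP_isRoot G ht
  set A := adjM G with hA
  -- S = ∑ y i * |v i| > 0
  have hvi : ∃ i, v i ≠ 0 := by
    by_contra hc
    push_neg at hc
    exact hv (funext fun i => hc i)
  obtain ⟨i0, hi0⟩ := hvi
  have hS : 0 < ∑ i, y i * |v i| := by
    apply Finset.sum_pos'
    · intro i _
      exact mul_nonneg (hy i).le (abs_nonneg _)
    · exact ⟨i0, Finset.mem_univ _, mul_pos (hy i0) (abs_pos.mpr hi0)⟩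
  have key : |t| * (∑ i, y i * |v i|) ≤ c * (∑ i, y i * |v i|) := by
    have h1 : ∀ i, |t| * |v i| ≤ ∑ j, A i j * |v j| := by
      intro i
      have : t * v i = ∑ j, A i j * v j := by
        have := congrFun hv2 i
        simpa [Matrix.mulVec, dotProduct, mul_comm] using this.symm
      calc |t| * |v i| = |∑ j, A i j * v j| := by rw [← abs_mul, this]
        _ ≤ ∑ j, |A i j * v j| := Finset.abs_sum_le_sum_abs _ _
        _ = ∑ j, A i j * |v j| := by
            apply Finset.sum_congr rfl
            intro j _
            rw [abs_mul, abs_of_nonneg (adjM_nonneg G i j)]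
    calc |t| * (∑ i, y i * |v i|) = ∑ i, y i * (|t| * |v i|) := by
          rw [Finset.mul_sum]; apply Finset.sum_congr rfl; intro i _; ring
      _ ≤ ∑ i, y i * (∑ j, A i j * |v j|) := by
          apply Finset.sum_le_sum
          intro i _
          exact mul_le_mul_of_nonneg_left (h1 i) (hy i).le
      _ = ∑ j, (∑ i, A i j * y i) * |v j| := by
          simp_rw [Finset.mul_sum, Finset.sum_mul]
          rw [Finset.sum_comm]
          apply Finset.sum_congr rfl; intro i _
          apply Finset.sum_congr rfl; intro j _
          ring
      _ = ∑ j, (c * y j) * |v j| := by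
          apply Finset.sum_congr rfl; intro j _
          congr 1
          have := congrFun h j
          simp only [Matrix.mulVec, dotProduct, Pi.smul_apply, smul_eq_mul] at this
          rw [← this]
          apply Finset.sum_congr rfl; intro i _
          rw [hA, adjM_symm G i j]
      _ = c * (∑ i, y i * |v i|) := by
          rw [Finset.mul_sum]; apply Finset.sum_congr rfl; intro i _; ring
  exact le_of_mul_le_mul_right (by linarith [key]) hS

/-- If a graph has a strictly positive eigenvector for eigenvalue `c`, then `specRad G = c`. -/
lemma specRad_eq_of_pos_eigen [Nonempty V] (G : SimpleGraph V) {c : ℝ} {y : V → ℝ}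
    (hy : ∀ i, 0 < y i) (h : (adjM G) *ᵥ y = c • y) : specRad G = c := by
  have hyne : y ≠ 0 := by
    intro hc
    have := hy (Classical.arbitrary V)
    rw [hc] at this
    simp at this
  have mem : (charP G).IsRoot c := charP_isRoot_of_eigen G hyne h
  have hub : ∀ t ∈ {x : ℝ | (charP G).IsRoot x}, t ≤ c := fun t ht =>
    (le_abs_self t).trans (abs_root_le_of_pos_eigen G hy h ht)
  refine le_antisymm (csSup_le ⟨c, mem⟩ hub) (le_csSup ⟨c, hub⟩ mem)

end Basics

section Ray
variable {V : Type*}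

lemma exists_max_eigen {V : Type*} [Fintype V] [DecidableEq V] [Nonempty V] (G : SimpleGraph V) :
    ∃ μ : ℝ, (charP G).IsRoot μ ∧
      ∀ x : V → ℝ, (∑ v, ∑ u, adjM G v u * x v * x u) ≤ μ * ∑ v, (x v)^2 := by
  classical
  set A := adjM G with hA
  have hherm : A.IsHermitian := by
    unfold Matrix.IsHermitian
    ext i j
    simp [Matrix.conjTranspose_apply, hA, adjM_symm G j i]
  have hsym : (Matrix.toEuclideanLin A).IsSymmetric :=
    Matrix.isHermitian_iff_isSymmetric.mp hherm
  haveI : Nontrivial (EuclideanSpace ℝ V) := by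
    refine (WithLp.equiv 2 (V → ℝ)).nontrivial
  set T := Matrix.toEuclideanLin A with hT
  set μ : ℝ := ⨆ x : { x : EuclideanSpace ℝ V // x ≠ 0 },
      RCLike.re (inner ℝ (T x) (x : EuclideanSpace ℝ V) : ℝ) / ‖(x : EuclideanSpace ℝ V)‖ ^ 2 with hμ
  have heig : Module.End.HasEigenvalue T μ := by
    have := hsym.hasEigenvalue_iSup_of_finiteDimensional
    rw [hμ]
    simpa using this
  obtain ⟨v, hv⟩ := heig.exists_hasEigenvector
  have hverule : T v = μ • v := hv.apply_eq_smul
  have hvne : v ≠ 0 := hv.right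
  -- translate to mulVec
  have hmv : A *ᵥ (WithLp.equiv 2 (V → ℝ) v) = μ • (WithLp.equiv 2 (V → ℝ) v) := by
    have h1 : WithLp.equiv 2 (V → ℝ) (T v) = A *ᵥ (WithLp.equiv 2 (V → ℝ) v) := rfl
    rw [hverule] at h1
    rw [← h1]
    rfl
  have hwne : (WithLp.equiv 2 (V → ℝ) v) ≠ 0 := by
    intro hc
    apply hvne
    have : v = (WithLp.equiv 2 (V → ℝ)).symm 0 := by
      rw [← hc]; simp
    simpa using this
  refine ⟨μ, charP_isRoot_of_eigen G hwne hmv, ?_⟩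
  -- the Rayleigh bound
  have hbdd : BddAbove (Set.range fun x : { x : EuclideanSpace ℝ V // x ≠ 0 } =>
      RCLike.re (inner ℝ (T x) (x : EuclideanSpace ℝ V) : ℝ) / ‖(x : EuclideanSpace ℝ V)‖ ^ 2) := by
    set Tc := LinearMap.toContinuousLinearMap T with hTc
    refine ⟨‖Tc‖, ?_⟩
    rintro y ⟨x, rfl⟩
    have hx0 : 0 < ‖(x : EuclideanSpace ℝ V)‖ := norm_pos_iff.mpr x.prop
    have h1 : (inner ℝ (T x) (x : EuclideanSpace ℝ V) : ℝ) ≤ ‖Tc‖ * ‖(x : EuclideanSpace ℝ V)‖ ^ 2 := by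
      calc (inner ℝ (T x) (x : EuclideanSpace ℝ V) : ℝ)
          ≤ ‖T (x : EuclideanSpace ℝ V)‖ * ‖(x : EuclideanSpace ℝ V)‖ := real_inner_le_norm _ _
        _ ≤ (‖Tc‖ * ‖(x : EuclideanSpace ℝ V)‖) * ‖(x : EuclideanSpace ℝ V)‖ := by
            apply mul_le_mul_of_nonneg_right _ (norm_nonneg _)
            exact Tc.le_opNorm _
        _ = ‖Tc‖ * ‖(x : EuclideanSpace ℝ V)‖ ^ 2 := by ring
    simp only [RCLike.re_to_real]
    rw [div_le_iff₀ (by positivity)]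
    simpa using h1
  intro x
  by_cases hx : x = 0
  · subst hx; simp
  · set xE : EuclideanSpace ℝ V := (WithLp.equiv 2 (V → ℝ)).symm x with hxE
    have hxEne : xE ≠ 0 := by
      intro hc
      apply hx
      have := congrArg (WithLp.equiv 2 (V → ℝ)) hc
      simpa [hxE] using this
    have hray : RCLike.re (inner ℝ (T xE) (xE : EuclideanSpace ℝ V) : ℝ) / ‖xE‖ ^ 2 ≤ μ := by
      rw [hμ]
      exact le_ciSup hbdd ⟨xE, hxEne⟩
    have hnorm : ‖xE‖ ^ 2 = ∑ v, (x v)^2 := by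
      rw [EuclideanSpace.norm_eq]
      rw [Real.sq_sqrt (by positivity)]
      apply Finset.sum_congr rfl
      intro i _
      rw [Real.norm_eq_abs, sq_abs]
      rfl
    have hinner : (inner ℝ (T xE) (xE : EuclideanSpace ℝ V) : ℝ) = ∑ v, ∑ u, A v u * x v * x u := by
      rw [PiLp.inner_apply]
      have hTx : ∀ i, (T xE) i = ∑ u, A i u * x u := by
        intro i
        show (A *ᵥ x) i = _
        simp [Matrix.mulVec, dotProduct]
      calc ∑ i, inner ℝ ((T xE) i) (xE i) = ∑ i, (∑ u, A i u * x u) * x i := by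
            apply Finset.sum_congr rfl
            intro i _
            show inner ℝ ((T xE) i) (x i) = _
            rw [hTx i]
            simp only [RCLike.inner_apply, conj_trivial]
            ring
        _ = ∑ v, ∑ u, A v u * x v * x u := by
            apply Finset.sum_congr rfl
            intro i _
            rw [Finset.sum_mul]
            apply Finset.sum_congr rfl
            intro u _
            ring
    rw [RCLike.re_to_real] at hray
    rw [hinner, hnorm] at hray
    have hpos : (0:ℝ) < ∑ v, (x v)^2 := by
      have : ‖xE‖ ^ 2 > 0 := by
        have := norm_pos_iff.mpr hxEne
        positivity
      rw [hnorm] at this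
      exact this
    rw [div_le_iff₀ hpos] at hray
    linarith [hray]


end Ray

lemma sin_identity (x y t : ℝ) :
    Real.sin (x+y+t) * Real.sin x = Real.sin (x+y) * Real.sin (x+t) - Real.sin y * Real.sin t := by
  simp only [Real.sin_add, Real.cos_add, Real.sin_sub, Real.cos_sub]
  linear_combination (-(Real.sin y * Real.sin t)) * Real.sin_sq_add_cos_sq x

lemma cos_le_cos_of (α β : ℝ) (h0 : 0 ≤ α) (hπ : α ≤ π) (h1 : α ≤ β) (h2 : β + α ≤ 2*π) :
    Real.cos β ≤ Real.cos α := by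
  rcases le_or_gt β π with h | h
  · exact Real.cos_le_cos_of_nonneg_of_le_pi h0 h h1
  · have hb : Real.cos β = Real.cos (2*π - β) := (Real.cos_two_pi_sub β).symm
    rw [hb]
    apply Real.cos_le_cos_of_nonneg_of_le_pi h0 (by linarith) (by linarith)

lemma two_sin_mul (a b : ℝ) :
    2 * (Real.sin a * Real.sin b) = Real.cos (a - b) - Real.cos (a + b) := by
  rw [Real.cos_sub, Real.cos_add]; ring

section Theta

variable {n : ℕ} (hn : 1 ≤ n)

/-- the angle π / (n+1) -/
def th (n : ℕ) : ℝ := π / (n + 1)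

lemma th_pos : 0 < th n := by
  apply div_pos Real.pi_pos
  positivity

lemma th_mul_pos {j : ℕ} (hj : 1 ≤ j) : 0 < (j : ℝ) * th n := by
  apply mul_pos _ th_pos
  exact_mod_cast Nat.lt_of_lt_of_le Nat.zero_lt_one hj

lemma th_mul_le {j : ℕ} (hj : j ≤ n + 1) : (j : ℝ) * th n ≤ π := by
  rw [th, ← mul_div_assoc]
  rw [div_le_iff₀ (by positivity)]
  have : (j : ℝ) ≤ (n : ℝ) + 1 := by exact_mod_cast hj
  nlinarith [Real.pi_pos]

lemma sin_th_pos {j : ℕ} (hj1 : 1 ≤ j) (hj2 : j ≤ n) : 0 < Real.sin ((j : ℝ) * th n) := by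
  apply Real.sin_pos_of_pos_of_lt_pi (th_mul_pos hj1)
  have h := th_mul_le (n := n) (j := j+1) (by omega)
  have := th_pos (n := n)
  push_cast at h
  nlinarith

lemma sin_th_nonneg {j : ℕ} (hj2 : j ≤ n + 1) : 0 ≤ Real.sin ((j : ℝ) * th n) := by
  apply Real.sin_nonneg_of_nonneg_of_le_pi
  · exact mul_nonneg (Nat.cast_nonneg j) th_pos.le
  · exact th_mul_le hj2

lemma sin_th_top : Real.sin (((n : ℝ) + 1) * th n) = 0 := by
  rw [th, mul_div_cancel₀ _ (by positivity)]
  exact Real.sin_pi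

/-- the three-term recurrence -/
lemma sin_rec (j : ℕ) :
    Real.sin ((j : ℝ) * th n) + Real.sin (((j : ℝ) + 2) * th n)
      = 2 * Real.cos (th n) * Real.sin (((j : ℝ) + 1) * th n) := by
  have e1 : (j : ℝ) * th n = ((j : ℝ) + 1) * th n - th n := by ring
  have e2 : ((j : ℝ) + 2) * th n = ((j : ℝ) + 1) * th n + th n := by ring
  rw [e1, e2, Real.sin_add, Real.sin_sub]
  ring

/-- two-term superadditivity of `k ↦ sin(kθ)/sin((k+1)θ)` -/
lemma g_superadd_two {k l : ℕ} (hk : 1 ≤ k) (hl : 1 ≤ l) (hkl : k + l + 1 ≤ n) :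
    Real.sin (((k : ℝ) + l) * th n) / Real.sin (((k : ℝ) + l + 1) * th n)
      ≤ Real.sin ((k : ℝ) * th n) / Real.sin (((k : ℝ) + 1) * th n)
        + Real.sin ((l : ℝ) * th n) / Real.sin (((l : ℝ) + 1) * th n) := by
  set t := th n with ht
  have htpos : 0 < t := th_pos
  have hsk1 : 0 < Real.sin (((k : ℝ) + 1) * t) := by
    have := sin_th_pos (n := n) (j := k + 1) (by omega) (by omega); push_cast at this ⊢; exact this
  have hsl1 : 0 < Real.sin (((l : ℝ) + 1) * t) := by
    have := sin_th_pos (n := n) (j := l + 1) (by omega) (by omega); push_cast at this ⊢; exact this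
  have hskl1 : 0 < Real.sin (((k : ℝ) + l + 1) * t) := by
    have := sin_th_pos (n := n) (j := k + l + 1) (by omega) (by omega); push_cast at this ⊢; exact this
  have hsl : 0 ≤ Real.sin ((l : ℝ) * t) := by
    have := sin_th_nonneg (n := n) (j := l) (by omega); push_cast at this ⊢; exact this
  -- identity : sin((k+l+1)t) * sin(kt) = sin((k+l)t) * sin((k+1)t) - sin(lt) * sin(t)
  have hid : Real.sin (((k : ℝ) + l + 1) * t) * Real.sin ((k : ℝ) * t)
      = Real.sin (((k : ℝ) + l) * t) * Real.sin (((k : ℝ) + 1) * t)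
        - Real.sin ((l : ℝ) * t) * Real.sin t := by
    have := sin_identity ((k : ℝ) * t) ((l : ℝ) * t) t
    have a1 : (k : ℝ) * t + (l : ℝ) * t + t = ((k : ℝ) + l + 1) * t := by ring
    have a2 : (k : ℝ) * t + (l : ℝ) * t = ((k : ℝ) + l) * t := by ring
    have a3 : (k : ℝ) * t + t = ((k : ℝ) + 1) * t := by ring
    rw [a1, a2, a3] at this
    exact this
  -- inequality : sin(t) * sin((l+1)t) ≤ sin((k+1)t) * sin((k+l+1)t)
  have hineq : Real.sin t * Real.sin (((l : ℝ) + 1) * t)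
      ≤ Real.sin (((k : ℝ) + 1) * t) * Real.sin (((k : ℝ) + l + 1) * t) := by
    have e1 : 2 * (Real.sin t * Real.sin (((l : ℝ) + 1) * t))
        = Real.cos (t - ((l : ℝ) + 1) * t) - Real.cos (t + ((l : ℝ) + 1) * t) :=
      two_sin_mul _ _
    have e2 : 2 * (Real.sin (((k : ℝ) + 1) * t) * Real.sin (((k : ℝ) + l + 1) * t))
        = Real.cos (((k : ℝ) + 1) * t - ((k : ℝ) + l + 1) * t)
          - Real.cos (((k : ℝ) + 1) * t + ((k : ℝ) + l + 1) * t) := two_sin_mul _ _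
    have a1 : t - ((l : ℝ) + 1) * t = -((l : ℝ) * t) := by ring
    have a2 : t + ((l : ℝ) + 1) * t = ((l : ℝ) + 2) * t := by ring
    have a3 : ((k : ℝ) + 1) * t - ((k : ℝ) + l + 1) * t = -((l : ℝ) * t) := by ring
    have a4 : ((k : ℝ) + 1) * t + ((k : ℝ) + l + 1) * t = (2*(k : ℝ) + l + 2) * t := by ring
    rw [a1, a2] at e1
    rw [a3, a4] at e2
    -- need : cos((2k+l+2) t) ≤ cos((l+2) t)
    have hc : Real.cos ((2*(k : ℝ) + l + 2) * t) ≤ Real.cos (((l : ℝ) + 2) * t) := by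
      apply cos_le_cos_of
      · positivity
      · have := th_mul_le (n := n) (j := l + 2) (by omega); push_cast at this; exact_mod_cast this
      · have : (0:ℝ) ≤ 2*(k:ℝ) := by positivity
        nlinarith
      · -- (2k+l+2) t + (l+2) t = (2k+2l+4) t ≤ (2n+2) t = 2π
        have h1 : (2*(k : ℝ) + l + 2) * t + ((l : ℝ) + 2) * t = (2*(k:ℝ) + 2*l + 4) * t := by ring
        rw [h1]
        have h2 : (2*(k:ℝ) + 2*l + 4) ≤ 2*((n:ℝ) + 1) := by
          have : (k:ℝ) + l + 1 ≤ (n:ℝ) := by exact_mod_cast hkl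
          linarith
        have h3 : (2*(k:ℝ) + 2*l + 4) * t ≤ (2*((n:ℝ)+1)) * t := by
          apply mul_le_mul_of_nonneg_right h2 htpos.le
        have h4 : (2*((n:ℝ)+1)) * t = 2 * π := by
          rw [ht, th]; field_simp
        linarith
    linarith
  rw [div_add_div _ _ (ne_of_gt hsk1) (ne_of_gt hsl1), div_le_div_iff₀ hskl1 (by positivity)]
  have expand : (Real.sin ((k:ℝ) * t) * Real.sin (((l:ℝ) + 1) * t)
      + Real.sin (((k:ℝ) + 1) * t) * Real.sin ((l:ℝ) * t)) * Real.sin (((k:ℝ) + l + 1) * t)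
      - Real.sin (((k : ℝ) + l) * t) * (Real.sin (((k:ℝ) + 1) * t) * Real.sin (((l:ℝ) + 1) * t))
      = Real.sin ((l:ℝ) * t) * (Real.sin (((k : ℝ)+1) * t) * Real.sin (((k : ℝ) + l + 1) * t)
          - Real.sin t * Real.sin (((l : ℝ) + 1) * t)) := by
    nlinarith [hid]
  nlinarith [mul_nonneg hsl (sub_nonneg.mpr hineq)]

/-- superadditivity over a finite set -/
lemma g_superadd {α : Type*} [DecidableEq α] (F : Finset α) (f : α → ℕ)
    (hf : ∀ a ∈ F, 1 ≤ f a) (hsum : (∑ a ∈ F, f a) + 1 ≤ n) :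
    Real.sin ((∑ a ∈ F, f a : ℕ) * th n) / Real.sin (((∑ a ∈ F, f a : ℕ) + 1 : ℝ) * th n)
      ≤ ∑ a ∈ F, Real.sin ((f a : ℝ) * th n) / Real.sin (((f a : ℝ) + 1) * th n) := by
  classical
  induction F using Finset.induction with
  | empty => simp
  | @insert a F' ha ih =>
    rw [Finset.sum_insert ha, Finset.sum_insert ha]
    have hfa : 1 ≤ f a := hf a (Finset.mem_insert_self a F')
    have hsum2 : f a + (∑ x ∈ F', f x) + 1 ≤ n := by
      rw [Finset.sum_insert ha] at hsum; omega
    rcases Nat.eq_zero_or_pos (∑ x ∈ F', f x) with h0 | hpos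
    · have hF' : F' = ∅ := by
        apply Finset.eq_empty_of_forall_notMem
        intro x hx
        have h1 := hf x (Finset.mem_insert_of_mem hx)
        have h2 : f x ≤ ∑ x ∈ F', f x :=
          Finset.single_le_sum (fun i _ => Nat.zero_le _) hx
        omega
      subst hF'
      simp
    · have h2 := g_superadd_two (n := n) (k := f a) (l := ∑ x ∈ F', f x) hfa hpos hsum2
      have h3 := ih (fun x hx => hf x (Finset.mem_insert_of_mem hx)) (by omega)
      push_cast at h2 h3 ⊢
      linarith

end Theta

open SimpleGraph Walk

lemma tree_struct {V : Type*} {T : SimpleGraph V} (hT : T.IsTree) :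
    ∃ (r : V) (p : V → V) (m : V → ℕ), p r = r ∧
      (∀ v, v ≠ r → T.Adj v (p v) ∧ m (p v) < m v) ∧
      (∀ a b, T.Adj a b → p a = b ∨ p b = a) := by
  have hne : Nonempty V := hT.isConnected.nonempty
  classical
  obtain ⟨r⟩ := hne
  have hEU : ∀ v w : V, ∃! q : T.Walk v w, q.IsPath := hT.existsUnique_path
  choose pth hpth using fun v => hEU v r
  -- hpth v : (pth v).IsPath ∧ ∀ q, q.IsPath → q = pth v
  have hnilr : pth r = Walk.nil := ((hpth r).2 Walk.nil IsPath.nil).symm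
  refine ⟨r, fun v => (pth v).getVert 1, fun v => (pth v).length, ?_, ?_, ?_⟩
  · show (pth r).getVert 1 = r
    rw [hnilr]; rfl
  · intro v hv
    have hnn : ¬ (pth v).Nil := not_nil_of_ne hv
    have hlen : 0 < (pth v).length := not_nil_iff_lt_length.mp hnn
    constructor
    · have := (pth v).adj_getVert_succ (i := 0) hlen
      rwa [getVert_zero] at this
    · have htail : (pth v).tail.IsPath := (hpth v).1.tail
      have := (hpth ((pth v).getVert 1)).2 (pth v).tail htail
      have hlt : (pth v).tail.length + 1 = (pth v).length := length_tail_add_one hnn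
      show (pth ((pth v).getVert 1)).length < (pth v).length
      rw [← this]
      omega
  · intro a b hab
    by_cases ha : a ∈ (pth b).support
    · right
      have t1 : ((pth b).takeUntil a ha).IsPath := (hpth b).1.takeUntil ha
      have t2 : (Walk.cons hab.symm Walk.nil : T.Walk b a).IsPath := by
        simp [Walk.isPath_def, hab.ne']
      have teq : (pth b).takeUntil a ha = Walk.cons hab.symm Walk.nil := by
        obtain ⟨q, hq1, hq2⟩ := hEU b a
        rw [hq2 _ t1, hq2 _ t2]
      have hspec := (pth b).take_spec ha
      rw [teq] at hspec
      have hgv := congrArg (fun q => Walk.getVert q 1) hspec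
      simp only [Walk.cons_append, Walk.nil_append] at hgv
      rw [getVert_cons_succ, getVert_zero] at hgv
      show (pth b).getVert 1 = a
      exact hgv.symm
    · left
      have hw : (Walk.cons hab (pth b)).IsPath := (hpth b).1.cons ha
      have := (hpth a).2 (Walk.cons hab (pth b)) hw
      show (pth a).getVert 1 = b
      rw [← this, getVert_cons_succ, getVert_zero]


section Subtree

variable {V : Type*} [Fintype V] [DecidableEq V]

/-- subtree below `v` w.r.t. parent map `p` -/
def subt (p : V → V) (v : V) : Finset V :=
  Finset.univ.filter (fun u => ∃ k, p^[k] u = v)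

lemma mem_subt {p : V → V} {v u : V} : u ∈ subt p v ↔ ∃ k, p^[k] u = v := by
  simp [subt]

lemma self_mem_subt (p : V → V) (v : V) : v ∈ subt p v := mem_subt.mpr ⟨0, rfl⟩

variable {p : V → V} {r : V} {m : V → ℕ}
  (hpr : p r = r) (hm : ∀ v, v ≠ r → m (p v) < m v)

section WithH
include hpr hm

lemma iterate_m_le (k : ℕ) (u : V) : m (p^[k] u) ≤ m u := by
  induction k with
  | zero => simp
  | succ k ih =>
    rw [Function.iterate_succ_apply']
    by_cases h : p^[k] u = r
    · rw [h, hpr]; rw [h] at ih; exact ih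
    · exact le_trans (hm _ h).le ih

lemma no_cycle {u : V} {k : ℕ} (h : p^[k] u = u) (hk : k ≠ 0) : u = r := by
  by_contra hu
  obtain ⟨k', rfl⟩ : ∃ k', k = k' + 1 := ⟨k - 1, by omega⟩
  have h1 : m (p u) < m u := hm u hu
  have h2 : m (p^[k'] (p u)) ≤ m (p u) := iterate_m_le hpr hm k' (p u)
  rw [← Function.iterate_succ_apply, h] at h2
  omega

lemma subt_eq_univ_of_root : subt p r = Finset.univ := by
  have key : ∀ (N : ℕ) (u : V), m u ≤ N → ∃ k, p^[k] u = r := by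
    intro N
    induction N with
    | zero =>
      intro u hu
      by_cases h : u = r
      · exact ⟨0, h⟩
      · exact absurd (hm u h) (by omega)
    | succ N ih =>
      intro u hu
      by_cases h : u = r
      · exact ⟨0, h⟩
      · obtain ⟨k, hk⟩ := ih (p u) (by have := hm u h; omega)
        exact ⟨k + 1, by rwa [Function.iterate_succ_apply]⟩
  apply Finset.eq_univ_of_forall
  intro u
  exact mem_subt.mpr (key (m u) u le_rfl)

lemma parent_not_mem_subt {v : V} (hv : v ≠ r) : p v ∉ subt p v := by
  intro hc
  obtain ⟨k, hk⟩ := mem_subt.mp hc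
  rw [← Function.iterate_succ_apply] at hk
  exact hv (no_cycle hpr hm hk (by omega))

end WithH

/-- children of `v` -/
def childs (p : V → V) (v : V) : Finset V :=
  Finset.univ.filter (fun w => p w = v ∧ w ≠ v)

lemma mem_childs {v w : V} : w ∈ childs p v ↔ p w = v ∧ w ≠ v := by simp [childs]

lemma subt_child_subset {v w : V} (hw : w ∈ childs p v) : subt p w ⊆ subt p v := by
  intro u hu
  obtain ⟨k, hk⟩ := mem_subt.mp hu
  exact mem_subt.mpr ⟨k + 1, by rw [Function.iterate_succ_apply', hk, (mem_childs.mp hw).1]⟩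

section WithH2
include hpr hm

lemma not_mem_subt_child {v w : V} (hw : w ∈ childs p v) : v ∉ subt p w := by
  obtain ⟨hpw, hwv⟩ := mem_childs.mp hw
  intro hc
  obtain ⟨k, hk⟩ := mem_subt.mp hc
  have h2 : p^[k + 1] v = v := by
    rw [Function.iterate_succ_apply', hk, hpw]
  have hvr : v = r := no_cycle hpr hm h2 (by omega)
  rw [hvr] at hk
  have hwr : w = r := by rw [← hk, Function.iterate_fixed hpr]
  exact hwv (by rw [hwr, ← hvr])

lemma root_not_mem_subt_child {v w : V} (hw : w ∈ childs p v) (hwr : w ≠ r) :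
    r ∉ subt p w := by
  intro hc
  obtain ⟨k, hk⟩ := mem_subt.mp hc
  rw [Function.iterate_fixed hpr] at hk
  exact hwr hk.symm

lemma subt_decomp {v : V} :
    subt p v = insert v ((childs p v).biUnion (fun w => subt p w)) := by
  apply Finset.ext
  intro u
  simp only [Finset.mem_insert, Finset.mem_biUnion]
  constructor
  · intro hu
    by_cases huv : u = v
    · exact Or.inl huv
    · right
      have hex : ∃ k, p^[k] u = v := mem_subt.mp hu
      set k0 := Nat.find hex with hk0
      have hk0spec : p^[k0] u = v := Nat.find_spec hex
      have hk0ne : k0 ≠ 0 := by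
        intro hc
        rw [hc] at hk0spec
        exact huv hk0spec
      refine ⟨p^[k0 - 1] u, ?_, ?_⟩
      · apply mem_childs.mpr
        constructor
        · rw [← Function.iterate_succ_apply' p (k0 - 1) u]
          rw [show (k0 - 1).succ = k0 by omega]
          exact hk0spec
        · intro hc
          exact Nat.find_min hex (show k0 - 1 < k0 by omega) hc
      · exact mem_subt.mpr ⟨k0 - 1, rfl⟩
  · rintro (rfl | ⟨w, hw, hu⟩)
    · exact self_mem_subt p u
    · exact subt_child_subset hw hu
end WithH2

end Subtree

section Part2
variable {V : Type*} [Fintype V] [DecidableEq V]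
variable {p : V → V} {r : V} {m : V → ℕ}

lemma subt_child_disjoint (hpr : p r = r) (hm : ∀ v, v ≠ r → m (p v) < m v)
    {v w1 w2 : V} (h1 : w1 ∈ childs p v) (h2 : w2 ∈ childs p v)
    (hne : w1 ≠ w2) : Disjoint (subt p w1) (subt p w2) := by
  have aux : ∀ w1 w2 : V, w1 ∈ childs p v → w2 ∈ childs p v → w1 ≠ w2 →
      ∀ u i j, p^[i] u = w1 → p^[j] u = w2 → i ≤ j → False := by
    intro w1 w2 hw1 hw2 hne u i j hi hj hij
    have hji : p^[j - i] w1 = w2 := by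
      rw [← hi, ← Function.iterate_add_apply]
      rw [show j - i + i = j by omega]
      exact hj
    have hd0 : j - i ≠ 0 := by
      intro hc; rw [hc] at hji; exact hne (by simpa using hji)
    have hv2 : p^[j - i - 1] v = w2 := by
      have h5 : p^[(j - i - 1) + 1] w1 = w2 := by
        rw [show j - i - 1 + 1 = j - i by omega]; exact hji
      rw [Function.iterate_succ_apply, (mem_childs.mp hw1).1] at h5
      exact h5
    by_cases ht : j - i - 1 = 0
    · rw [ht] at hv2
      exact (mem_childs.mp hw2).2 (by simpa using hv2.symm)
    · have h6 : p^[(j - i - 1) + 1] v = v := by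
        rw [Function.iterate_succ_apply', hv2, (mem_childs.mp hw2).1]
      have hvr : v = r := no_cycle hpr hm h6 (by omega)
      rw [hvr, Function.iterate_fixed hpr] at hv2
      exact (mem_childs.mp hw2).2 (by rw [← hv2, hvr])
  rw [Finset.disjoint_left]
  intro u hu1 hu2
  obtain ⟨i, hi⟩ := mem_subt.mp hu1
  obtain ⟨j, hj⟩ := mem_subt.mp hu2
  rcases le_total i j with h | h
  · exact aux w1 w2 h1 h2 hne u i j hi hj h
  · exact aux w2 w1 h2 h1 hne.symm u j i hj hi h

lemma subt_sum (hpr : p r = r) (hm : ∀ v, v ≠ r → m (p v) < m v)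
    (v : V) (f : V → ℝ) :
    ∑ u ∈ subt p v, f u = f v + ∑ w ∈ childs p v, ∑ u ∈ subt p w, f u := by
  rw [subt_decomp hpr hm (v := v)]
  rw [Finset.sum_insert, Finset.sum_biUnion]
  · intro w1 hw1 w2 hw2 hne
    exact subt_child_disjoint hpr hm (Finset.mem_coe.mp hw1) (Finset.mem_coe.mp hw2) hne
  · simp only [Finset.mem_biUnion, not_exists]
    intro w hw
    exact not_mem_subt_child hpr hm hw.1 hw.2

lemma subt_card_eq (hpr : p r = r) (hm : ∀ v, v ≠ r → m (p v) < m v) (v : V) :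
    ((subt p v).card : ℝ) = 1 + ∑ w ∈ childs p v, ((subt p w).card : ℝ) := by
  have := subt_sum hpr hm v (fun _ => (1:ℝ))
  simpa using this

lemma subt_card_lt (hpr : p r = r) (hm : ∀ v, v ≠ r → m (p v) < m v)
    {v w : V} (hw : w ∈ childs p v) : (subt p w).card < (subt p v).card := by
  apply Finset.card_lt_card
  constructor
  · exact subt_child_subset hw
  · intro hc
    exact not_mem_subt_child hpr hm hw (hc (self_mem_subt p v))

lemma parent_mem_subt {v u : V} (hu : u ∈ subt p v) (hne : u ≠ v) : p u ∈ subt p v := by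
  obtain ⟨k, hk⟩ := mem_subt.mp hu
  have hk0 : k ≠ 0 := by rintro rfl; exact hne hk
  refine mem_subt.mpr ⟨k - 1, ?_⟩
  have : p^[(k-1) + 1] u = v := by rw [show k - 1 + 1 = k by omega]; exact hk
  rwa [Function.iterate_succ_apply] at this

end Part2



section MainInduction
variable {V : Type*} [Fintype V] [DecidableEq V]
variable {p : V → V} {r : V} {m : V → ℕ}

lemma subtree_vector (hpr : p r = r) (hm : ∀ v, v ≠ r → m (p v) < m v) (v : V) :
    ∃ x : V → ℝ, (∀ u, 0 ≤ x u) ∧ (∀ u, u ∉ subt p v → x u = 0) ∧ x v = 1 ∧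
      2 * Real.cos (th (Fintype.card V)) * (∑ u ∈ subt p v, (x u)^2)
        - 2 * (∑ u ∈ (subt p v).erase v, x u * x (p u))
      ≤ Real.sin ((((subt p v).card : ℝ) + 1) * th (Fintype.card V))
          / Real.sin (((subt p v).card : ℝ) * th (Fintype.card V)) := by
  set n := Fintype.card V with hn
  set t := th n with ht
  set c := 2 * Real.cos t with hc
  suffices h : ∀ (N : ℕ) (v : V), (subt p v).card ≤ N →
      ∃ x : V → ℝ, (∀ u, 0 ≤ x u) ∧ (∀ u, u ∉ subt p v → x u = 0) ∧ x v = 1 ∧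
        c * (∑ u ∈ subt p v, (x u)^2) - 2 * (∑ u ∈ (subt p v).erase v, x u * x (p u))
        ≤ Real.sin ((((subt p v).card : ℝ) + 1) * t)
            / Real.sin (((subt p v).card : ℝ) * t) by
    exact h _ v le_rfl
  intro N
  induction N with
  | zero =>
    intro v hv
    exfalso
    have := Finset.card_pos.mpr ⟨v, self_mem_subt p v⟩
    omega
  | succ N ih =>
    intro v hKle
    set C := childs p v with hC
    have hK1 : 1 ≤ (subt p v).card := Finset.card_pos.mpr ⟨v, self_mem_subt p v⟩
    have hKn : (subt p v).card ≤ n := by rw [hn]; exact Finset.card_le_univ _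
    have hIH : ∀ w ∈ C, ∃ x : V → ℝ, (∀ u, 0 ≤ x u) ∧ (∀ u, u ∉ subt p w → x u = 0) ∧ x w = 1 ∧
        c * (∑ u ∈ subt p w, (x u)^2) - 2 * (∑ u ∈ (subt p w).erase w, x u * x (p u))
          ≤ Real.sin ((((subt p w).card : ℝ) + 1) * t)
              / Real.sin (((subt p w).card : ℝ) * t) := by
      intro w hw
      apply ih
      have := subt_card_lt hpr hm hw
      omega
    choose! xs hxs0 hxssupp hxsself hxsQ using hIH
    -- facts about children cards
    have hkw1 : ∀ w ∈ C, 1 ≤ (subt p w).card :=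
      fun w _ => Finset.card_pos.mpr ⟨w, self_mem_subt p w⟩
    have hkwn : ∀ w ∈ C, (subt p w).card + 1 ≤ n := by
      intro w hw
      have := subt_card_lt hpr hm hw
      omega
    -- positivity of the relevant sines
    have hsinkw : ∀ w ∈ C, 0 < Real.sin (((subt p w).card : ℝ) * t) := by
      intro w hw
      rw [ht]
      exact sin_th_pos (hkw1 w hw) (by have := hkwn w hw; omega)
    have hsinkw1 : ∀ w ∈ C, 0 < Real.sin ((((subt p w).card : ℝ) + 1) * t) := by
      intro w hw
      rw [ht]
      have := sin_th_pos (n := n) (j := (subt p w).card + 1) (by omega) (by have := hkwn w hw; omega)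
      push_cast at this
      exact this
    -- the coefficients
    set tc : V → ℝ := fun w =>
      Real.sin (((subt p w).card : ℝ) * t) / Real.sin ((((subt p w).card : ℝ) + 1) * t) with htc
    have htc0 : ∀ w ∈ C, 0 < tc w := fun w hw => div_pos (hsinkw w hw) (hsinkw1 w hw)
    -- the vector
    set x : V → ℝ := fun u => if u = v then 1 else ∑ w ∈ C, tc w * xs w u with hx
    have hxv : x v = 1 := by rw [hx]; simp
    -- value on child subtrees
    have hval : ∀ w ∈ C, ∀ u ∈ subt p w, x u = tc w * xs w u := by
      intro w hw u hu
      have huv : u ≠ v := by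
        intro hc
        rw [hc] at hu
        exact not_mem_subt_child hpr hm hw hu
      rw [hx]
      simp only [if_neg huv]
      rw [Finset.sum_eq_single w]
      · intro w' hw' hne
        have : u ∉ subt p w' := by
          intro hc
          exact (Finset.disjoint_left.mp (subt_child_disjoint hpr hm hw' hw hne)) hc hu
        rw [hxssupp w' hw' u this, mul_zero]
      · intro hc; exact absurd hw hc
    have hsupp : ∀ u, u ∉ subt p v → x u = 0 := by
      intro u hu
      have huv : u ≠ v := by intro hc; rw [hc] at hu; exact hu (self_mem_subt p v)
      rw [hx]
      simp only [if_neg huv]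
      apply Finset.sum_eq_zero
      intro w hw
      rw [hxssupp w hw u (fun hc => hu (subt_child_subset hw hc)), mul_zero]
    have hx0 : ∀ u, 0 ≤ x u := by
      intro u
      rw [hx]
      by_cases hu : u = v
      · simp [hu]
      · simp only [if_neg hu]
        apply Finset.sum_nonneg
        intro w hw
        exact mul_nonneg (htc0 w hw).le (hxs0 w hw u)
    refine ⟨x, hx0, hsupp, hxv, ?_⟩
    -- decompose S = ∑ x^2 over subtree
    have hS : ∑ u ∈ subt p v, (x u)^2
        = 1 + ∑ w ∈ C, (tc w)^2 * (∑ u ∈ subt p w, (xs w u)^2) := by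
      rw [subt_sum hpr hm v (fun u => (x u)^2), hxv]
      norm_num
      apply Finset.sum_congr rfl
      intro w hw
      rw [Finset.mul_sum]
      apply Finset.sum_congr rfl
      intro u hu
      rw [hval w hw u hu]
      ring
    -- decompose P
    have hvnot : v ∉ C.biUnion (fun w => subt p w) := by
      intro hc
      obtain ⟨w, hw, hmem⟩ := Finset.mem_biUnion.mp hc
      exact not_mem_subt_child hpr hm hw hmem
    have hbiUnion : (subt p v).erase v = C.biUnion (fun w => subt p w) := by
      rw [subt_decomp hpr hm (v := v), Finset.erase_insert hvnot]
    have hP : ∑ u ∈ (subt p v).erase v, x u * x (p u)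
        = ∑ w ∈ C, (tc w + (tc w)^2 * (∑ u ∈ (subt p w).erase w, xs w u * xs w (p u))) := by
      rw [hbiUnion, Finset.sum_biUnion]
      · apply Finset.sum_congr rfl
        intro w hw
        have hwmem : w ∈ subt p w := self_mem_subt p w
        rw [← Finset.add_sum_erase _ _ hwmem]
        congr 1
        · -- x w * x (p w) = tc w
          rw [hval w hw w hwmem, hxsself w hw, (mem_childs.mp hw).1, hxv]
          ring
        · rw [Finset.mul_sum]
          apply Finset.sum_congr rfl
          intro u hu
          obtain ⟨hune, humem⟩ := Finset.mem_erase.mp hu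
          rw [hval w hw u humem, hval w hw (p u) (parent_mem_subt humem hune)]
          ring
      · intro w1 hw1 w2 hw2 hne
        exact subt_child_disjoint hpr hm (Finset.mem_coe.mp hw1) (Finset.mem_coe.mp hw2) hne
    -- combine
    rw [hS, hP]
    have expand : c * (1 + ∑ w ∈ C, (tc w)^2 * (∑ u ∈ subt p w, (xs w u)^2))
        - 2 * (∑ w ∈ C, (tc w + (tc w)^2 * (∑ u ∈ (subt p w).erase w, xs w u * xs w (p u))))
        = c + ∑ w ∈ C, (c * ((tc w)^2 * (∑ u ∈ subt p w, (xs w u)^2))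
            - 2 * (tc w + (tc w)^2 * (∑ u ∈ (subt p w).erase w, xs w u * xs w (p u)))) := by
      rw [Finset.sum_sub_distrib, ← Finset.mul_sum, ← Finset.mul_sum]
      ring
    rw [expand]
    have hterm : ∀ w ∈ C, c * ((tc w)^2 * (∑ u ∈ subt p w, (xs w u)^2))
            - 2 * (tc w + (tc w)^2 * (∑ u ∈ (subt p w).erase w, xs w u * xs w (p u)))
          ≤ - tc w := by
      intro w hw
      have hQ := hxsQ w hw
      have h1 : (tc w)^2 *
            (c * (∑ u ∈ subt p w, (xs w u)^2)
              - 2 * (∑ u ∈ (subt p w).erase w, xs w u * xs w (p u)))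
          ≤ (tc w)^2 * (Real.sin ((((subt p w).card : ℝ) + 1) * t)
              / Real.sin (((subt p w).card : ℝ) * t)) :=
        mul_le_mul_of_nonneg_left hQ (sq_nonneg _)
      have h2 : (tc w)^2 * (Real.sin ((((subt p w).card : ℝ) + 1) * t)
              / Real.sin (((subt p w).card : ℝ) * t)) = tc w := by
        rw [htc]
        have ha := (hsinkw w hw).ne'
        have hb := (hsinkw1 w hw).ne'
        field_simp
      nlinarith [h1, h2]
    have hsum1 : ∑ w ∈ C, (c * ((tc w)^2 * (∑ u ∈ subt p w, (xs w u)^2))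
            - 2 * (tc w + (tc w)^2 * (∑ u ∈ (subt p w).erase w, xs w u * xs w (p u))))
        ≤ ∑ w ∈ C, (- tc w) := Finset.sum_le_sum hterm
    set SK := ∑ w ∈ C, (subt p w).card with hSK
    have hKSK : (subt p v).card = SK + 1 := by
      have h3 := subt_card_eq hpr hm v
      have h4 : ((subt p v).card : ℝ) = ((SK + 1 : ℕ) : ℝ) := by
        rw [h3, hSK]
        push_cast
        ring
      exact_mod_cast h4
    have hsuper := g_superadd (n := n) C (fun w => (subt p w).card) hkw1
      (by rw [← hSK]; omega)
    have hsinSK1 : 0 < Real.sin (((SK:ℝ)+1)*t) := by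
      rw [ht]
      have := sin_th_pos (n := n) (j := SK + 1) (by omega) (by omega)
      push_cast at this
      exact this
    have hsuper' : Real.sin ((SK:ℝ)*t) / Real.sin (((SK:ℝ)+1)*t) ≤ ∑ w ∈ C, tc w := by
      have h5 := hsuper
      rw [← hSK] at h5
      push_cast at h5
      rw [← ht] at h5
      exact h5
    calc c + ∑ w ∈ C, (c * ((tc w)^2 * (∑ u ∈ subt p w, (xs w u)^2))
            - 2 * (tc w + (tc w)^2 * (∑ u ∈ (subt p w).erase w, xs w u * xs w (p u))))
        ≤ c + ∑ w ∈ C, (- tc w) := by linarith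
      _ = c - ∑ w ∈ C, tc w := by rw [Finset.sum_neg_distrib]; ring
      _ ≤ c - Real.sin ((SK:ℝ)*t)/Real.sin (((SK:ℝ)+1)*t) := by linarith
      _ = Real.sin ((((subt p v).card : ℝ)+1)*t) / Real.sin (((subt p v).card:ℝ)*t) := by
          rw [hKSK]
          push_cast
          have hrec := sin_rec (n := n) SK
          rw [← ht, ← hc] at hrec
          rw [sub_eq_iff_eq_add]
          have e : ((SK:ℝ) + 1 + 1) = ((SK:ℝ) + 2) := by ring
          rw [e]
          rw [← add_div] 
          rw [eq_div_iff hsinSK1.ne']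
          linarith
end MainInduction

section GraphSide
variable {V : Type*} [Fintype V] [DecidableEq V]

lemma tree_triangle_free {T : SimpleGraph V} (hT : T.IsTree) {i u w : V}
    (h1 : T.Adj i u) (h2 : T.Adj i w) (h3 : T.Adj u w) : False := by
  obtain ⟨q, hq, huniq⟩ := hT.existsUnique_path u w
  have p1 : (SimpleGraph.Walk.cons h3 SimpleGraph.Walk.nil : T.Walk u w).IsPath := by
    simp [SimpleGraph.Walk.isPath_def, h3.ne]
  have p2 : (SimpleGraph.Walk.cons h1.symm
      (SimpleGraph.Walk.cons h2 SimpleGraph.Walk.nil) : T.Walk u w).IsPath := by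
    simp [SimpleGraph.Walk.isPath_def, h1.ne', h2.ne, h3.ne]
  have heq := (huniq _ p1).trans (huniq _ p2).symm
  have := congrArg SimpleGraph.Walk.length heq
  simp at this

lemma pairs_sum (G : SimpleGraph V) {p : V → V} {r : V} {m : V → ℕ} (hpr : p r = r)
    (hadj : ∀ v, v ≠ r → G.Adj v (p v)) (hm : ∀ v, v ≠ r → m (p v) < m v)
    (hcov : ∀ a b, G.Adj a b → p a = b ∨ p b = a) (x : V → ℝ) :
    ∑ v, ∑ u, adjM G v u * x v * x u = 2 * ∑ u ∈ Finset.univ.erase r, x u * x (p u) := by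
  classical
  set S := (Finset.univ ×ˢ Finset.univ).filter (fun q : V × V => G.Adj q.1 q.2) with hS
  have hLHS : ∑ v, ∑ u, adjM G v u * x v * x u = ∑ q ∈ S, x q.1 * x q.2 := by
    rw [hS, Finset.sum_filter, Finset.sum_product]
    apply Finset.sum_congr rfl
    intro v _
    apply Finset.sum_congr rfl
    intro u _
    by_cases h : G.Adj v u <;> simp [adjM, h]
  rw [hLHS]
  set E' := Finset.univ.erase r with hE'
  have hmemE' : ∀ v : V, v ∈ E' ↔ v ≠ r := by
    intro v; simp [hE']
  have hSeq : S = E'.image (fun v => (v, p v)) ∪ E'.image (fun v => (p v, v)) := by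
    apply Finset.ext
    rintro ⟨a, b⟩
    simp only [hS, Finset.mem_union, Finset.mem_image, Finset.mem_filter,
      Finset.mem_product, Finset.mem_univ, true_and, and_true]
    constructor
    · intro hab
      have har : p a = b → a ≠ r := by
        intro hpa hc
        rw [hc, hpr] at hpa
        rw [hc, ← hpa] at hab
        exact G.irrefl hab
      have hbr : p b = a → b ≠ r := by
        intro hpb hc
        rw [hc, hpr] at hpb
        rw [hc, ← hpb] at hab
        exact G.irrefl hab
      rcases hcov a b hab with h | h
      · exact Or.inl ⟨a, (hmemE' a).mpr (har h), by rw [h]⟩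
      · exact Or.inr ⟨b, (hmemE' b).mpr (hbr h), by rw [h]⟩
    · rintro (⟨z, hz, heq⟩ | ⟨z, hz, heq⟩)
      · injection heq with h1 h2
        subst h1; subst h2
        exact hadj z ((hmemE' z).mp hz)
      · injection heq with h1 h2
        subst h2; subst h1
        exact (hadj z ((hmemE' z).mp hz)).symm
  have hdisj : Disjoint (E'.image (fun v => (v, p v))) (E'.image (fun v => (p v, v))) := by
    rw [Finset.disjoint_left]
    rintro q hq1 hq2
    obtain ⟨a, ha, ha2⟩ := Finset.mem_image.mp hq1
    obtain ⟨b, hb, hb2⟩ := Finset.mem_image.mp hq2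
    rw [← hb2] at ha2
    have h1 : a = p b := congrArg Prod.fst ha2
    have h2 : p a = b := congrArg Prod.snd ha2
    have hma := hm a ((hmemE' a).mp ha)
    have hmb := hm b ((hmemE' b).mp hb)
    rw [h2] at hma
    rw [← h1] at hmb
    omega
  have hinj1 : ∀ a ∈ E', ∀ b ∈ E', (fun z => (z, p z)) a = (fun z => (z, p z)) b → a = b :=
    fun a _ b _ h => congrArg Prod.fst h
  have hinj2 : ∀ a ∈ E', ∀ b ∈ E', (fun z => (p z, z)) a = (fun z => (p z, z)) b → a = b :=
    fun a _ b _ h => congrArg Prod.snd h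
  rw [hSeq, Finset.sum_union hdisj, Finset.sum_image hinj1, Finset.sum_image hinj2]
  rw [two_mul]
  congr 1
  apply Finset.sum_congr rfl
  intros
  ring

lemma tree_root_bound {T : SimpleGraph V} (hT : T.IsTree) {t : ℝ}
    (ht : (charP T).IsRoot t) :
    t^2 ≤ (Fintype.card V : ℝ) - 1 := by
  classical
  have hne : Nonempty V := hT.isConnected.nonempty
  have hn1 : 1 ≤ Fintype.card V := Fintype.card_pos
  obtain ⟨v, hv, hveq⟩ := eigen_of_charP_isRoot T ht
  set A := adjM T with hA
  obtain ⟨i0, _, hmax⟩ := Finset.exists_max_image Finset.univ (fun i => |v i|)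
    Finset.univ_nonempty
  have hmax' : ∀ u, |v u| ≤ |v i0| := fun u => hmax u (Finset.mem_univ u)
  have hvi0 : 0 < |v i0| := by
    rcases (abs_nonneg (v i0)).lt_or_eq with h | h
    · exact h
    · exfalso
      apply hv
      funext u
      have := hmax' u
      rw [← h] at this
      have := abs_nonneg (v u)
      simp only [Pi.zero_apply]
      have : |v u| = 0 := le_antisymm (by linarith) (abs_nonneg _)
      exact abs_eq_zero.mp this
  -- A (A v) = t^2 v
  have h2 : A *ᵥ (A *ᵥ v) = (t^2) • v := by
    rw [hveq, Matrix.mulVec_smul, hveq, smul_smul]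
    norm_num
    rw [sq]
  have hpoint : t^2 * v i0 = ∑ j, A i0 j * ∑ u, A j u * v u := by
    have := congrFun h2 i0
    simp only [Matrix.mulVec, dotProduct, Pi.smul_apply, smul_eq_mul] at this
    rw [← this]
  -- counting bound
  haveI : Fintype T.edgeSet := Fintype.ofFinite _
  set P := (Finset.univ ×ˢ Finset.univ).filter
    (fun q : V × V => T.Adj i0 q.1 ∧ T.Adj q.1 q.2) with hP
  have hcount : ∑ j, A i0 j * ∑ u, A j u = (P.card : ℝ) := by
    rw [hP]
    rw [Finset.card_filter]
    push_cast
    rw [Finset.sum_product]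
    apply Finset.sum_congr rfl
    intro j _
    rw [Finset.mul_sum]
    apply Finset.sum_congr rfl
    intro u _
    by_cases h1 : T.Adj i0 j <;> by_cases h2 : T.Adj j u <;> simp [hA, adjM, h1, h2]
  have hinj : ∀ q ∈ P, ∀ q' ∈ P, s(q.1, q.2) = s(q'.1, q'.2) → q = q' := by
    rintro ⟨a, b⟩ hq ⟨a', b'⟩ hq' heq
    simp only [hP, Finset.mem_filter, Finset.mem_product] at hq hq'
    rcases Sym2.eq_iff.mp heq with ⟨h1, h2⟩ | ⟨h1, h2⟩ <;> dsimp only at h1 h2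
    · rw [Prod.mk.injEq]
      exact ⟨h1, h2⟩
    · exfalso
      have hb : T.Adj i0 b := by rw [h2]; exact hq'.2.1
      exact tree_triangle_free hT hq.2.1 hb hq.2.2
  have hPle : P.card ≤ T.edgeFinset.card := by
    apply Finset.card_le_card_of_injOn (fun q => s(q.1, q.2))
    · rintro ⟨a, b⟩ hq
      simp only [hP, Finset.mem_coe, Finset.mem_filter, Finset.mem_product] at hq
      simp only [Finset.mem_coe, SimpleGraph.mem_edgeFinset, SimpleGraph.mem_edgeSet]
      exact hq.2.2
    · intro q hq q' hq' h
      exact hinj q hq q' hq' h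
  have hedge : T.edgeFinset.card + 1 = Fintype.card V := hT.card_edgeFinset
  -- the max-entry estimate
  have hest : t^2 * |v i0| ≤ (P.card : ℝ) * |v i0| := by
    calc t^2 * |v i0| = |t^2 * v i0| := by
          rw [abs_mul, abs_of_nonneg (sq_nonneg t)]
      _ = |∑ j, A i0 j * ∑ u, A j u * v u| := by rw [hpoint]
      _ ≤ ∑ j, |A i0 j * ∑ u, A j u * v u| := Finset.abs_sum_le_sum_abs _ _
      _ ≤ ∑ j, A i0 j * ((∑ u, A j u) * |v i0|) := by
          apply Finset.sum_le_sum
          intro j _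
          rw [abs_mul, abs_of_nonneg (adjM_nonneg T i0 j)]
          apply mul_le_mul_of_nonneg_left _ (adjM_nonneg T i0 j)
          calc |∑ u, A j u * v u| ≤ ∑ u, |A j u * v u| := Finset.abs_sum_le_sum_abs _ _
            _ ≤ ∑ u, A j u * |v i0| := by
                apply Finset.sum_le_sum
                intro u _
                rw [abs_mul, abs_of_nonneg (adjM_nonneg T j u)]
                exact mul_le_mul_of_nonneg_left (hmax' u) (adjM_nonneg T j u)
            _ = (∑ u, A j u) * |v i0| := by rw [Finset.sum_mul]
      _ = (∑ j, A i0 j * ∑ u, A j u) * |v i0| := by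
          rw [Finset.sum_mul]
          apply Finset.sum_congr rfl
          intro j _
          ring
      _ = (P.card : ℝ) * |v i0| := by rw [hcount]
  have ht2 : t^2 ≤ (P.card : ℝ) := le_of_mul_le_mul_right (by linarith [hest]) hvi0
  have : (P.card : ℝ) ≤ (Fintype.card V : ℝ) - 1 := by
    have h6 : P.card + 1 ≤ Fintype.card V := by omega
    have h7 : ((P.card + 1 : ℕ) : ℝ) ≤ ((Fintype.card V : ℕ) : ℝ) := by exact_mod_cast h6
    push_cast at h7
    linarith
  linarith

end GraphSide

section Assembly

lemma tree_bounds {n : ℕ} (hn : 1 ≤ n) (T : SimpleGraph (Fin n)) (hT : T.IsTree) :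
    2 * Real.cos (th n) ≤ specRad T ∧ specRad T ≤ Real.sqrt ((n:ℝ) - 1) := by
  haveI : Nonempty (Fin n) := ⟨⟨0, by omega⟩⟩
  have hcard : Fintype.card (Fin n) = n := Fintype.card_fin n
  have hub : ∀ t ∈ {x : ℝ | (charP T).IsRoot x}, t ≤ Real.sqrt ((n:ℝ) - 1) := by
    intro t htmem
    have h1 := tree_root_bound hT htmem
    rw [hcard] at h1
    calc t ≤ |t| := le_abs_self t
      _ = Real.sqrt (t^2) := (Real.sqrt_sq_eq_abs t).symm
      _ ≤ Real.sqrt ((n:ℝ) - 1) := Real.sqrt_le_sqrt h1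
  obtain ⟨μ, hμroot, hμbound⟩ := exists_max_eigen T
  have hbdd : BddAbove {x : ℝ | (charP T).IsRoot x} := ⟨_, hub⟩
  have hupper : specRad T ≤ Real.sqrt ((n:ℝ) - 1) := csSup_le ⟨μ, hμroot⟩ hub
  obtain ⟨r, p, m, hpr, hadj', hcov⟩ := tree_struct hT
  have hadj : ∀ v, v ≠ r → T.Adj v (p v) := fun v hv => (hadj' v hv).1
  have hm : ∀ v, v ≠ r → m (p v) < m v := fun v hv => (hadj' v hv).2
  obtain ⟨x, hx0, hxsupp, hxr, hxQ⟩ := subtree_vector hpr hm r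
  rw [hcard] at hxQ
  have hsubr : subt p r = Finset.univ := subt_eq_univ_of_root hpr hm
  rw [hsubr] at hxQ
  have hcard2 : (Finset.univ : Finset (Fin n)).card = n := by simp
  rw [hcard2] at hxQ
  have hzero : Real.sin (((n:ℝ) + 1) * th n) = 0 := sin_th_top
  rw [hzero] at hxQ
  simp only [zero_div] at hxQ
  have hqf : 2 * Real.cos (th n) * (∑ u, (x u)^2) ≤ ∑ v, ∑ u, adjM T v u * x v * x u := by
    have hps := pairs_sum T hpr hadj hm hcov x
    rw [hps]
    linarith [hxQ]
  have hxpos : 0 < ∑ u, (x u)^2 :=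
    Finset.sum_pos' (fun u _ => sq_nonneg _) ⟨r, Finset.mem_univ r, by rw [hxr]; norm_num⟩
  have hcμ : 2 * Real.cos (th n) ≤ μ := by
    have h9 : 2 * Real.cos (th n) * (∑ u, (x u)^2) ≤ μ * (∑ u, (x u)^2) :=
      le_trans hqf (hμbound x)
    exact le_of_mul_le_mul_right (by linarith) hxpos
  exact ⟨hcμ.trans (le_csSup hbdd hμroot), hupper⟩

lemma fin_sum_ite {n : ℕ} (a : ℕ) (f : Fin n → ℝ) :
    ∑ j : Fin n, (if (j : ℕ) = a then f j else 0)
      = if h : a < n then f ⟨a, h⟩ else 0 := by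
  split_ifs with h
  · rw [Finset.sum_eq_single (⟨a, h⟩ : Fin n)]
    · simp
    · intro j _ hj
      rw [if_neg]
      intro hc
      exact hj (Fin.ext hc)
    · intro hj
      exact absurd (Finset.mem_univ _) hj
  · apply Finset.sum_eq_zero
    intro j _
    rw [if_neg]
    intro hc
    exact h (hc ▸ j.isLt)

lemma path_spec {n : ℕ} (hn : 1 ≤ n) :
    specRad (SimpleGraph.pathGraph n) = 2 * Real.cos (th n) := by
  haveI : Nonempty (Fin n) := ⟨⟨0, by omega⟩⟩
  set y : Fin n → ℝ := fun k => Real.sin (((k : ℕ) + 1 : ℝ) * th n) with hy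
  have hypos : ∀ k, 0 < y k := by
    intro k
    rw [hy]
    have := sin_th_pos (n := n) (j := (k:ℕ)+1) (by omega) (by omega)
    push_cast at this ⊢
    exact this
  apply specRad_eq_of_pos_eigen _ hypos
  funext k
  show ∑ j, adjM (SimpleGraph.pathGraph n) k j * y j = _
  have hsplit : ∀ j : Fin n, adjM (SimpleGraph.pathGraph n) k j * y j
      = (if (j:ℕ) = (k:ℕ)+1 then y j else 0) + (if (j:ℕ)+1 = (k:ℕ) then y j else 0) := by
    intro j
    rw [adjM]
    by_cases h1 : (j:ℕ) = (k:ℕ)+1 <;> by_cases h2 : (j:ℕ)+1 = (k:ℕ)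
    · omega
    · rw [if_pos, if_pos h1, if_neg h2]
      · ring
      · rw [SimpleGraph.pathGraph_adj]
        left; omega
    · rw [if_pos, if_neg h1, if_pos h2]
      · ring
      · rw [SimpleGraph.pathGraph_adj]
        right; omega
    · rw [if_neg, if_neg h1, if_neg h2]
      · ring
      · rw [SimpleGraph.pathGraph_adj]
        push_neg
        omega
  rw [Finset.sum_congr rfl (fun j _ => hsplit j), Finset.sum_add_distrib]
  have hterm1 : ∑ j : Fin n, (if (j:ℕ) = (k:ℕ)+1 then y j else 0)
      = Real.sin ((((k:ℕ) : ℝ) + 2) * th n) := by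
    rw [fin_sum_ite]
    split_ifs with h
    · show Real.sin (((((k:ℕ)+1 : ℕ) : ℝ) + 1) * th n) = _
      push_cast
      ring_nf
    · have hk : (k:ℕ) = n - 1 := by have := k.isLt; omega
      have : (((k:ℕ) : ℝ) + 2) * th n = ((n:ℝ) + 1) * th n := by
        have : ((k:ℕ) : ℝ) = (n:ℝ) - 1 := by
          rw [hk]
          have : (1:ℕ) ≤ n := hn
          push_cast [Nat.cast_sub this]
          ring
        rw [this]
        ring
      rw [this, sin_th_top]
  have hterm2 : ∑ j : Fin n, (if (j:ℕ)+1 = (k:ℕ) then y j else 0)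
      = Real.sin (((k:ℕ) : ℝ) * th n) := by
    by_cases hk : (k:ℕ) = 0
    · rw [Finset.sum_eq_zero, hk]
      · simp
      · intro j _
        rw [if_neg]
        omega
    · have hcong : ∀ j : Fin n, (if (j:ℕ)+1 = (k:ℕ) then y j else 0)
          = (if (j:ℕ) = (k:ℕ)-1 then y j else 0) := by
        intro j
        congr 1
        simp only [eq_iff_iff]
        omega
      rw [Finset.sum_congr rfl (fun j _ => hcong j), fin_sum_ite,
        dif_pos (show (k:ℕ)-1 < n by have := k.isLt; omega)]
      show Real.sin (((((k:ℕ)-1 : ℕ) : ℝ) + 1) * th n) = _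
      congr 1
      have h1 : (1:ℕ) ≤ (k:ℕ) := by omega
      have h2 : ((((k:ℕ)-1 : ℕ)) : ℝ) = ((k:ℕ):ℝ) - 1 := by push_cast [Nat.cast_sub h1]; ring
      rw [h2]
      ring
  rw [hterm1, hterm2]
  have hrec := sin_rec (n := n) (k:ℕ)
  rw [Pi.smul_apply, smul_eq_mul, hy]
  linarith [hrec]

lemma star_spec {n : ℕ} (hn : 1 ≤ n) :
    specRad (completeBipartiteGraph (Fin 1) (Fin (n-1))) = Real.sqrt ((n:ℝ) - 1) := by
  haveI : Nonempty (Fin 1 ⊕ Fin (n-1)) := ⟨Sum.inl 0⟩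
  have hc0 : (0:ℝ) ≤ (n:ℝ) - 1 := by
    have : (1:ℝ) ≤ (n:ℝ) := by exact_mod_cast hn
    linarith
  rcases eq_or_lt_of_le hn with h1 | h2
  · -- n = 1
    have hn1 : n = 1 := h1.symm
    subst hn1
    rw [show ((1:ℕ):ℝ) - 1 = 0 by norm_num, Real.sqrt_zero]
    apply specRad_eq_of_pos_eigen (y := fun _ => (1:ℝ)) _ (fun _ => one_pos)
    funext i
    have hz : ∀ j, adjM (completeBipartiteGraph (Fin 1) (Fin (1-1))) i j = 0 := by
      rintro (a' | b')
      · rcases i with a | b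
        · simp [adjM, completeBipartiteGraph]
        · exact absurd b.isLt (by omega)
      · exact absurd b'.isLt (by omega)
    show ∑ j, adjM (completeBipartiteGraph (Fin 1) (Fin (1-1))) i j * (1:ℝ) = (0:ℝ) • (1:ℝ)
    rw [Finset.sum_eq_zero (fun j _ => by rw [hz j, zero_mul])]
    simp
  · -- n ≥ 2
    have hpos : (0:ℝ) < (n:ℝ) - 1 := by
      have : (2:ℝ) ≤ (n:ℝ) := by exact_mod_cast h2
      linarith
    set c := Real.sqrt ((n:ℝ) - 1) with hc
    have hcpos : 0 < c := Real.sqrt_pos.mpr hpos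
    set y : Fin 1 ⊕ Fin (n-1) → ℝ := Sum.elim (fun _ => c) (fun _ => 1) with hy
    have hypos : ∀ i, 0 < y i := by
      rintro (a | b)
      · exact hcpos
      · exact one_pos
    apply specRad_eq_of_pos_eigen _ hypos
    funext i
    rcases i with a | b
    · show ∑ j, adjM _ (Sum.inl a) j * y j = _
      rw [Fintype.sum_sum_type]
      have e1 : ∑ a' : Fin 1, adjM (completeBipartiteGraph (Fin 1) (Fin (n-1)))
          (Sum.inl a) (Sum.inl a') * y (Sum.inl a') = 0 := by
        apply Finset.sum_eq_zero
        intro a' _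
        simp [adjM, completeBipartiteGraph]
      have e2 : ∑ b' : Fin (n-1), adjM (completeBipartiteGraph (Fin 1) (Fin (n-1)))
          (Sum.inl a) (Sum.inr b') * y (Sum.inr b') = (n:ℝ) - 1 := by
        have : ∀ b' : Fin (n-1), adjM (completeBipartiteGraph (Fin 1) (Fin (n-1)))
            (Sum.inl a) (Sum.inr b') * y (Sum.inr b') = 1 := by
          intro b'
          simp [adjM, completeBipartiteGraph, hy]
        rw [Finset.sum_congr rfl (fun b' _ => this b'), Finset.sum_const]
        simp only [Finset.card_univ, Fintype.card_fin, nsmul_eq_mul, mul_one]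
        push_cast [Nat.cast_sub hn]
        ring
      rw [e1, e2]
      show (0:ℝ) + ((n:ℝ) - 1) = c * y (Sum.inl a)
      rw [hy]
      show (0:ℝ) + ((n:ℝ) - 1) = c * c
      rw [hc, Real.mul_self_sqrt hc0]
      ring
    · show ∑ j, adjM _ (Sum.inr b) j * y j = _
      rw [Fintype.sum_sum_type]
      have e1 : ∑ a' : Fin 1, adjM (completeBipartiteGraph (Fin 1) (Fin (n-1)))
          (Sum.inr b) (Sum.inl a') * y (Sum.inl a') = c := by
        have : ∀ a' : Fin 1, adjM (completeBipartiteGraph (Fin 1) (Fin (n-1)))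
            (Sum.inr b) (Sum.inl a') * y (Sum.inl a') = c := by
          intro a'
          simp [adjM, completeBipartiteGraph, hy]
        rw [Finset.sum_congr rfl (fun a' _ => this a'), Finset.sum_const]
        simp
      have e2 : ∑ b' : Fin (n-1), adjM (completeBipartiteGraph (Fin 1) (Fin (n-1)))
          (Sum.inr b) (Sum.inr b') * y (Sum.inr b') = 0 := by
        apply Finset.sum_eq_zero
        intro b' _
        simp [adjM, completeBipartiteGraph]
      rw [e1, e2]
      show c + 0 = c * y (Sum.inr b)
      rw [hy]
      show c + 0 = c * 1
      ring

end Assembly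

end TreeSpec


open Real in
/-- `ρ(P_n) = 2 cos(π/(n+1))`, and every tree `T` on `n` vertices satisfies
`2 cos(π/(n+1)) ≤ ρ(T) ≤ √(n-1)`, the upper bound being attained by the star
`K_{1,n-1}`. -/
theorem tree_spectral_radius_bounds (n : ℕ) (hn : 1 ≤ n) :
    specRad (SimpleGraph.pathGraph n) = 2 * Real.cos (π / (n + 1)) ∧
    (∀ T : SimpleGraph (Fin n), T.IsTree →
      2 * Real.cos (π / (n + 1)) ≤ specRad T ∧
        specRad T ≤ Real.sqrt ((n : ℝ) - 1)) ∧
    specRad (completeBipartiteGraph (Fin 1) (Fin (n - 1))) = Real.sqrt ((n : ℝ) - 1) := by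
  have hth : π / ((n:ℝ) + 1) = TreeSpec.th n := rfl
  refine ⟨?_, ?_, ?_⟩
  · rw [hth]
    exact TreeSpec.path_spec hn
  · intro T hT
    rw [hth]
    exact TreeSpec.tree_bounds hn T hT
  · exact TreeSpec.star_spec hn
end
end
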